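/- arXiv:2403.01372 — 11 statements merged into one kernel-verified Lean document; each statement's English description precedes it below -/
import Mathlib

section
/- For all (u,v) ∈ (a,b) × ℝ, the Euclidean gradient of Φ at η(u,v) satisfies (grad Φ)(η(u,v)) = φ(u,v) · (X_u(u,v) × X_v(u,v)), where φ(u,v) = 2m / (α(u) · A(u)^{(2m−1)/(2m)}) > 0 and × denotes the Euclidean cross product in ℝ³. In particular η(u,v) is Birkhoff orthogonal to the tangent plane of the rotational surface X at (u,v), i.e., η is the Birkhoff–Gauss map of the surface. -/
open Real Set

/-- `Φ(x₁,x₂,x₃) = (x₁² + x₂²)^m + x₃^{2m}`. -/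
noncomputable def Phi (m : ℕ) (x : ℝ × ℝ × ℝ) : ℝ :=
  (x.1 ^ 2 + x.2.1 ^ 2) ^ m + x.2.2 ^ (2 * m)

/-- The Euclidean gradient of `Φ`. -/
noncomputable def gradPhi (m : ℕ) (x : ℝ × ℝ × ℝ) : ℝ × ℝ × ℝ :=
  (fderiv ℝ (Phi m) x (1, 0, 0), fderiv ℝ (Phi m) x (0, 1, 0), fderiv ℝ (Phi m) x (0, 0, 1))

/-- The Euclidean cross product in `ℝ³`. -/
def cross (a b : ℝ × ℝ × ℝ) : ℝ × ℝ × ℝ :=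
  (a.2.1 * b.2.2 - a.2.2 * b.2.1, a.2.2 * b.1 - a.1 * b.2.2, a.1 * b.2.1 - a.2.1 * b.1)

lemma gradPhi_eq (m : ℕ) (x : ℝ × ℝ × ℝ) :
    gradPhi m x =
    (2 * m * x.1 * (x.1 ^ 2 + x.2.1 ^ 2) ^ (m - 1),
     2 * m * x.2.1 * (x.1 ^ 2 + x.2.1 ^ 2) ^ (m - 1),
     2 * m * x.2.2 ^ (2 * m - 1)) := by
  have hfst : HasFDerivAt (fun y : ℝ × ℝ × ℝ => y.1)
      (ContinuousLinearMap.fst ℝ ℝ (ℝ × ℝ)) x := hasFDerivAt_fst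
  have hsnd1 : HasFDerivAt (fun y : ℝ × ℝ × ℝ => y.2.1)
      ((ContinuousLinearMap.fst ℝ ℝ ℝ).comp (ContinuousLinearMap.snd ℝ ℝ (ℝ × ℝ))) x :=
    hasFDerivAt_fst.comp x hasFDerivAt_snd
  have hsnd2 : HasFDerivAt (fun y : ℝ × ℝ × ℝ => y.2.2)
      ((ContinuousLinearMap.snd ℝ ℝ ℝ).comp (ContinuousLinearMap.snd ℝ ℝ (ℝ × ℝ))) x :=
    hasFDerivAt_snd.comp x hasFDerivAt_snd
  have hsq1 := (hasDerivAt_pow 2 x.1).comp_hasFDerivAt x hfst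
  have hsq2 := (hasDerivAt_pow 2 x.2.1).comp_hasFDerivAt x hsnd1
  have hg := hsq1.add hsq2
  have hgm := (hasDerivAt_pow m (x.1 ^ 2 + x.2.1 ^ 2)).comp_hasFDerivAt x hg
  have h3 := (hasDerivAt_pow (2 * m) x.2.2).comp_hasFDerivAt x hsnd2
  have hPhi : HasFDerivAt (Phi m)
      (((m : ℝ) * (x.1 ^ 2 + x.2.1 ^ 2) ^ (m - 1)) •
        (((2 : ℕ) * x.1 ^ (2 - 1) : ℝ) • ContinuousLinearMap.fst ℝ ℝ (ℝ × ℝ) +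
          ((2 : ℕ) * x.2.1 ^ (2 - 1) : ℝ) •
            (ContinuousLinearMap.fst ℝ ℝ ℝ).comp (ContinuousLinearMap.snd ℝ ℝ (ℝ × ℝ))) +
        (((2 * m : ℕ) : ℝ) * x.2.2 ^ (2 * m - 1)) •
          (ContinuousLinearMap.snd ℝ ℝ ℝ).comp (ContinuousLinearMap.snd ℝ ℝ (ℝ × ℝ))) x :=
    hgm.add h3
  unfold gradPhi
  rw [hPhi.fderiv]
  simp [ContinuousLinearMap.add_apply, ContinuousLinearMap.smul_apply,
    ContinuousLinearMap.comp_apply]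
  ring_nf
  exact ⟨trivial, trivial⟩

lemma pow_key (m : ℕ) (hm : 2 ≤ m) (A : ℝ) (hApos : 0 < A) :
    ∀ y : ℝ, 0 < y →
      (A ^ (-(1:ℝ) / (2 * (m:ℝ))) * y ^ ((1:ℝ) / (2 * (m:ℝ) - 1))) ^ (2 * m - 1) =
      (A ^ ((2 * (m:ℝ) - 1) / (2 * (m:ℝ))))⁻¹ * y := by
  have hM2 : (2:ℝ) ≤ (m:ℝ) := by exact_mod_cast hm
  have h2M : (0:ℝ) < 2 * (m:ℝ) := by linarith
  have h2M1 : (0:ℝ) < 2 * (m:ℝ) - 1 := by linarith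
  have hcast : ((2 * m - 1 : ℕ) : ℝ) = 2 * (m:ℝ) - 1 := by
    rw [Nat.cast_sub (by omega)]; push_cast; ring
  intro y hy
  rw [mul_pow]
  have h1 : (y ^ ((1:ℝ) / (2 * (m:ℝ) - 1))) ^ (2 * m - 1) = y := by
    rw [← rpow_natCast (y ^ ((1:ℝ) / (2 * (m:ℝ) - 1))) (2 * m - 1), ← rpow_mul hy.le, hcast,
      show (1:ℝ) / (2 * (m:ℝ) - 1) * (2 * (m:ℝ) - 1) = 1 by field_simp, rpow_one]
  have h2 : (A ^ (-(1:ℝ) / (2 * (m:ℝ)))) ^ (2 * m - 1) =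
      (A ^ ((2 * (m:ℝ) - 1) / (2 * (m:ℝ))))⁻¹ := by
    rw [← rpow_natCast (A ^ (-(1:ℝ) / (2 * (m:ℝ)))) (2 * m - 1), ← rpow_mul hApos.le, hcast,
      show -(1:ℝ) / (2 * (m:ℝ)) * (2 * (m:ℝ) - 1) = -((2 * (m:ℝ) - 1) / (2 * (m:ℝ))) by
        field_simp,
      rpow_neg hApos.le]
  rw [h1, h2]

/-- The gradient of `Φ` at `η(u,v)` is the positive multiple
`φ(u,v) = 2m / (α(u) A(u)^{(2m−1)/(2m)})` of `X_u × X_v`; hence `η(u,v)` is Birkhoff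
orthogonal to the tangent plane of the rotational surface, i.e. `η` is its
Birkhoff–Gauss map. -/
theorem gradPhi_eta_eq_smul_cross (m : ℕ) (hm : 2 ≤ m) (a b : ℝ) (α β : ℝ → ℝ)
    (hα : ContDiffOn ℝ 2 α (Set.Ioo a b)) (hβ : ContDiffOn ℝ 2 β (Set.Ioo a b))
    (hαpos : ∀ u ∈ Set.Ioo a b, 0 < α u)
    (hα' : ∀ u ∈ Set.Ioo a b, 0 < deriv α u)
    (hβ' : ∀ u ∈ Set.Ioo a b, 0 < deriv β u)
    (X : ℝ → ℝ → ℝ × ℝ × ℝ)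
    (hX : ∀ u v, X u v = (α u * Real.cos v, α u * Real.sin v, β u))
    (Xu Xv : ℝ → ℝ → ℝ × ℝ × ℝ)
    (hXu : ∀ u v, Xu u v = deriv (fun t => X t v) u)
    (hXv : ∀ u v, Xv u v = deriv (fun t => X u t) v)
    (A : ℝ → ℝ)
    (hA : ∀ u, A u =
      deriv α u ^ ((2 * (m : ℝ)) / (2 * (m : ℝ) - 1)) +
      deriv β u ^ ((2 * (m : ℝ)) / (2 * (m : ℝ) - 1)))
    (η : ℝ → ℝ → ℝ × ℝ × ℝ)
    (hη : ∀ u v, η u v =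
      (A u ^ (-(1 : ℝ) / (2 * (m : ℝ))) *
          (-(deriv β u ^ ((1 : ℝ) / (2 * (m : ℝ) - 1))) * Real.cos v),
        A u ^ (-(1 : ℝ) / (2 * (m : ℝ))) *
          (-(deriv β u ^ ((1 : ℝ) / (2 * (m : ℝ) - 1))) * Real.sin v),
        A u ^ (-(1 : ℝ) / (2 * (m : ℝ))) *
          deriv α u ^ ((1 : ℝ) / (2 * (m : ℝ) - 1))))
    (φ : ℝ → ℝ → ℝ)
    (hφ : ∀ u v, φ u v = 2 * (m : ℝ) / (α u * A u ^ ((2 * (m : ℝ) - 1) / (2 * (m : ℝ))))) :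
    ∀ u ∈ Set.Ioo a b, ∀ v : ℝ,
      gradPhi m (η u v) = φ u v • cross (Xu u v) (Xv u v) ∧ 0 < φ u v := by
  intro u hu v
  have hM2 : (2:ℝ) ≤ (m:ℝ) := by exact_mod_cast hm
  have h2M1 : (0:ℝ) < 2 * (m:ℝ) - 1 := by linarith
  have ha' := hα' u hu
  have hb' := hβ' u hu
  have hαp := hαpos u hu
  have hApos : 0 < A u := by
    rw [hA]
    have := rpow_pos_of_pos ha' ((2 * (m:ℝ)) / (2 * (m:ℝ) - 1))
    have := rpow_pos_of_pos hb' ((2 * (m:ℝ)) / (2 * (m:ℝ) - 1))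
    linarith
  have hE : 0 < A u ^ ((2 * (m:ℝ) - 1) / (2 * (m:ℝ))) := rpow_pos_of_pos hApos _
  -- derivatives of the profile curves
  have hmem : Set.Ioo a b ∈ nhds u := Ioo_mem_nhds hu.1 hu.2
  have hαd : HasDerivAt α (deriv α u) u :=
    (((hα.contDiffAt hmem).differentiableAt (by norm_num))).hasDerivAt
  have hβd : HasDerivAt β (deriv β u) u :=
    (((hβ.contDiffAt hmem).differentiableAt (by norm_num))).hasDerivAt
  have hXud : Xu u v = (deriv α u * Real.cos v, deriv α u * Real.sin v, deriv β u) := by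
    rw [hXu]
    have h : (fun t => X t v) = fun t => (α t * Real.cos v, α t * Real.sin v, β t) :=
      funext fun t => hX t v
    rw [h]
    exact ((hαd.mul_const _).prodMk ((hαd.mul_const _).prodMk hβd)).deriv
  have hXvd : Xv u v = (α u * -Real.sin v, α u * Real.cos v, 0) := by
    rw [hXv]
    have h : (fun t => X u t) = fun t => (α u * Real.cos t, α u * Real.sin t, β u) :=
      funext fun t => hX u t
    rw [h]
    exact (((Real.hasDerivAt_cos v).const_mul (α u)).prodMk
      (((Real.hasDerivAt_sin v).const_mul (α u)).prodMk (hasDerivAt_const v (β u)))).deriv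
  have hφpos : 0 < φ u v := by
    rw [hφ]; exact div_pos (by positivity) (mul_pos hαp hE)
  refine ⟨?_, hφpos⟩
  rw [hη, gradPhi_eq, hXud, hXvd, hφ]
  have hkP := pow_key m hm (A u) hApos (deriv β u) hb'
  have hkQ := pow_key m hm (A u) hApos (deriv α u) ha'
  dsimp only [cross, Prod.smul_mk, smul_eq_mul]
  have hαne : α u ≠ 0 := ne_of_gt hαp
  have hEne : A u ^ ((2 * (m:ℝ) - 1) / (2 * (m:ℝ))) ≠ 0 := ne_of_gt hE
  set c : ℝ := A u ^ (-(1:ℝ) / (2 * (m:ℝ))) with hc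
  set P : ℝ := deriv β u ^ ((1:ℝ) / (2 * (m:ℝ) - 1)) with hP
  set Q : ℝ := deriv α u ^ ((1:ℝ) / (2 * (m:ℝ) - 1)) with hQ
  set E : ℝ := A u ^ ((2 * (m:ℝ) - 1) / (2 * (m:ℝ))) with hEdef
  have hsum : (c * (-P * Real.cos v)) ^ 2 + (c * (-P * Real.sin v)) ^ 2 = (c * P) ^ 2 := by
    have h2 := sin_sq_add_cos_sq v
    linear_combination c ^ 2 * P ^ 2 * h2
  refine Prod.ext ?_ (Prod.ext ?_ ?_)
  · show 2 * (m:ℝ) * (c * (-P * Real.cos v)) *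
      ((c * (-P * Real.cos v)) ^ 2 + (c * (-P * Real.sin v)) ^ 2) ^ (m - 1) =
      2 * (m:ℝ) / (α u * E) *
        (deriv α u * Real.sin v * 0 - deriv β u * (α u * Real.cos v))
    rw [hsum, ← pow_mul]
    have hL : 2 * (m:ℝ) * (c * (-P * Real.cos v)) * (c * P) ^ (2 * (m - 1)) =
        -(2 * (m:ℝ) * Real.cos v) * (c * P) ^ (2 * m - 1) := by
      rw [show 2 * m - 1 = 2 * (m - 1) + 1 by omega, pow_succ]; ring
    rw [hL, hkP]
    field_simp
    ring
  · show 2 * (m:ℝ) * (c * (-P * Real.sin v)) *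
      ((c * (-P * Real.cos v)) ^ 2 + (c * (-P * Real.sin v)) ^ 2) ^ (m - 1) =
      2 * (m:ℝ) / (α u * E) *
        (deriv β u * (α u * -Real.sin v) - deriv α u * Real.cos v * 0)
    rw [hsum, ← pow_mul]
    have hL : 2 * (m:ℝ) * (c * (-P * Real.sin v)) * (c * P) ^ (2 * (m - 1)) =
        -(2 * (m:ℝ) * Real.sin v) * (c * P) ^ (2 * m - 1) := by
      rw [show 2 * m - 1 = 2 * (m - 1) + 1 by omega, pow_succ]; ring
    rw [hL, hkP]
    field_simp
    ring
  · show 2 * (m:ℝ) * (c * Q) ^ (2 * m - 1) =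
      2 * (m:ℝ) / (α u * E) *
        (deriv α u * Real.cos v * (α u * Real.cos v) -
          deriv α u * Real.sin v * (α u * -Real.sin v))
    rw [hkQ]
    have htrig : deriv α u * Real.cos v * (α u * Real.cos v) -
        deriv α u * Real.sin v * (α u * -Real.sin v) = α u * deriv α u := by
      have h2 := sin_sq_add_cos_sq v
      linear_combination α u * deriv α u * h2
    rw [htrig]
    field_simp
end

section
/- The partial derivatives of η satisfy η_u(u,v) = k₁(u) · X_u(u,v) and η_v(u,v) = k₂(u) · X_v(u,v) for all (u,v), where k₁(u) = −(1/(2m−1)) · A(u)^{−(2m+1)/(2m)} · α'(u)^{−(2m−2)/(2m−1)} · β'(u)^{−(2m−2)/(2m−1)} · (α'(u)β''(u) − α''(u)β'(u)) and k₂(u) = −(1/α(u)) · A(u)^{−1/(2m)} · β'(u)^{1/(2m−1)}. In particular X_u and X_v are eigenvectors of the differential of the Birkhoff–Gauss map with eigenvalues (principal curvatures) k₁ and k₂. -/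
open Real Set

/-- The partial derivatives of the Birkhoff–Gauss map `η` satisfy
`η_u = k₁ · X_u` and `η_v = k₂ · X_v`, where `k₁`, `k₂` are the principal curvatures
of the rotational surface. -/
theorem eta_partials_eq_principal_curvatures (m : ℕ) (hm : 2 ≤ m) (a b : ℝ) (α β : ℝ → ℝ)
    (hα : ContDiffOn ℝ 2 α (Set.Ioo a b)) (hβ : ContDiffOn ℝ 2 β (Set.Ioo a b))
    (hαpos : ∀ u ∈ Set.Ioo a b, 0 < α u)
    (hα' : ∀ u ∈ Set.Ioo a b, 0 < deriv α u)
    (hβ' : ∀ u ∈ Set.Ioo a b, 0 < deriv β u)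
    (X : ℝ → ℝ → ℝ × ℝ × ℝ)
    (hX : ∀ u v, X u v = (α u * Real.cos v, α u * Real.sin v, β u))
    (Xu Xv : ℝ → ℝ → ℝ × ℝ × ℝ)
    (hXu : ∀ u v, Xu u v = deriv (fun t => X t v) u)
    (hXv : ∀ u v, Xv u v = deriv (fun t => X u t) v)
    (A : ℝ → ℝ)
    (hA : ∀ u, A u =
      deriv α u ^ ((2 * (m : ℝ)) / (2 * (m : ℝ) - 1)) +
      deriv β u ^ ((2 * (m : ℝ)) / (2 * (m : ℝ) - 1)))
    (η : ℝ → ℝ → ℝ × ℝ × ℝ)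
    (hη : ∀ u v, η u v =
      (A u ^ (-(1 : ℝ) / (2 * (m : ℝ))) *
          (-(deriv β u ^ ((1 : ℝ) / (2 * (m : ℝ) - 1))) * Real.cos v),
        A u ^ (-(1 : ℝ) / (2 * (m : ℝ))) *
          (-(deriv β u ^ ((1 : ℝ) / (2 * (m : ℝ) - 1))) * Real.sin v),
        A u ^ (-(1 : ℝ) / (2 * (m : ℝ))) *
          deriv α u ^ ((1 : ℝ) / (2 * (m : ℝ) - 1))))
    (k₁ k₂ : ℝ → ℝ)
    (hk₁ : ∀ u, k₁ u =
      -(1 / (2 * (m : ℝ) - 1)) * A u ^ (-(2 * (m : ℝ) + 1) / (2 * (m : ℝ))) *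
        deriv α u ^ (-(2 * (m : ℝ) - 2) / (2 * (m : ℝ) - 1)) *
        deriv β u ^ (-(2 * (m : ℝ) - 2) / (2 * (m : ℝ) - 1)) *
        (deriv α u * deriv (deriv β) u - deriv (deriv α) u * deriv β u))
    (hk₂ : ∀ u, k₂ u =
      -(1 / α u) * A u ^ (-(1 : ℝ) / (2 * (m : ℝ))) *
        deriv β u ^ ((1 : ℝ) / (2 * (m : ℝ) - 1))) :
    ∀ u ∈ Set.Ioo a b, ∀ v : ℝ,
      deriv (fun t => η t v) u = k₁ u • Xu u v ∧
      deriv (fun t => η u t) v = k₂ u • Xv u v := by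
  intro u hu v
  set M : ℝ := (m : ℝ) with hM
  have hM2 : (2 : ℝ) ≤ M := by rw [hM]; exact_mod_cast hm
  have hMpos : 0 < 2 * M := by linarith
  have hMne : (2 * M : ℝ) ≠ 0 := ne_of_gt hMpos
  have hM1pos : 0 < 2 * M - 1 := by linarith
  have hM1ne : (2 * M - 1 : ℝ) ≠ 0 := ne_of_gt hM1pos
  set q : ℝ := 2 * M / (2 * M - 1) with hq
  set p : ℝ := 1 / (2 * M - 1) with hp
  set s : ℝ := -(1 : ℝ) / (2 * M) with hs
  have hmem : Set.Ioo a b ∈ nhds u := isOpen_Ioo.mem_nhds hu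
  -- basic derivatives
  have hda : HasDerivAt α (deriv α u) u :=
    (((hα.differentiableOn (by norm_num)).differentiableAt hmem)).hasDerivAt
  have hdb : HasDerivAt β (deriv β u) u :=
    (((hβ.differentiableOn (by norm_num)).differentiableAt hmem)).hasDerivAt
  have hα1 : ContDiffOn ℝ 1 (deriv α) (Set.Ioo a b) :=
    hα.deriv_of_isOpen isOpen_Ioo (by norm_num)
  have hβ1 : ContDiffOn ℝ 1 (deriv β) (Set.Ioo a b) :=
    hβ.deriv_of_isOpen isOpen_Ioo (by norm_num)
  have hdda : HasDerivAt (deriv α) (deriv (deriv α) u) u :=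
    ((hα1.differentiableOn (by norm_num)).differentiableAt hmem).hasDerivAt
  have hddb : HasDerivAt (deriv β) (deriv (deriv β) u) u :=
    ((hβ1.differentiableOn (by norm_num)).differentiableAt hmem).hasDerivAt
  have ha' : 0 < deriv α u := hα' u hu
  have hb' : 0 < deriv β u := hβ' u hu
  set a' : ℝ := deriv α u
  set b' : ℝ := deriv β u
  set a'' : ℝ := deriv (deriv α) u
  set b'' : ℝ := deriv (deriv β) u
  have hApos : 0 < A u := by
    rw [hA u]
    have := Real.rpow_pos_of_pos ha' q
    have := Real.rpow_pos_of_pos hb' q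
    positivity
  -- derivative of A
  have hdA : HasDerivAt A (a'' * q * a' ^ (q - 1) + b'' * q * b' ^ (q - 1)) u := by
    have h1 : HasDerivAt (fun t => deriv α t ^ q) (a'' * q * a' ^ (q - 1)) u :=
      hdda.rpow_const (Or.inl (ne_of_gt ha'))
    have h2 : HasDerivAt (fun t => deriv β t ^ q) (b'' * q * b' ^ (q - 1)) u :=
      hddb.rpow_const (Or.inl (ne_of_gt hb'))
    have hAfun : A = fun t => deriv α t ^ q + deriv β t ^ q := funext fun t => hA t
    rw [hAfun]
    exact h1.add h2
  set A' : ℝ := a'' * q * a' ^ (q - 1) + b'' * q * b' ^ (q - 1) with hA'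
  have hdP : HasDerivAt (fun t => A t ^ s) (A' * s * A u ^ (s - 1)) u :=
    hdA.rpow_const (Or.inl (ne_of_gt hApos))
  have hdB : HasDerivAt (fun t => deriv β t ^ p) (b'' * p * b' ^ (p - 1)) u :=
    hddb.rpow_const (Or.inl (ne_of_gt hb'))
  have hdC : HasDerivAt (fun t => deriv α t ^ p) (a'' * p * a' ^ (p - 1)) u :=
    hdda.rpow_const (Or.inl (ne_of_gt ha'))
  -- Xu
  have hXu' : Xu u v = (a' * Real.cos v, a' * Real.sin v, b') := by
    rw [hXu]
    have : (fun t => X t v) = fun t => (α t * Real.cos v, α t * Real.sin v, β t) :=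
      funext fun t => hX t v
    rw [this]
    exact (((hda.mul_const (Real.cos v)).prodMk
      ((hda.mul_const (Real.sin v)).prodMk hdb))).deriv
  -- Xv
  have hXv' : Xv u v = (α u * -Real.sin v, α u * Real.cos v, 0) := by
    rw [hXv]
    have : (fun t => X u t) = fun t => (α u * Real.cos t, α u * Real.sin t, β u) :=
      funext fun t => hX u t
    rw [this]
    exact ((((Real.hasDerivAt_cos v).const_mul (α u)).prodMk
      (((Real.hasDerivAt_sin v).const_mul (α u)).prodMk (hasDerivAt_const v (β u))))).deriv
  constructor
  · -- u-derivative
    have hfun : (fun t => η t v) = fun t =>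
        (A t ^ s * (-(deriv β t ^ p) * Real.cos v),
         A t ^ s * (-(deriv β t ^ p) * Real.sin v),
         A t ^ s * deriv α t ^ p) := funext fun t => hη t v
    rw [hfun]
    have h1 : HasDerivAt (fun t => A t ^ s * (-(deriv β t ^ p) * Real.cos v))
        (A' * s * A u ^ (s - 1) * (-(b' ^ p) * Real.cos v)
          + A u ^ s * (-(b'' * p * b' ^ (p - 1)) * Real.cos v)) u :=
      hdP.mul (hdB.neg.mul_const (Real.cos v))
    have h2 : HasDerivAt (fun t => A t ^ s * (-(deriv β t ^ p) * Real.sin v))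
        (A' * s * A u ^ (s - 1) * (-(b' ^ p) * Real.sin v)
          + A u ^ s * (-(b'' * p * b' ^ (p - 1)) * Real.sin v)) u :=
      hdP.mul (hdB.neg.mul_const (Real.sin v))
    have h3 : HasDerivAt (fun t => A t ^ s * deriv α t ^ p)
        (A' * s * A u ^ (s - 1) * a' ^ p + A u ^ s * (a'' * p * a' ^ (p - 1))) u :=
      hdP.mul hdC
    rw [(h1.prodMk (h2.prodMk h3)).deriv, hXu', hk₁, Prod.smul_mk, Prod.smul_mk]
    have key : ∀ c : ℝ,
        A' * s * A u ^ (s - 1) * (-(b' ^ p) * c) + A u ^ s * (-(b'' * p * b' ^ (p - 1)) * c)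
        = (-(1 / (2 * M - 1)) * A u ^ (-(2 * M + 1) / (2 * M)) *
            a' ^ (-(2 * M - 2) / (2 * M - 1)) * b' ^ (-(2 * M - 2) / (2 * M - 1)) *
            (a' * b'' - a'' * b')) * (a' * c) := by
      intro c
      rw [hA']
      have e3 : q - 1 = p := by rw [hq, hp]; field_simp; ring
      have e1 : -(2 * M + 1) / (2 * M) = s - 1 := by rw [hs]; field_simp; ring
      have e2 : -(2 * M - 2) / (2 * M - 1) = p - 1 := by rw [hp]; field_simp; ring
      have hq1 : q = p + 1 := by rw [hq, hp]; field_simp; ring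
      have eA : A u = a' ^ p * a' + b' ^ p * b' := by
        rw [hA u, hq1, Real.rpow_add_one (ne_of_gt ha'), Real.rpow_add_one (ne_of_gt hb')]
      have hAne : (0:ℝ) < a' ^ p * a' + b' ^ p * b' := eA ▸ hApos
      rw [e3, e1, e2, Real.rpow_sub hApos, Real.rpow_one, Real.rpow_sub ha',
        Real.rpow_one, Real.rpow_sub hb', Real.rpow_one, eA, hs, hp, hq]
      rw [hp] at hAne
      have h1 := ne_of_gt (Real.rpow_pos_of_pos ha' (1/(2*M-1)))
      have h2 := ne_of_gt (Real.rpow_pos_of_pos hb' (1/(2*M-1)))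
      field_simp
      ring
    have key3 :
        A' * s * A u ^ (s - 1) * a' ^ p + A u ^ s * (a'' * p * a' ^ (p - 1))
        = (-(1 / (2 * M - 1)) * A u ^ (-(2 * M + 1) / (2 * M)) *
            a' ^ (-(2 * M - 2) / (2 * M - 1)) * b' ^ (-(2 * M - 2) / (2 * M - 1)) *
            (a' * b'' - a'' * b')) * b' := by
      rw [hA']
      have e3 : q - 1 = p := by rw [hq, hp]; field_simp; ring
      have e1 : -(2 * M + 1) / (2 * M) = s - 1 := by rw [hs]; field_simp; ring
      have e2 : -(2 * M - 2) / (2 * M - 1) = p - 1 := by rw [hp]; field_simp; ring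
      have hq1 : q = p + 1 := by rw [hq, hp]; field_simp; ring
      have eA : A u = a' ^ p * a' + b' ^ p * b' := by
        rw [hA u, hq1, Real.rpow_add_one (ne_of_gt ha'), Real.rpow_add_one (ne_of_gt hb')]
      have hAne : (0:ℝ) < a' ^ p * a' + b' ^ p * b' := eA ▸ hApos
      rw [e3, e1, e2, Real.rpow_sub hApos, Real.rpow_one, Real.rpow_sub ha',
        Real.rpow_one, Real.rpow_sub hb', Real.rpow_one, eA, hs, hp, hq]
      rw [hp] at hAne
      have h1 := ne_of_gt (Real.rpow_pos_of_pos ha' (1/(2*M-1)))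
      have h2 := ne_of_gt (Real.rpow_pos_of_pos hb' (1/(2*M-1)))
      field_simp
      ring
    refine Prod.ext ?_ (Prod.ext ?_ ?_) <;> simp only [smul_eq_mul]
    · exact key (Real.cos v)
    · exact key (Real.sin v)
    · exact key3
  · -- v-derivative
    have hfun : (fun t => η u t) = fun t =>
        (A u ^ s * (-(b' ^ p) * Real.cos t),
         A u ^ s * (-(b' ^ p) * Real.sin t),
         A u ^ s * a' ^ p) := funext fun t => hη u t
    rw [hfun]
    have hαu : α u ≠ 0 := ne_of_gt (hαpos u hu)
    have h1 : HasDerivAt (fun t => A u ^ s * (-(b' ^ p) * Real.cos t))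
        (A u ^ s * (-(b' ^ p) * -Real.sin v)) v :=
      ((Real.hasDerivAt_cos v).const_mul (-(b' ^ p))).const_mul (A u ^ s)
    have h2 : HasDerivAt (fun t => A u ^ s * (-(b' ^ p) * Real.sin t))
        (A u ^ s * (-(b' ^ p) * Real.cos v)) v :=
      ((Real.hasDerivAt_sin v).const_mul (-(b' ^ p))).const_mul (A u ^ s)
    have h3 : HasDerivAt (fun _ : ℝ => A u ^ s * a' ^ p) 0 v := hasDerivAt_const v _
    rw [(h1.prodMk (h2.prodMk h3)).deriv, hXv', hk₂, Prod.smul_mk, Prod.smul_mk]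
    refine Prod.ext ?_ (Prod.ext ?_ ?_) <;> simp only [smul_eq_mul]
    · field_simp
      ring
    · field_simp
      ring
    · ring
end

section
/- Suppose k₂(u) = −1 for all u ∈ (a,b). Then 0 < α(u) < 1 for all u, and there exists a constant c ∈ ℝ such that α(u)^{2m} + (u − c)^{2m} = 1 for all u ∈ (a,b); that is, the profile curve lies on the unit sphere of the norm ‖·‖ (up to translation along the rotation axis). -/
open Real Set

/-- If the principal curvature `k₂` of the rotational surface
`X(u,v) = (α(u) cos v, α(u) sin v, u)` is identically `−1`, then `0 < α < 1` and the
profile curve lies on the unit sphere of the norm (up to translation along the axis):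
`α(u)^{2m} + (u − c)^{2m} = 1`. -/
theorem k2_eq_neg_one_profile_on_unit_sphere (m : ℕ) (hm : 2 ≤ m) (a b : ℝ) (α : ℝ → ℝ)
    (hα : ContDiffOn ℝ 2 α (Set.Ioo a b))
    (hαpos : ∀ u ∈ Set.Ioo a b, 0 < α u)
    (hα' : ∀ u ∈ Set.Ioo a b, 0 < deriv α u)
    (k₂ : ℝ → ℝ)
    (hk₂ : ∀ u, k₂ u =
      -(1 / α u) * (deriv α u ^ ((2 * (m : ℝ)) / (2 * (m : ℝ) - 1)) + 1)
          ^ (-(1 : ℝ) / (2 * (m : ℝ))))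
    (h : ∀ u ∈ Set.Ioo a b, k₂ u = -1) :
    (∀ u ∈ Set.Ioo a b, 0 < α u ∧ α u < 1) ∧
    ∃ c : ℝ, ∀ u ∈ Set.Ioo a b, α u ^ (2 * m) + (u - c) ^ (2 * m) = 1 := by
  have hm2 : (2 : ℝ) ≤ (m : ℝ) := by exact_mod_cast hm
  set M : ℝ := 2 * (m : ℝ) with hMdef
  have hMpos : 0 < M := by simp only [hMdef]; linarith
  have hM1 : 1 < M := by simp only [hMdef]; linarith
  have hMne : M ≠ 0 := ne_of_gt hMpos
  have hM1ne : M - 1 ≠ 0 := by intro h0; rw [sub_eq_zero] at h0; linarith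
  have hcastM : ((2 * m : ℕ) : ℝ) = M := by push_cast [hMdef]; ring
  have hcastM1 : ((2 * m - 1 : ℕ) : ℝ) = M - 1 := by
    have : 1 ≤ 2 * m := by omega
    push_cast [this, hMdef]; ring
  -- Step A: the basic pointwise identity
  have hE : ∀ u ∈ Set.Ioo a b,
      (deriv α u ^ (M / (M - 1)) + 1) ^ (-(1 : ℝ) / M) = α u := by
    intro u hu
    have h1 := h u hu
    rw [hk₂ u] at h1
    have hαu := hαpos u hu
    have h2 : (1 / α u) * ((deriv α u ^ (M / (M - 1)) + 1) ^ (-(1 : ℝ) / M)) = 1 := by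
      linarith
    field_simp at h2
    rw [neg_div]; linarith
  have hBgt1 : ∀ u ∈ Set.Ioo a b, 1 < deriv α u ^ (M / (M - 1)) + 1 := by
    intro u hu
    have := Real.rpow_pos_of_pos (hα' u hu) (M / (M - 1))
    linarith
  -- α < 1 on the interval
  have hαlt1 : ∀ u ∈ Set.Ioo a b, α u < 1 := by
    intro u hu
    rw [← hE u hu]
    exact Real.rpow_lt_one_of_one_lt_of_neg (hBgt1 u hu)
      (div_neg_of_neg_of_pos (by norm_num) hMpos)
  refine ⟨fun u hu => ⟨hαpos u hu, hαlt1 u hu⟩, ?_⟩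
  -- Step B : B = α u ^ (-M)
  have hB : ∀ u ∈ Set.Ioo a b,
      deriv α u ^ (M / (M - 1)) + 1 = α u ^ (-M) := by
    intro u hu
    have hB0 : (0:ℝ) < deriv α u ^ (M / (M - 1)) + 1 := by
      have := hBgt1 u hu; linarith
    have h3 := congrArg (fun x : ℝ => x ^ (-M)) (hE u hu)
    rwa [← Real.rpow_mul hB0.le, show (-(1:ℝ)/M) * (-M) = 1 by field_simp,
      Real.rpow_one] at h3
  -- positivity of 1 - α^(2m)
  have hφpos : ∀ u ∈ Set.Ioo a b, 0 < 1 - α u ^ (2 * m) := by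
    intro u hu
    have := pow_lt_one₀ (hαpos u hu).le (hαlt1 u hu) (by omega : 2 * m ≠ 0)
    linarith
  -- Step C : formula for the derivative
  have hA : ∀ u ∈ Set.Ioo a b,
      deriv α u = (1 - α u ^ (2 * m)) ^ ((M - 1) / M) / α u ^ (2 * m - 1) := by
    intro u hu
    have hαu := hαpos u hu
    have hXpos : (0:ℝ) < α u ^ (2 * m) := pow_pos hαu _
    have hφ := hφpos u hu
    -- rewrite α u ^ (-M)
    have hnat : α u ^ (2 * m) = α u ^ (M : ℝ) := by
      rw [← Real.rpow_natCast (α u) (2 * m), hcastM]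
    have hApow : deriv α u ^ (M / (M - 1)) = (1 - α u ^ (2 * m)) / α u ^ (2 * m) := by
      have h4 := hB u hu
      rw [Real.rpow_neg hαu.le, ← hnat] at h4
      field_simp at h4 ⊢
      linarith
    have h5 := congrArg (fun x : ℝ => x ^ ((M - 1) / M)) hApow
    rw [← Real.rpow_mul (hα' u hu).le,
      show (M / (M - 1)) * ((M - 1) / M) = 1 by field_simp,
      Real.rpow_one] at h5
    rw [h5, Real.div_rpow hφ.le hXpos.le]
    congr 1
    rw [hnat, ← Real.rpow_mul hαu.le, show M * ((M - 1) / M) = M - 1 by field_simp,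
      ← hcastM1, Real.rpow_natCast]
  -- the auxiliary function β
  set φ : ℝ → ℝ := fun u => 1 - α u ^ (2 * m) with hφdef
  set β : ℝ → ℝ := fun u => φ u ^ ((1:ℝ) / M) with hβdef
  have hβderiv : ∀ u ∈ Set.Ioo a b, HasDerivAt β (-1) u := by
    intro u hu
    have hαu := hαpos u hu
    have hφu := hφpos u hu
    have hA' : HasDerivAt α (deriv α u) u :=
      ((hα.differentiableOn (by norm_num)).differentiableAt
        (isOpen_Ioo.mem_nhds hu)).hasDerivAt
    have hφ' : HasDerivAt φ (-(((2 * m : ℕ) : ℝ) * α u ^ (2 * m - 1) * deriv α u)) u := by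
      simpa using (hA'.pow (2 * m)).const_sub 1
    have hβ' := hφ'.rpow_const (p := (1:ℝ)/M) (Or.inl (ne_of_gt hφu))
    convert hβ' using 1
    -- show -1 = φ' * (1/M) * φ u ^ (1/M - 1)
    rw [hcastM]
    have hAeq := hA u hu
    have hXpos : (0:ℝ) < α u ^ (2 * m - 1) := pow_pos hαu _
    have key : α u ^ (2 * m - 1) * deriv α u = φ u ^ ((M - 1) / M) := by
      rw [hAeq]; field_simp; rfl
    have key2 : φ u ^ ((M - 1) / M) * φ u ^ ((1:ℝ)/M - 1) = 1 := by
      rw [← Real.rpow_add hφu, show (M - 1) / M + ((1:ℝ)/M - 1) = 0 by field_simp; ring,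
        Real.rpow_zero]
    calc (-1 : ℝ) = -(M * (1/M) * (φ u ^ ((M - 1) / M) * φ u ^ ((1:ℝ)/M - 1))) := by
          rw [key2]; field_simp
      _ = -(M * α u ^ (2 * m - 1) * deriv α u) * (1/M) * φ u ^ ((1:ℝ)/M - 1) := by
          rw [← key]; ring
  by_cases hne : (Set.Ioo a b).Nonempty
  · obtain ⟨u₀, hu₀⟩ := hne
    refine ⟨β u₀ + u₀, fun u hu => ?_⟩
    -- the function β + id is constant on Ioo a b
    have hconst : β u + u = β u₀ + u₀ := by
      have hg : ∀ x ∈ Set.Ioo a b, HasDerivWithinAt (fun x => β x + x) ((fun _ => (0:ℝ)) x)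
          (Set.Ioo a b) x := by
        intro x hx
        have := (hβderiv x hx).add (hasDerivAt_id' x)
        have e : (-1:ℝ) + 1 = 0 := by norm_num
        rw [e] at this; exact this.hasDerivWithinAt
      have := (convex_Ioo a b).norm_image_sub_le_of_norm_hasDerivWithin_le
        (f := fun x => β x + x) (f' := fun _ => (0:ℝ)) (C := 0) hg
        (fun x _ => by simp) hu₀ hu
      simp only [zero_mul, norm_le_zero_iff, sub_eq_zero] at this
      exact this
    have hβu : β u = -(u - (β u₀ + u₀)) := by linarith
    have hβpow : β u ^ (2 * m) = φ u := by
      rw [hβdef]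
      rw [← Real.rpow_natCast (φ u ^ ((1:ℝ)/M)) (2 * m), ← Real.rpow_mul (hφpos u hu).le,
        hcastM, show (1:ℝ)/M * M = 1 by field_simp, Real.rpow_one]
    have heven : Even (2 * m) := even_two_mul m
    have : (u - (β u₀ + u₀)) ^ (2 * m) = φ u := by
      rw [← hβpow, hβu, heven.neg_pow]
    rw [this, hφdef]; ring
  · exact ⟨0, fun u hu => absurd ⟨u, hu⟩ hne⟩
end

section
/- Let μ ≠ 0 and suppose k₁(u) = μ for all u ∈ (a,b). Then there exist constants c₁, c₂ ∈ ℝ such that 0 < c₁ − μ·α(u) < 1 for all u, the first integral (α'(u)^{2m/(2m−1)} + 1)^{−1/(2m)} = c₁ − μ·α(u) holds on (a,b), and moreover (c₁ − μ·α(u))^{2m} + μ^{2m} (u − c₂)^{2m} = 1 for all u ∈ (a,b); that is, the profile curve lies on a Lamé curve x^{2m} + y^{2m} = 1 scaled by 1/|μ| (up to translation). -/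
open Real Set

lemma const_of_hasDerivAt_zero {s : Set ℝ} (hconv : Convex ℝ s) (hso : IsOpen s)
    {h : ℝ → ℝ} (hd : ∀ x ∈ s, HasDerivAt h 0 x) {x y : ℝ} (hx : x ∈ s) (hy : y ∈ s) :
    h x = h y := by
  apply hconv.is_const_of_fderivWithin_eq_zero
    (fun z hz => (hd z hz).differentiableAt.differentiableWithinAt) _ hx hy
  intro z hz
  rw [fderivWithin_of_isOpen hso hz, (hd z hz).hasFDerivAt.fderiv]
  ext
  simp

/-- If the principal curvature `k₁` of the rotational surface
`X(u,v) = (α(u) cos v, α(u) sin v, u)` is identically a nonzero constant `μ`, then the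
first integral `(α'^{2m/(2m−1)} + 1)^{−1/(2m)} = c₁ − μα` holds with `0 < c₁ − μα < 1`,
and the profile curve lies on a Lamé curve scaled by `1/|μ|` (up to translation):
`(c₁ − μα(u))^{2m} + μ^{2m} (u − c₂)^{2m} = 1`. -/
theorem k1_constant_profile_on_Lame_curve (m : ℕ) (hm : 2 ≤ m) (a b : ℝ) (α : ℝ → ℝ)
    (hα : ContDiffOn ℝ 2 α (Set.Ioo a b))
    (hαpos : ∀ u ∈ Set.Ioo a b, 0 < α u)
    (hα' : ∀ u ∈ Set.Ioo a b, 0 < deriv α u)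
    (μ : ℝ) (hμ : μ ≠ 0)
    (k₁ : ℝ → ℝ)
    (hk₁ : ∀ u, k₁ u =
      (1 / (2 * (m : ℝ) - 1)) *
        (deriv α u ^ ((2 * (m : ℝ)) / (2 * (m : ℝ) - 1)) + 1)
          ^ (-(2 * (m : ℝ) + 1) / (2 * (m : ℝ))) *
        deriv α u ^ (-(2 * (m : ℝ) - 2) / (2 * (m : ℝ) - 1)) *
        deriv (deriv α) u)
    (h : ∀ u ∈ Set.Ioo a b, k₁ u = μ) :
    ∃ c₁ c₂ : ℝ, ∀ u ∈ Set.Ioo a b,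
      (0 < c₁ - μ * α u ∧ c₁ - μ * α u < 1) ∧
      (deriv α u ^ ((2 * (m : ℝ)) / (2 * (m : ℝ) - 1)) + 1) ^ (-(1 : ℝ) / (2 * (m : ℝ)))
        = c₁ - μ * α u ∧
      (c₁ - μ * α u) ^ (2 * m) + μ ^ (2 * m) * (u - c₂) ^ (2 * m) = 1 := by
  rcases Set.eq_empty_or_nonempty (Set.Ioo a b) with hE | ⟨u₀, hu₀⟩
  · exact ⟨0, 0, fun u hu => absurd (hE ▸ hu) (Set.notMem_empty u)⟩
  set g : ℝ → ℝ := deriv α with hg_def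
  have hm2 : (2:ℝ) ≤ (m:ℝ) := by exact_mod_cast hm
  have h2m : (0:ℝ) < 2 * (m:ℝ) := by linarith
  have h2m1 : (0:ℝ) < 2 * (m:ℝ) - 1 := by linarith
  set p : ℝ := 2 * (m:ℝ) / (2 * (m:ℝ) - 1) with hp_def
  set q : ℝ := -(1:ℝ) / (2 * (m:ℝ)) with hq_def
  -- differentiability facts
  have hopen : IsOpen (Set.Ioo a b) := isOpen_Ioo
  have hg1 : ContDiffOn ℝ 1 g (Set.Ioo a b) := hα.deriv_of_isOpen hopen (by norm_num)
  have hgd : ∀ u ∈ Set.Ioo a b, HasDerivAt g (deriv g u) u := fun u hu =>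
    (((hg1.differentiableOn (by norm_num)).differentiableAt (hopen.mem_nhds hu))).hasDerivAt
  have hαd : ∀ u ∈ Set.Ioo a b, HasDerivAt α (g u) u := fun u hu =>
    ((hα.differentiableOn (by norm_num)).differentiableAt (hopen.mem_nhds hu)).hasDerivAt
  have hs_pos : ∀ u ∈ Set.Ioo a b, 0 < g u ^ p + 1 := fun u hu => by
    have := Real.rpow_pos_of_pos (hα' u hu) p
    linarith
  -- Step 1 : F := (g^p+1)^q + μ α has zero derivative
  set F : ℝ → ℝ := fun u => (g u ^ p + 1) ^ q + μ * α u with hF_def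
  have hFd : ∀ u ∈ Set.Ioo a b, HasDerivAt F 0 u := by
    intro u hu
    have hg0 : 0 < g u := hα' u hu
    have hs0 : 0 < g u ^ p + 1 := hs_pos u hu
    have h1 : HasDerivAt (fun u => g u ^ p + 1)
        (deriv g u * p * g u ^ (p - 1)) u :=
      ((hgd u hu).rpow_const (Or.inl hg0.ne')).add_const 1
    have h3 : HasDerivAt (fun u => (g u ^ p + 1) ^ q)
        (deriv g u * p * g u ^ (p - 1) * q * (g u ^ p + 1) ^ (q - 1)) u :=
      h1.rpow_const (Or.inl hs0.ne')
    have h4 := h3.add ((hαd u hu).const_mul μ)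
    have hμeq : (1 / (2 * (m : ℝ) - 1)) *
        (g u ^ p + 1) ^ (-(2 * (m : ℝ) + 1) / (2 * (m : ℝ))) *
        g u ^ (-(2 * (m : ℝ) - 2) / (2 * (m : ℝ) - 1)) * deriv g u = μ :=
      (hk₁ u).symm.trans (h u hu)
    have hq1 : q - 1 = -(2 * (m : ℝ) + 1) / (2 * (m : ℝ)) := by
      rw [hq_def]; field_simp; ring
    have hkey : g u ^ (-(2 * (m : ℝ) - 2) / (2 * (m : ℝ) - 1)) * g u = g u ^ (p - 1) := by
      nth_rewrite 2 [← Real.rpow_one (g u)]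
      rw [← Real.rpow_add hg0]
      congr 1
      rw [hp_def]; field_simp; ring
    have hpq : p * q * (2 * (m:ℝ) - 1) + 1 = 0 := by
      rw [hp_def, hq_def]; field_simp; ring
    refine h4.congr_deriv ?_
    symm
    rw [hq1, ← hμeq]
    set X := g u ^ (p-1)
    set Y := (g u ^ p + 1) ^ (-(2 * (m : ℝ) + 1) / (2 * (m : ℝ)))
    set Z := g u ^ (-(2 * (m : ℝ) - 2) / (2 * (m : ℝ) - 1))
    have h2m1' : (2 * (m:ℝ) - 1) ≠ 0 := h2m1.ne'
    have hinv : (2*(m:ℝ)-1) * (2*(m:ℝ)-1)⁻¹ = 1 := mul_inv_cancel₀ h2m1.ne'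
    have hinvm : (m:ℝ) * ((m:ℝ))⁻¹ = 1 := mul_inv_cancel₀ (by positivity : (0:ℝ) < (m:ℝ)).ne'
    linear_combination ((2*(m:ℝ)-1)⁻¹ * X * Y * deriv g u) * hpq -
      (deriv g u * p * q * X * Y) * hinv +
      ((2*(m:ℝ)-1)⁻¹ * Y * deriv g u) * hkey +
      (2*(2*(m:ℝ)-1)⁻¹*X*Y*deriv g u) * hinvm -
      (2*(2*(m:ℝ)-1)⁻¹*Y*deriv g u) * hkey
  have hc2m : ((2*m : ℕ) : ℝ) = 2*(m:ℝ) := by push_cast; ring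
  have hc2m1 : ((2*m - 1 : ℕ) : ℝ) = 2*(m:ℝ) - 1 := by
    rw [Nat.cast_sub (by omega : 1 ≤ 2*m)]; push_cast; ring
  set c₁ : ℝ := F u₀ with hc₁_def
  have hFc : ∀ u ∈ Set.Ioo a b, F u = c₁ := fun u hu =>
    const_of_hasDerivAt_zero (convex_Ioo a b) hopen hFd hu hu₀
  have hf : ∀ u ∈ Set.Ioo a b, (g u ^ p + 1) ^ q = c₁ - μ * α u := by
    intro u hu
    have h1 : (g u ^ p + 1) ^ q + μ * α u = c₁ := hFc u hu
    linarith
  have hf01 : ∀ u ∈ Set.Ioo a b, 0 < c₁ - μ * α u ∧ c₁ - μ * α u < 1 := by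
    intro u hu
    rw [← hf u hu]
    refine ⟨Real.rpow_pos_of_pos (hs_pos u hu) q, ?_⟩
    apply Real.rpow_lt_one_of_one_lt_of_neg
    · have := Real.rpow_pos_of_pos (hα' u hu) p; linarith
    · rw [hq_def]
      exact div_neg_of_neg_of_pos (by norm_num) h2m
  have hy_pos : ∀ u ∈ Set.Ioo a b, 0 < 1 - (c₁ - μ * α u) ^ (2*m) := by
    intro u hu
    obtain ⟨h0, h1⟩ := hf01 u hu
    have : (c₁ - μ * α u) ^ (2*m) < 1 := pow_lt_one₀ h0.le h1 (by omega)
    linarith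
  -- key algebraic identity
  have hkB : ∀ u ∈ Set.Ioo a b, g u * (c₁ - μ * α u) ^ (2*m - 1)
      = (1 - (c₁ - μ * α u) ^ (2*m)) ^ ((2*(m:ℝ)-1)/(2*(m:ℝ))) := by
    intro u hu
    rw [← hf u hu]
    have hg0 : 0 < g u := hα' u hu
    have hs0 : 0 < g u ^ p + 1 := hs_pos u hu
    have hgp : 0 < g u ^ p := Real.rpow_pos_of_pos hg0 p
    have e1 : ((g u ^ p + 1) ^ q) ^ (2*m) = (g u ^ p + 1) ^ (-1 : ℝ) := by
      rw [← Real.rpow_natCast ((g u ^ p + 1) ^ q) (2*m), ← Real.rpow_mul hs0.le]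
      congr 1
      rw [hc2m, hq_def]; field_simp
    have e2 : ((g u ^ p + 1) ^ q) ^ (2*m - 1) = (g u ^ p + 1) ^ (-((2*(m:ℝ)-1)/(2*(m:ℝ)))) := by
      rw [← Real.rpow_natCast ((g u ^ p + 1) ^ q) (2*m-1), ← Real.rpow_mul hs0.le]
      congr 1
      rw [hc2m1, hq_def]; field_simp
    have e3 : 1 - (g u ^ p + 1) ^ (-1 : ℝ) = g u ^ p * (g u ^ p + 1) ^ (-1 : ℝ) := by
      rw [Real.rpow_neg_one]
      field_simp
      ring
    rw [e1, e2, e3, Real.mul_rpow hgp.le (by positivity),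
      ← Real.rpow_mul hg0.le, ← Real.rpow_mul hs0.le,
      show p * ((2*(m:ℝ)-1)/(2*(m:ℝ))) = 1 from by rw [hp_def]; field_simp,
      show (-1:ℝ) * ((2*(m:ℝ)-1)/(2*(m:ℝ))) = -((2*(m:ℝ)-1)/(2*(m:ℝ))) from by ring,
      Real.rpow_one]
  -- second constancy
  set G : ℝ → ℝ := fun u => (1 - (c₁ - μ * α u) ^ (2*m)) ^ ((1:ℝ)/(2*(m:ℝ))) - μ * u
    with hG_def
  have hGd : ∀ u ∈ Set.Ioo a b, HasDerivAt G 0 u := by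
    intro u hu
    have hy := hy_pos u hu
    have h5 : HasDerivAt (fun u => c₁ - μ * α u) (-(μ * g u)) u :=
      ((hαd u hu).const_mul μ).const_sub c₁
    have h6 := h5.pow (2*m)
    have h7 := h6.const_sub 1
    have h8 := h7.rpow_const (p := (1:ℝ)/(2*(m:ℝ))) (Or.inl hy.ne')
    have h9 := h8.sub ((hasDerivAt_id u).const_mul μ)
    refine h9.congr_deriv ?_
    symm
    rw [hc2m]
    set K := (c₁ - μ * α u) ^ (2*m - 1)
    set Y2 := (1 - (c₁ - μ * α u) ^ (2*m)) ^ ((1:ℝ)/(2*(m:ℝ)) - 1)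
    have hkb := hkB u hu
    have hyk : (1 - (c₁ - μ * α u) ^ (2*m)) ^ ((2*(m:ℝ)-1)/(2*(m:ℝ))) * Y2 = 1 := by
      rw [← Real.rpow_add hy,
        show (2*(m:ℝ)-1)/(2*(m:ℝ)) + ((1:ℝ)/(2*(m:ℝ)) - 1) = 0 from by field_simp; ring,
        Real.rpow_zero]
    have hinv2 : (2*(m:ℝ)) * (2*(m:ℝ))⁻¹ = 1 := mul_inv_cancel₀ h2m.ne'
    linear_combination (-(2*(m:ℝ))*μ*(2*(m:ℝ))⁻¹*Y2) * hkb +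
      (-(2*(m:ℝ))*μ*(2*(m:ℝ))⁻¹) * hyk + (-μ) * hinv2
  set c₂ : ℝ := -(G u₀)/μ with hc₂_def
  have hGc : ∀ u ∈ Set.Ioo a b, G u = G u₀ := fun u hu =>
    const_of_hasDerivAt_zero (convex_Ioo a b) hopen hGd hu hu₀
  refine ⟨c₁, c₂, fun u hu => ⟨hf01 u hu, hf u hu, ?_⟩⟩
  have hy := hy_pos u hu
  have hGu : (1 - (c₁ - μ * α u) ^ (2*m)) ^ ((1:ℝ)/(2*(m:ℝ))) = μ * (u - c₂) := by
    have h1 : G u = G u₀ := hGc u hu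
    rw [hG_def] at h1
    simp only at h1
    rw [hc₂_def]
    field_simp
    linarith
  have : μ ^ (2*m) * (u - c₂) ^ (2*m) = 1 - (c₁ - μ * α u) ^ (2*m) := by
    rw [← mul_pow, ← hGu, ← Real.rpow_natCast ((1 - (c₁ - μ * α u) ^ (2*m)) ^ ((1:ℝ)/(2*(m:ℝ)))) (2*m),
      ← Real.rpow_mul hy.le, hc2m,
      show (1:ℝ)/(2*(m:ℝ)) * (2*(m:ℝ)) = 1 from by field_simp, Real.rpow_one]
  linarith
end

section
/- (Theorem 5.1) Let λ ≠ 0. The rotational surface with profile u satisfies k₁(α) + λ·k₂(α) = 0 for all α ∈ I if and only if there exists a constant c₂ > 0 such that for all α ∈ I one has α^{2mλ} > c₂^{2mλ} and u'(α) = c₂^{(2m−1)λ} · (α^{2mλ} − c₂^{2mλ})^{−(2m−1)/(2m)}. -/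
open Real Set


/-- Pointwise algebraic equivalence between the Weingarten relation and the explicit ODE. -/
lemma hlw_aux_pointwise (M lam x p w : ℝ) (hM : (2:ℝ) ≤ M) (hx : 0 < x) (hp : 0 < p) :
    (-(1 / (2*M - 1)) * (1 + p ^ ((2*M)/(2*M-1))) ^ (-(2*M+1)/(2*M)) *
        p ^ (-(2*M-2)/(2*M-1)) * w
      + lam * (-(1/x) * (1 + p ^ ((2*M)/(2*M-1))) ^ (-(1:ℝ)/(2*M)) * p ^ ((1:ℝ)/(2*M-1))) = 0)
    ↔ w = -((2*M-1) * lam * p * (1 + p ^ ((2*M)/(2*M-1)))) / x := by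
  have h1 : (0:ℝ) < 2*M - 1 := by linarith
  have h2 : (0:ℝ) < 2*M := by linarith
  set A := 1 + p ^ ((2*M)/(2*M-1)) with hAdef
  have hA : 0 < A := by positivity
  have e1 : A ^ (-(2*M+1)/(2*M)) = A ^ (-(1:ℝ)/(2*M)) * A⁻¹ := by
    rw [← Real.rpow_neg_one A, ← Real.rpow_add hA]
    congr 1
    field_simp
    ring
  have e2 : p ^ (-(2*M-2)/(2*M-1)) = p ^ ((1:ℝ)/(2*M-1)) * p⁻¹ := by
    rw [← Real.rpow_neg_one p, ← Real.rpow_add hp]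
    congr 1
    field_simp; ring
  have hB : 0 < A ^ (-(1:ℝ)/(2*M)) * p ^ ((1:ℝ)/(2*M-1)) := by positivity
  rw [e1, e2]
  constructor
  · intro h
    have h' : (A ^ (-(1:ℝ)/(2*M)) * p ^ ((1:ℝ)/(2*M-1))) *
        (-(1/(2*M-1)) * A⁻¹ * p⁻¹ * w - lam / x) = 0 := by
      rw [← h]; ring
    have h'' : -(1/(2*M-1)) * A⁻¹ * p⁻¹ * w - lam / x = 0 :=
      by rcases mul_eq_zero.1 h' with h0 | h0
         · exact absurd h0 hB.ne'
         · exact h0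
    field_simp at h''
    field_simp
    linarith
  · intro h
    subst h
    field_simp
    ring

lemma hlw_deriv_zero (M lam x p pp : ℝ) (hM : (2:ℝ) ≤ M) (hx : 0 < x) (hp : 0 < p)
    (hode : pp = -((2*M-1) * lam * p * (1 + p ^ ((2*M)/(2*M-1)))) / x) :
    pp * (-((2*M)/(2*M-1)) * p ^ (-((2*M)/(2*M-1)) - 1)) * x ^ (-(2*M*lam)) +
      (1 + p ^ (-((2*M)/(2*M-1)))) * (-(2*M*lam) * x ^ (-(2*M*lam) - 1)) = 0 := by
  have h1 : (0:ℝ) < 2*M - 1 := by linarith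
  have h2 : (0:ℝ) < 2*M := by linarith
  have eP : p ^ ((2*M)/(2*M-1)) = (p ^ (-((2*M)/(2*M-1))))⁻¹ := by
    rw [← Real.rpow_neg hp.le, neg_neg]
  have ep1 : p ^ (-((2*M)/(2*M-1)) - 1) = p ^ (-((2*M)/(2*M-1))) * p⁻¹ := by
    rw [← Real.rpow_neg_one p, ← Real.rpow_add hp, sub_eq_add_neg]
  have ex1 : x ^ (-(2*M*lam) - 1) = x ^ (-(2*M*lam)) * x⁻¹ := by
    rw [← Real.rpow_neg_one x, ← Real.rpow_add hx, sub_eq_add_neg]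
  set P := p ^ (-((2*M)/(2*M-1))) with hPdef
  have hP : 0 < P := by positivity
  have hXs : 0 < x ^ (-(2*M*lam)) := by positivity
  rw [hode, eP, ep1, ex1]
  field_simp
  ring

lemma hlw_backward_calc (M lam x c₂ : ℝ) (hM : (2:ℝ) ≤ M) (hx : 0 < x) (hc : 0 < c₂)
    (hlt : c₂ ^ (2*M*lam) < x ^ (2*M*lam)) :
    c₂ ^ ((2*M-1)*lam) *
        ((2*M*lam) * x ^ (2*M*lam - 1) * (-(2*M-1)/(2*M)) *
          (x ^ (2*M*lam) - c₂ ^ (2*M*lam)) ^ (-(2*M-1)/(2*M) - 1)) =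
      -((2*M-1) * lam *
          (c₂ ^ ((2*M-1)*lam) * (x ^ (2*M*lam) - c₂ ^ (2*M*lam)) ^ (-(2*M-1)/(2*M))) *
          (1 + (c₂ ^ ((2*M-1)*lam) * (x ^ (2*M*lam) - c₂ ^ (2*M*lam)) ^ (-(2*M-1)/(2*M)))
              ^ ((2*M)/(2*M-1)))) / x := by
  have h1 : (0:ℝ) < 2*M - 1 := by linarith
  have h2 : (0:ℝ) < 2*M := by linarith
  set w := x ^ (2*M*lam) - c₂ ^ (2*M*lam) with hwdef
  have hw : 0 < w := sub_pos.2 hlt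
  have hCb : 0 < c₂ ^ ((2*M-1)*lam) := rpow_pos_of_pos hc _
  have hWδ : 0 < w ^ (-(2*M-1)/(2*M)) := rpow_pos_of_pos hw _
  -- p ^ (2M/(2M-1)) = c₂^(2Mλ) * w⁻¹
  have key : (c₂ ^ ((2*M-1)*lam) * w ^ (-(2*M-1)/(2*M))) ^ ((2*M)/(2*M-1))
      = c₂ ^ (2*M*lam) * w⁻¹ := by
    rw [Real.mul_rpow hCb.le hWδ.le, ← Real.rpow_mul hc.le, ← Real.rpow_mul hw.le]
    have e1 : (2*M-1)*lam * ((2*M)/(2*M-1)) = 2*M*lam := by field_simp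
    have e2 : -(2*M-1)/(2*M) * ((2*M)/(2*M-1)) = -1 := by field_simp
    rw [e1, e2, Real.rpow_neg_one]
  have exγ : x ^ (2*M*lam - 1) = (w + c₂ ^ (2*M*lam)) * x⁻¹ := by
    rw [Real.rpow_sub hx, Real.rpow_one, div_eq_mul_inv, hwdef]; ring_nf
  have ewδ : w ^ (-(2*M-1)/(2*M) - 1) = w ^ (-(2*M-1)/(2*M)) * w⁻¹ := by
    rw [Real.rpow_sub hw, Real.rpow_one, div_eq_mul_inv]
  rw [key, exγ, ewδ]
  field_simp


/-- (Theorem 5.1) The rotational surface `X(α,v) = (α cos v, α sin v, u(α))` satisfies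
`k₁ + λk₂ = 0` for a nonzero constant `λ` if and only if there is a positive constant
`c₂` with `u'(α) = c₂^{(2m−1)λ} (α^{2mλ} − c₂^{2mλ})^{−(2m−1)/(2m)}`. -/
theorem homogeneous_linear_Weingarten_iff (m : ℕ) (hm : 2 ≤ m) (a b : ℝ)
    (hI : Set.Ioo a b ⊆ Set.Ioi (0 : ℝ)) (u : ℝ → ℝ)
    (hu : ContDiffOn ℝ 2 u (Set.Ioo a b))
    (hu' : ∀ x ∈ Set.Ioo a b, 0 < deriv u x)
    (lam : ℝ) (hlam : lam ≠ 0)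
    (k₁ k₂ : ℝ → ℝ)
    (hk₁ : ∀ x, k₁ x =
      -(1 / (2 * (m : ℝ) - 1)) *
        (1 + deriv u x ^ ((2 * (m : ℝ)) / (2 * (m : ℝ) - 1)))
          ^ (-(2 * (m : ℝ) + 1) / (2 * (m : ℝ))) *
        deriv u x ^ (-(2 * (m : ℝ) - 2) / (2 * (m : ℝ) - 1)) *
        deriv (deriv u) x)
    (hk₂ : ∀ x, k₂ x =
      -(1 / x) * (1 + deriv u x ^ ((2 * (m : ℝ)) / (2 * (m : ℝ) - 1)))
          ^ (-(1 : ℝ) / (2 * (m : ℝ))) *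
        deriv u x ^ ((1 : ℝ) / (2 * (m : ℝ) - 1))) :
    (∀ x ∈ Set.Ioo a b, k₁ x + lam * k₂ x = 0) ↔
    ∃ c₂ : ℝ, 0 < c₂ ∧ ∀ x ∈ Set.Ioo a b,
      c₂ ^ (2 * (m : ℝ) * lam) < x ^ (2 * (m : ℝ) * lam) ∧
      deriv u x = c₂ ^ ((2 * (m : ℝ) - 1) * lam) *
        (x ^ (2 * (m : ℝ) * lam) - c₂ ^ (2 * (m : ℝ) * lam))
          ^ (-(2 * (m : ℝ) - 1) / (2 * (m : ℝ))) := by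
  have hM : (2:ℝ) ≤ (m:ℝ) := by exact_mod_cast hm
  have h1 : (0:ℝ) < 2*(m:ℝ) - 1 := by linarith
  have h2 : (0:ℝ) < 2*(m:ℝ) := by linarith
  -- Step 1: reformulate the Weingarten condition as an explicit ODE for `deriv u`.
  have hODE : (∀ x ∈ Set.Ioo a b, k₁ x + lam * k₂ x = 0) ↔
      ∀ x ∈ Set.Ioo a b, deriv (deriv u) x =
        -((2*(m:ℝ)-1) * lam * deriv u x *
          (1 + deriv u x ^ ((2*(m:ℝ))/(2*(m:ℝ)-1)))) / x := by
    constructor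
    · intro h x hx
      have hh := h x hx
      rw [hk₁, hk₂] at hh
      exact (hlw_aux_pointwise (m:ℝ) lam x (deriv u x) (deriv (deriv u) x)
        hM (hI hx) (hu' x hx)).1 hh
    · intro h x hx
      rw [hk₁, hk₂]
      exact (hlw_aux_pointwise (m:ℝ) lam x (deriv u x) (deriv (deriv u) x)
        hM (hI hx) (hu' x hx)).2 (h x hx)
  rw [hODE]
  constructor
  · -- forward: solve the ODE
    intro hode
    by_cases hne : (Set.Ioo a b).Nonempty
    · obtain ⟨x₀, hx₀⟩ := hne
      set r : ℝ := -((2*(m:ℝ))/(2*(m:ℝ)-1)) with hrdef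
      set s : ℝ := -(2*(m:ℝ)*lam) with hsdef
      set h : ℝ → ℝ := fun y => (1 + (deriv u y) ^ r) * y ^ s with hhdef
      have hp2 : ∀ x ∈ Set.Ioo a b, HasDerivAt (deriv u) (deriv (deriv u) x) x := by
        intro x hx
        have h1' : ContDiffOn ℝ 1 (deriv u) (Set.Ioo a b) :=
          hu.deriv_of_isOpen isOpen_Ioo (by norm_num)
        exact ((h1'.differentiableOn (by norm_num)).differentiableAt
          (isOpen_Ioo.mem_nhds hx)).hasDerivAt
      have hd0 : ∀ x ∈ Set.Ioo a b, HasDerivAt h 0 x := by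
        intro x hx
        have hx0 : 0 < x := hI hx
        have hp : 0 < deriv u x := hu' x hx
        have H1 : HasDerivAt (fun y => 1 + (deriv u y) ^ r)
            (deriv (deriv u) x * r * (deriv u x) ^ (r - 1)) x :=
          ((hp2 x hx).rpow_const (Or.inl hp.ne')).const_add 1
        have H2 : HasDerivAt (fun y : ℝ => y ^ s) (s * x ^ (s - 1)) x :=
          Real.hasDerivAt_rpow_const (Or.inl hx0.ne')
        have H := H1.mul H2
        have hval := hlw_deriv_zero (m:ℝ) lam x (deriv u x) (deriv (deriv u) x)
          hM hx0 hp (hode x hx)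
        refine H.congr_deriv ?_
        rw [hrdef, hsdef]
        rw [← hval]
        ring
      have hdiff : DifferentiableOn ℝ h (Set.Ioo a b) :=
        fun x hx => ((hd0 x hx).differentiableAt).differentiableWithinAt
      have hfd : ∀ x ∈ Set.Ioo a b, fderivWithin ℝ h (Set.Ioo a b) x = 0 := by
        intro x hx
        rw [fderivWithin_of_isOpen isOpen_Ioo hx, (hd0 x hx).hasFDerivAt.fderiv]
        ext
        simp
      have hconst : ∀ x ∈ Set.Ioo a b, h x = h x₀ := fun x hx =>
        (convex_Ioo a b).is_const_of_fderivWithin_eq_zero hdiff hfd hx hx₀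
      have hx₀0 : 0 < x₀ := hI hx₀
      have hp₀ : 0 < deriv u x₀ := hu' x₀ hx₀
      have hC : 0 < h x₀ := by
        rw [hhdef]
        positivity
      set C := h x₀ with hCdef
      have hml : 2*(m:ℝ)*lam ≠ 0 := mul_ne_zero (by positivity) hlam
      refine ⟨C ^ (-(1/(2*(m:ℝ)*lam))), Real.rpow_pos_of_pos hC _, fun x hx => ?_⟩
      set c₂ := C ^ (-(1/(2*(m:ℝ)*lam))) with hc₂def
      have hc2a : c₂ ^ (2*(m:ℝ)*lam) = C⁻¹ := by
        rw [hc₂def, ← Real.rpow_mul hC.le]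
        rw [show -(1/(2*(m:ℝ)*lam)) * (2*(m:ℝ)*lam) = -1 by field_simp]
        exact Real.rpow_neg_one C
      have hc2b : c₂ ^ ((2*(m:ℝ)-1)*lam) = C ^ (-(2*(m:ℝ)-1)/(2*(m:ℝ))) := by
        rw [hc₂def, ← Real.rpow_mul hC.le]
        congr 1
        field_simp
      have hx0 : 0 < x := hI hx
      have hp : 0 < deriv u x := hu' x hx
      have hPpos : 0 < (deriv u x) ^ r := Real.rpow_pos_of_pos hp _
      have hxs : x ^ s * x ^ (2*(m:ℝ)*lam) = 1 := by
        rw [← Real.rpow_add hx0, hsdef, neg_add_cancel, Real.rpow_zero]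
      have hq : 1 + (deriv u x) ^ r = C * x ^ (2*(m:ℝ)*lam) := by
        calc 1 + (deriv u x) ^ r
            = ((1 + (deriv u x) ^ r) * x ^ s) * x ^ (2*(m:ℝ)*lam) := by
              rw [mul_assoc, hxs, mul_one]
          _ = C * x ^ (2*(m:ℝ)*lam) :=
              congrArg (· * x ^ (2*(m:ℝ)*lam)) (hconst x hx)
      have hxg : 0 < x ^ (2*(m:ℝ)*lam) := Real.rpow_pos_of_pos hx0 _
      have hlt : c₂ ^ (2*(m:ℝ)*lam) < x ^ (2*(m:ℝ)*lam) := by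
        rw [hc2a, inv_eq_one_div, div_lt_iff₀ hC]
        nlinarith
      refine ⟨hlt, ?_⟩
      have hw' : x ^ (2*(m:ℝ)*lam) - c₂ ^ (2*(m:ℝ)*lam) = C⁻¹ * (deriv u x) ^ r := by
        rw [hc2a]
        field_simp
        nlinarith [hq]
      rw [hc2b, hw']
      rw [Real.mul_rpow (by positivity) hPpos.le]
      rw [Real.inv_rpow hC.le, ← Real.rpow_neg hC.le]
      rw [← Real.rpow_mul hp.le]
      rw [show r * (-(2*(m:ℝ)-1)/(2*(m:ℝ))) = 1 by rw [hrdef]; field_simp]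
      rw [Real.rpow_one, ← mul_assoc, ← Real.rpow_add hC]
      rw [show -(2*(m:ℝ)-1)/(2*(m:ℝ)) + -(-(2*(m:ℝ)-1)/(2*(m:ℝ))) = 0 by ring]
      rw [Real.rpow_zero, one_mul]
    · rw [Set.not_nonempty_iff_eq_empty] at hne
      exact ⟨1, one_pos, by simp [hne]⟩
  · -- backward: verify the ODE for the explicit solution
    rintro ⟨c₂, hc, hsol⟩ x hx
    have hx0 : 0 < x := hI hx
    have hw : 0 < x ^ (2*(m:ℝ)*lam) - c₂ ^ (2*(m:ℝ)*lam) := sub_pos.2 (hsol x hx).1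
    have heq : deriv u =ᶠ[nhds x] fun y =>
        c₂ ^ ((2*(m:ℝ)-1)*lam) *
          (y ^ (2*(m:ℝ)*lam) - c₂ ^ (2*(m:ℝ)*lam)) ^ (-(2*(m:ℝ)-1)/(2*(m:ℝ))) :=
      Filter.eventuallyEq_of_mem (isOpen_Ioo.mem_nhds hx) (fun y hy => (hsol y hy).2)
    have Hin : HasDerivAt (fun y : ℝ => y ^ (2*(m:ℝ)*lam) - c₂ ^ (2*(m:ℝ)*lam))
        ((2*(m:ℝ)*lam) * x ^ (2*(m:ℝ)*lam - 1)) x :=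
      (Real.hasDerivAt_rpow_const (Or.inl hx0.ne')).sub_const _
    have Hpow := Hin.rpow_const (p := -(2*(m:ℝ)-1)/(2*(m:ℝ))) (Or.inl hw.ne')
    have Hφ := Hpow.const_mul (c₂ ^ ((2*(m:ℝ)-1)*lam))
    have hder : deriv (deriv u) x =
        c₂ ^ ((2*(m:ℝ)-1)*lam) *
          ((2*(m:ℝ)*lam) * x ^ (2*(m:ℝ)*lam - 1) * (-(2*(m:ℝ)-1)/(2*(m:ℝ))) *
            (x ^ (2*(m:ℝ)*lam) - c₂ ^ (2*(m:ℝ)*lam)) ^ (-(2*(m:ℝ)-1)/(2*(m:ℝ)) - 1)) := by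
      rw [heq.deriv_eq]
      exact Hφ.deriv
    rw [hder, (hsol x hx).2]
    exact hlw_backward_calc (m:ℝ) lam x c₂ hM hx0 hc (hsol x hx).1
end

section
/- Let λ satisfy 0 < (2m−1)λ ≤ 1 and let c₂ > 0. Then the function F(ρ) = c₂^{(2m−1)λ} · (ρ^{2mλ} − c₂^{2mλ})^{−(2m−1)/(2m)} is not integrable on (c₂, ∞); more precisely, lim_{α→∞} ∫_{c₂}^{α} F(ρ) dρ = ∞. -/
open Real Set MeasureTheory Filter

/-- For `0 < (2m−1)λ ≤ 1` and `c₂ > 0`, the function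
`F(ρ) = c₂^{(2m−1)λ} (ρ^{2mλ} − c₂^{2mλ})^{−(2m−1)/(2m)}` is not integrable on
`(c₂, ∞)`; more precisely, `∫_{c₂}^{α} F(ρ) dρ → ∞` as `α → ∞`. -/
theorem not_integrable_on_Ioi_of_small_lambda (m : ℕ) (hm : 2 ≤ m) (lam c₂ : ℝ)
    (hlam₀ : 0 < (2 * (m : ℝ) - 1) * lam) (hlam₁ : (2 * (m : ℝ) - 1) * lam ≤ 1)
    (hc : 0 < c₂)
    (F : ℝ → ℝ)
    (hF : ∀ ρ, F ρ = c₂ ^ ((2 * (m : ℝ) - 1) * lam) *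
      (ρ ^ (2 * (m : ℝ) * lam) - c₂ ^ (2 * (m : ℝ) * lam))
        ^ (-(2 * (m : ℝ) - 1) / (2 * (m : ℝ)))) :
    ¬ MeasureTheory.IntegrableOn F (Set.Ioi c₂) ∧
    Filter.Tendsto (fun α => ∫ ρ in Set.Ioo c₂ α, F ρ) Filter.atTop Filter.atTop := by
  have hm2 : (2:ℝ) ≤ (m:ℝ) := by exact_mod_cast hm
  have hm1 : (0:ℝ) < 2 * (m:ℝ) - 1 := by linarith
  have hm0 : (0:ℝ) < 2 * (m:ℝ) := by linarith
  have hlam : 0 < lam := by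
    by_contra h; push_neg at h; nlinarith
  set a : ℝ := 2 * (m:ℝ) * lam with ha_def
  set b : ℝ := (2 * (m:ℝ) - 1) / (2 * (m:ℝ)) with hb_def
  set C : ℝ := c₂ ^ ((2 * (m:ℝ) - 1) * lam) with hC_def
  have ha : 0 < a := by positivity
  have hb0 : 0 < b := by positivity
  have hb1 : b < 1 := by
    rw [hb_def, div_lt_one hm0]; linarith
  have hab : a * b = (2 * (m:ℝ) - 1) * lam := by
    rw [ha_def, hb_def]; field_simp
  have hC : 0 < C := by positivity
  -- rewrite F
  have hF' : ∀ ρ, F ρ = C * (ρ ^ a - c₂ ^ a) ^ (-b) := by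
    intro ρ
    rw [hF ρ, hC_def, ha_def, hb_def, neg_div]
  -- positivity of the inner expression
  have hg : ∀ ρ, c₂ < ρ → 0 < ρ ^ a - c₂ ^ a := by
    intro ρ hρ
    have := Real.rpow_lt_rpow hc.le hρ ha
    linarith
  have hFpos : ∀ ρ, c₂ < ρ → 0 < F ρ := by
    intro ρ hρ
    rw [hF' ρ]
    exact mul_pos hC (Real.rpow_pos_of_pos (hg ρ hρ) _)
  -- continuity of F on Ioi c₂
  have hcont : ContinuousOn F (Ioi c₂) := by
    have h1 : ContinuousOn (fun ρ : ℝ => (ρ ^ a - c₂ ^ a) ^ (-b)) (Ioi c₂) := by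
      apply ContinuousOn.rpow_const
      · exact (continuousOn_id.rpow_const fun x hx =>
          Or.inl (ne_of_gt (hc.trans hx))).sub continuousOn_const
      · intro x hx
        exact Or.inl (ne_of_gt (hg x hx))
    have : ContinuousOn (fun ρ : ℝ => C * (ρ ^ a - c₂ ^ a) ^ (-b)) (Ioi c₂) :=
      continuousOn_const.mul h1
    exact this.congr fun x _ => hF' x
  -- lower bound on ρ^a - c₂^a near c₂ (mean value theorem)
  set δ : ℝ := a * min (c₂ ^ (a - 1)) ((c₂ + 1) ^ (a - 1)) with hδ_def
  have hδ : 0 < δ := by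
    apply mul_pos ha
    exact lt_min (Real.rpow_pos_of_pos hc _) (Real.rpow_pos_of_pos (by linarith) _)
  have hlow : ∀ ρ ∈ Ioo c₂ (c₂ + 1), δ * (ρ - c₂) ≤ ρ ^ a - c₂ ^ a := by
    intro ρ hρ
    obtain ⟨hρ1, hρ2⟩ := hρ
    obtain ⟨ξ, hξ, hslope⟩ := exists_hasDerivAt_eq_slope (fun x : ℝ => x ^ a)
      (fun x : ℝ => a * x ^ (a - 1)) hρ1
      ((continuousOn_id.rpow_const fun x hx =>
        Or.inl (ne_of_gt (lt_of_lt_of_le hc hx.1))))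
      (fun x hx => Real.hasDerivAt_rpow_const (Or.inl (ne_of_gt (hc.trans hx.1))))
    have hξpos : 0 < ξ := hc.trans hξ.1
    have hmin : min (c₂ ^ (a - 1)) ((c₂ + 1) ^ (a - 1)) ≤ ξ ^ (a - 1) := by
      rcases le_or_gt 1 a with h1 | h1
      · exact le_trans (min_le_left _ _)
          (Real.rpow_le_rpow hc.le hξ.1.le (by linarith))
      · exact le_trans (min_le_right _ _)
          (Real.rpow_le_rpow_of_nonpos hξpos (by linarith [hξ.2]) (by linarith))
    have heq : ρ ^ a - c₂ ^ a = a * ξ ^ (a - 1) * (ρ - c₂) := by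
      have hne : ρ - c₂ ≠ 0 := by linarith
      rw [eq_div_iff hne] at hslope
      linarith [hslope]
    rw [heq]
    have : δ ≤ a * ξ ^ (a - 1) := by
      rw [hδ_def]
      exact mul_le_mul_of_nonneg_left hmin ha.le
    exact mul_le_mul_of_nonneg_right this (by linarith)
  -- integrability of F on every Ioo c₂ α
  have key : ∀ α : ℝ, IntegrableOn F (Ioo c₂ α) := by
    intro α
    have hnear : IntegrableOn F (Ioo c₂ (c₂ + 1)) := by
      have hbd : IntegrableOn (fun ρ => C * δ ^ (-b) * (ρ - c₂) ^ (-b))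
          (Ioo c₂ (c₂ + 1)) := by
        have h0 : IntervalIntegrable (fun x : ℝ => x ^ (-b)) volume 0 1 :=
          intervalIntegral.intervalIntegrable_rpow' (by linarith)
        have h1 : IntervalIntegrable (fun x : ℝ => (x - c₂) ^ (-b)) volume c₂ (c₂ + 1) := by
          have := h0.comp_sub_right c₂
          simpa [add_comm] using this
        have h2 := (h1.const_mul (C * δ ^ (-b))).1
        exact h2.mono_set Ioo_subset_Ioc_self
      apply Integrable.mono' hbd
      · exact (hcont.mono Ioo_subset_Ioi_self).aestronglyMeasurable measurableSet_Ioo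
      · filter_upwards [ae_restrict_mem measurableSet_Ioo] with ρ hρ
        have hgρ := hg ρ hρ.1
        have hl := hlow ρ hρ
        have hpos : 0 < δ * (ρ - c₂) := by
          apply mul_pos hδ; linarith [hρ.1]
        rw [Real.norm_eq_abs, abs_of_pos (hFpos ρ hρ.1), hF' ρ]
        have : (ρ ^ a - c₂ ^ a) ^ (-b) ≤ (δ * (ρ - c₂)) ^ (-b) :=
          Real.rpow_le_rpow_of_nonpos hpos hl (by linarith)
        have hmr : (δ * (ρ - c₂)) ^ (-b) = δ ^ (-b) * (ρ - c₂) ^ (-b) :=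
          Real.mul_rpow hδ.le (by linarith [hρ.1])
        rw [hmr] at this
        calc C * (ρ ^ a - c₂ ^ a) ^ (-b) ≤ C * (δ ^ (-b) * (ρ - c₂) ^ (-b)) :=
              mul_le_mul_of_nonneg_left this hC.le
          _ = C * δ ^ (-b) * (ρ - c₂) ^ (-b) := by ring
    have hfar : IntegrableOn F (Icc (c₂ + 1) (max α (c₂ + 1))) := by
      apply ContinuousOn.integrableOn_Icc
      apply hcont.mono
      intro x hx
      exact lt_of_lt_of_le (by linarith) hx.1
    have hsub : Ioo c₂ α ⊆ Ioo c₂ (c₂ + 1) ∪ Icc (c₂ + 1) (max α (c₂ + 1)) := by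
      intro x hx
      rcases lt_or_ge x (c₂ + 1) with h | h
      · exact Or.inl ⟨hx.1, h⟩
      · exact Or.inr ⟨h, le_trans hx.2.le (le_max_left _ _)⟩
    exact (hnear.union hfar).mono_set hsub
  -- tail lower bound
  set R : ℝ := max c₂ 1 with hR_def
  have hRc : c₂ ≤ R := le_max_left _ _
  have hR1 : (1:ℝ) ≤ R := le_max_right _ _
  have hR0 : (0:ℝ) < R := lt_of_lt_of_le one_pos hR1
  have htail : ∀ ρ ∈ Ioi R, C * ρ⁻¹ ≤ F ρ := by
    intro ρ hρ
    have hρc : c₂ < ρ := lt_of_le_of_lt hRc hρ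
    have hρ1 : (1:ℝ) ≤ ρ := le_of_lt (lt_of_le_of_lt hR1 hρ)
    have hρ0 : (0:ℝ) < ρ := lt_of_lt_of_le one_pos hρ1
    have hgρ := hg ρ hρc
    have h1 : ρ ^ a - c₂ ^ a ≤ ρ ^ a := by
      have := Real.rpow_pos_of_pos hc a; linarith
    have h2 : (ρ ^ a) ^ (-b) ≤ (ρ ^ a - c₂ ^ a) ^ (-b) :=
      Real.rpow_le_rpow_of_nonpos hgρ h1 (by linarith)
    have h3 : (ρ ^ a) ^ (-b) = ρ ^ (-(a * b)) := by
      rw [← Real.rpow_mul hρ0.le, mul_neg]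
    have h4 : ρ ^ (-(1:ℝ)) ≤ ρ ^ (-(a * b)) := by
      apply Real.rpow_le_rpow_of_exponent_le hρ1
      rw [hab]; linarith
    have h5 : ρ ^ (-(1:ℝ)) = ρ⁻¹ := Real.rpow_neg_one ρ
    rw [hF' ρ]
    calc C * ρ⁻¹ = C * ρ ^ (-(1:ℝ)) := by rw [h5]
      _ ≤ C * (ρ ^ a) ^ (-b) := by
          apply mul_le_mul_of_nonneg_left _ hC.le
          rw [h3]; exact h4
      _ ≤ C * (ρ ^ a - c₂ ^ a) ^ (-b) := mul_le_mul_of_nonneg_left h2 hC.le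
  constructor
  · -- non-integrability
    intro h
    have hFR : IntegrableOn F (Ioi R) := h.mono (Ioi_subset_Ioi hRc) le_rfl
    have hinv : IntegrableOn (fun ρ : ℝ => C * ρ⁻¹) (Ioi R) := by
      apply hFR.mono' ((measurable_const.mul measurable_inv).aestronglyMeasurable)
      filter_upwards [ae_restrict_mem measurableSet_Ioi] with ρ hρ
      have hρ0 : (0:ℝ) < ρ := lt_of_lt_of_le one_pos (le_of_lt (lt_of_le_of_lt hR1 hρ))
      show ‖C * ρ⁻¹‖ ≤ F ρ
      rw [Real.norm_eq_abs, abs_of_pos (mul_pos hC (inv_pos.mpr hρ0))]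
      exact htail ρ hρ
    have : IntegrableOn (fun ρ : ℝ => ρ⁻¹) (Ioi R) := by
      have h := hinv.const_mul C⁻¹
      have heq : (fun ρ : ℝ => C⁻¹ * (C * ρ⁻¹)) = fun ρ : ℝ => ρ⁻¹ := by
        funext ρ; rw [inv_mul_cancel_left₀ (ne_of_gt hC)]
      rwa [heq] at h
    exact not_IntegrableOn_Ioi_inv this
  · -- divergence of the integral
    have hlb : ∀ α : ℝ, R ≤ α → C * Real.log (α / R) ≤ ∫ ρ in Ioo c₂ α, F ρ := by
      intro α hα
      have hFα : IntegrableOn F (Ioo R α) :=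
        (key α).mono_set (Ioo_subset_Ioo_left hRc)
      have hinvα : IntegrableOn (fun ρ : ℝ => C * ρ⁻¹) (Ioo R α) := by
        apply ((continuousOn_const.mul (continuousOn_inv₀.mono ?_)).integrableOn_Icc).mono_set
          Ioo_subset_Icc_self
        intro x hx
        exact ne_of_gt (lt_of_lt_of_le hR0 hx.1)
      have step1 : ∫ ρ in Ioo R α, C * ρ⁻¹ ≤ ∫ ρ in Ioo R α, F ρ := by
        apply setIntegral_mono_on hinvα hFα measurableSet_Ioo
        intro x hx
        exact htail x hx.1
      have step2 : ∫ ρ in Ioo R α, F ρ ≤ ∫ ρ in Ioo c₂ α, F ρ := by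
        apply setIntegral_mono_set (key α)
        · filter_upwards [ae_restrict_mem measurableSet_Ioo] with ρ hρ
          exact (hFpos ρ hρ.1).le
        · exact HasSubset.Subset.eventuallyLE (Ioo_subset_Ioo_left hRc)
      have hcomp : ∫ ρ in Ioo R α, C * ρ⁻¹ = C * Real.log (α / R) := by
        rw [← integral_Ioc_eq_integral_Ioo, ← intervalIntegral.integral_of_le hα,
          intervalIntegral.integral_const_mul, integral_inv_of_pos hR0 (lt_of_lt_of_le hR0 hα)]
      linarith [step1, step2, hcomp.ge]
    have hlog : Tendsto (fun α : ℝ => C * Real.log (α / R)) atTop atTop := by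
      apply Tendsto.const_mul_atTop hC
      exact Real.tendsto_log_atTop.comp (tendsto_id.atTop_div_const hR0)
    apply tendsto_atTop_mono' atTop _ hlog
    filter_upwards [eventually_ge_atTop R] with α hα
    exact hlb α hα
end

section
/- (Theorem 5.3) Let λ satisfy 0 < (2m−1)λ ≤ 1, let c₂ > 0 and c₃ ∈ ℝ. Then there exists a C² function α̂ : ℝ → ℝ such that: α̂(u) ≥ c₂ for all u, α̂(c₃) = c₂, α̂'(c₃) = 0, α̂'(u) > 0 for u > c₃, α̂'(u) < 0 for u < c₃, lim_{u→±∞} α̂(u) = ∞, and α̂ satisfies the differential equation α̂(u)·α̂''(u) = (2m−1)λ·( α̂'(u)² + |α̂'(u)|^{(2m−2)/(2m−1)} ) for all u ∈ ℝ. Consequently, the rotational surface (α̂(u) cos v, α̂(u) sin v, u) satisfies k₁ + λk₂ = 0 at every point where α̂' ≠ 0. -/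
open Real Set Filter Topology MeasureTheory intervalIntegral

namespace Thm53

noncomputable def Gf (c₂ q K : ℝ) (a : ℝ) : ℝ := ((a / c₂) ^ (q * K) - 1) ^ (1/q)

variable {c₂ q K : ℝ}

lemma qpos (hq1 : 1 < q) : 0 < q := lt_trans one_pos hq1

lemma G_cont (hq1 : 1 < q) (hK0 : 0 < K) : Continuous (Gf c₂ q K) := by
  have h1 : Continuous fun a : ℝ => (a / c₂) ^ (q*K) - 1 := by
    refine Continuous.sub ?_ continuous_const
    refine continuous_iff_continuousAt.2 fun a => ?_
    exact (Real.continuousAt_rpow_const _ _ (Or.inr (mul_pos (qpos hq1) hK0).le)).comp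
      ((continuous_id.div_const c₂).continuousAt)
  refine continuous_iff_continuousAt.2 fun a => ?_
  exact (Real.continuousAt_rpow_const _ _ (Or.inr (by positivity))).comp h1.continuousAt

lemma G_left (hc : 0 < c₂) (hq1 : 1 < q) : Gf c₂ q K c₂ = 0 := by
  have h : (c₂ / c₂ : ℝ) = 1 := div_self hc.ne'
  have hq : (1/q : ℝ) ≠ 0 := by positivity
  unfold Gf
  rw [h, Real.one_rpow, sub_self, Real.zero_rpow hq]

lemma inner_pos (hc : 0 < c₂) (hq1 : 1 < q) (hK0 : 0 < K) {a : ℝ} (ha : c₂ < a) :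
    0 < (a / c₂) ^ (q * K) - 1 := by
  have h1 : 1 < a / c₂ := (one_lt_div hc).2 ha
  have := (Real.one_lt_rpow_iff_of_pos (lt_trans one_pos h1)).2
    (Or.inl ⟨h1, mul_pos (qpos hq1) hK0⟩)
  linarith

lemma inner_nonneg (hc : 0 < c₂) (hq1 : 1 < q) (hK0 : 0 < K) {a : ℝ} (ha : c₂ ≤ a) :
    0 ≤ (a / c₂) ^ (q * K) - 1 := by
  rcases eq_or_lt_of_le ha with h | h
  · simp [← h, div_self hc.ne']
  · exact (inner_pos hc hq1 hK0 h).le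

lemma G_pos (hc : 0 < c₂) (hq1 : 1 < q) (hK0 : 0 < K) {a : ℝ} (ha : c₂ < a) :
    0 < Gf c₂ q K a :=
  Real.rpow_pos_of_pos (inner_pos hc hq1 hK0 ha) _

lemma G_nonneg (hc : 0 < c₂) (hq1 : 1 < q) (hK0 : 0 < K) {a : ℝ} (ha : c₂ ≤ a) :
    0 ≤ Gf c₂ q K a :=
  Real.rpow_nonneg (inner_nonneg hc hq1 hK0 ha) _

lemma G_mono (hc : 0 < c₂) (hq1 : 1 < q) (hK0 : 0 < K) {a b : ℝ} (ha : c₂ ≤ a) (hab : a ≤ b) :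
    Gf c₂ q K a ≤ Gf c₂ q K b := by
  unfold Gf
  have ha0 : (0:ℝ) ≤ a / c₂ := div_nonneg (le_trans hc.le ha) hc.le
  have h1 : (a / c₂) ^ (q*K) ≤ (b / c₂) ^ (q*K) :=
    Real.rpow_le_rpow ha0 (by gcongr) (mul_pos (qpos hq1) hK0).le
  exact Real.rpow_le_rpow (inner_nonneg hc hq1 hK0 ha) (by linarith) (by positivity)

-- G a ^ q = (a/c₂)^(q K) - 1  for a ≥ c₂ (real exponent q)
lemma G_rpow_q (hc : 0 < c₂) (hq1 : 1 < q) (hK0 : 0 < K) {a : ℝ} (ha : c₂ ≤ a) :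
    Gf c₂ q K a ^ q = (a / c₂) ^ (q * K) - 1 := by
  unfold Gf
  rw [← Real.rpow_mul (inner_nonneg hc hq1 hK0 ha), one_div,
    inv_mul_cancel₀ (qpos hq1).ne', Real.rpow_one]

-- upper bound  G a ≤ a / c₂  (uses K ≤ 1)
lemma G_le_linear (hc : 0 < c₂) (hq1 : 1 < q) (hK0 : 0 < K) (hK1 : K ≤ 1) {a : ℝ}
    (ha : c₂ ≤ a) : Gf c₂ q K a ≤ a / c₂ := by
  have hb : (1:ℝ) ≤ a / c₂ := (one_le_div hc).2 ha
  have h1 : (a / c₂) ^ (q*K) - 1 ≤ (a / c₂) ^ q := by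
    have : (a / c₂) ^ (q*K) ≤ (a / c₂) ^ q :=
      Real.rpow_le_rpow_of_exponent_le hb (by nlinarith [qpos hq1])
    have h2 : (0:ℝ) < (a / c₂) ^ q := Real.rpow_pos_of_pos (by positivity) _
    linarith
  calc Gf c₂ q K a ≤ ((a / c₂) ^ q) ^ (1/q) :=
        Real.rpow_le_rpow (inner_nonneg hc hq1 hK0 ha) h1 (by positivity)
    _ = a / c₂ := by
        rw [← Real.rpow_mul (by positivity), mul_one_div, div_self (qpos hq1).ne',
          Real.rpow_one]

-- derivative of G at a > c₂
lemma G_hasDeriv (hc : 0 < c₂) (hq1 : 1 < q) (hK0 : 0 < K) {a : ℝ} (ha : c₂ < a) :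
    HasDerivAt (Gf c₂ q K)
      (K * (Gf c₂ q K a ^ 2 + Gf c₂ q K a ^ (2 - q)) / (a * Gf c₂ q K a)) a := by
  have ha0 : 0 < a := lt_trans hc ha
  have hb : 0 < a / c₂ := by positivity
  have hF : HasDerivAt (fun x : ℝ => (x / c₂) ^ (q*K) - 1)
      (q*K * (a / c₂) ^ (q*K - 1) * (1/c₂)) a := by
    have h1 : HasDerivAt (fun x : ℝ => x / c₂) (1/c₂) a := by
      simpa [one_div] using (hasDerivAt_id a).div_const c₂
    have h2 := (h1.rpow_const (p := q*K) (Or.inl hb.ne')).sub_const 1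
    exact h2.congr_deriv (by ring)
  have hFa : 0 < (a / c₂) ^ (q*K) - 1 := inner_pos hc hq1 hK0 ha
  set F := (a / c₂) ^ (q*K) - 1 with hFdef
  have hG : HasDerivAt (Gf c₂ q K)
      ((q*K * (a / c₂) ^ (q*K - 1) * (1/c₂)) * (1/q) * F ^ (1/q - 1)) a :=
    hF.rpow_const (Or.inl hFa.ne')
  convert hG using 1
  have hGa : Gf c₂ q K a = F ^ (1/q) := rfl
  have hGpos : 0 < F ^ (1/q) := Real.rpow_pos_of_pos hFa _
  rw [hGa]
  have e1 : (F ^ (1/q)) ^ 2 = F ^ (1/q) * F ^ (1/q) := sq (F ^ (1/q))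
  have e2 : (F ^ (1/q)) ^ (2 - q) = F ^ (1/q) * F ^ (1/q) * F ^ (-1:ℝ) := by
    rw [← Real.rpow_add hFa, ← Real.rpow_add hFa, ← Real.rpow_mul hFa.le]
    have hq0 : q ≠ 0 := (qpos hq1).ne'
    congr 1 <;> field_simp <;> ring
  have e3 : F ^ (1/q - 1) = F ^ (1/q) * F ^ (-1:ℝ) := by
    rw [← Real.rpow_add hFa]
    congr 1 <;> ring
  have e4 : (a / c₂) ^ (q*K - 1) = (F + 1) * (c₂ / a) := by
    rw [Real.rpow_sub hb, Real.rpow_one]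
    have hFK : (a / c₂) ^ (q*K) = F + 1 := by rw [hFdef]; ring
    rw [hFK]
    field_simp
  have e5 : F ^ (-1:ℝ) = F⁻¹ := Real.rpow_neg_one F
  rw [e1, e2, e3, e4, e5]
  have hq0 : q ≠ 0 := (qpos hq1).ne'
  field_simp

-- the inner function and its derivative
lemma inner_hasDeriv (hc : 0 < c₂) {s : ℝ} (hs : 0 < s) :
    HasDerivAt (fun x : ℝ => (x / c₂) ^ (q*K) - 1)
      (q*K * (s / c₂) ^ (q*K - 1) * (1/c₂)) s := by
  have hb : 0 < s / c₂ := by positivity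
  have h1 : HasDerivAt (fun x : ℝ => x / c₂) (1/c₂) s := by
    simpa [one_div] using (hasDerivAt_id s).div_const c₂
  have h2 := (h1.rpow_const (p := q*K) (Or.inl hb.ne')).sub_const 1
  exact h2.congr_deriv (by ring)

lemma inner_cont (hq1 : 1 < q) (hK0 : 0 < K) :
    Continuous fun a : ℝ => (a / c₂) ^ (q*K) - 1 := by
  refine Continuous.sub ?_ continuous_const
  refine continuous_iff_continuousAt.2 fun a => ?_
  exact (Real.continuousAt_rpow_const _ _ (Or.inr (mul_pos (qpos hq1) hK0).le)).comp
    ((continuous_id.div_const c₂).continuousAt)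

noncomputable def eL (c₂ q K x : ℝ) : ℝ := q*K/c₂ * min 1 ((x/c₂) ^ (q*K - 1))
noncomputable def LL (c₂ q K x : ℝ) : ℝ := q*K/c₂ * max 1 ((x/c₂) ^ (q*K - 1))

lemma eL_pos (hc : 0 < c₂) (hq1 : 1 < q) (hK0 : 0 < K) {x : ℝ} (hx : c₂ ≤ x) :
    0 < eL c₂ q K x := by
  have hx0 : 0 < x := lt_of_lt_of_le hc hx
  have h1 : (0:ℝ) < (x/c₂) ^ (q*K - 1) := Real.rpow_pos_of_pos (by positivity) _
  have := qpos hq1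
  unfold eL
  positivity

lemma LL_pos (hc : 0 < c₂) (hq1 : 1 < q) (hK0 : 0 < K) {x : ℝ} (hx : c₂ ≤ x) :
    0 < LL c₂ q K x := by
  have := qpos hq1
  unfold LL
  have h2 : (0:ℝ) < max 1 ((x/c₂) ^ (q*K - 1)) := lt_max_of_lt_left one_pos
  positivity

lemma base_pow_bounds (hc : 0 < c₂) {x s : ℝ} (hs : c₂ ≤ s) (hsx : s ≤ x) :
    min 1 ((x/c₂) ^ (q*K - 1)) ≤ (s/c₂) ^ (q*K - 1) ∧
      (s/c₂) ^ (q*K - 1) ≤ max 1 ((x/c₂) ^ (q*K - 1)) := by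
  have hs1 : (1:ℝ) ≤ s / c₂ := (one_le_div hc).2 hs
  have hsx' : s / c₂ ≤ x / c₂ := by gcongr
  rcases le_or_gt 0 (q*K - 1) with he | he
  · constructor
    · refine le_trans (min_le_left _ _) ?_
      have := Real.rpow_le_rpow_of_exponent_le hs1 he
      simpa using this
    · exact le_trans (Real.rpow_le_rpow (by positivity) hsx' he) (le_max_right _ _)
  · constructor
    · exact le_trans (min_le_right _ _)
        (Real.rpow_le_rpow_of_nonpos (by positivity) hsx' he.le)
    · exact le_trans (Real.rpow_le_one_of_one_le_of_nonpos hs1 he.le) (le_max_left _ _)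

lemma inner_lb (hc : 0 < c₂) (hq1 : 1 < q) (hK0 : 0 < K) {x : ℝ} (hx : c₂ ≤ x) :
    ∀ s ∈ Icc c₂ x, eL c₂ q K x * (s - c₂) ≤ (s/c₂) ^ (q*K) - 1 := by
  set e := eL c₂ q K x with hedef
  set φ := fun s : ℝ => ((s/c₂) ^ (q*K) - 1) - e * (s - c₂) with hφ
  have hde : ∀ s : ℝ, 0 < s → HasDerivAt φ (q*K * (s / c₂) ^ (q*K - 1) * (1/c₂) - e) s := by
    intro s hs
    exact (inner_hasDeriv hc hs).sub (((hasDerivAt_id s).sub_const c₂).const_mul e |>.congr_deriv (by ring))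
  have hmono : MonotoneOn φ (Icc c₂ x) := by
    refine monotoneOn_of_deriv_nonneg (convex_Icc _ _) ?_ ?_ ?_
    · exact ((inner_cont hq1 hK0).sub (continuous_const.mul (continuous_id.sub continuous_const))).continuousOn
    · intro s hs
      rw [interior_Icc] at hs
      exact ((hde s (lt_trans hc hs.1)).differentiableAt).differentiableWithinAt
    · intro s hs
      rw [interior_Icc] at hs
      rw [(hde s (lt_trans hc hs.1)).deriv]
      have hb := (base_pow_bounds (q := q) (K := K) hc (le_of_lt hs.1) (le_of_lt hs.2)).1
      have hqK : 0 < q*K/c₂ := by have := qpos hq1; positivity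
      have : e ≤ q*K/c₂ * (s/c₂) ^ (q*K - 1) := by
        rw [hedef]
        unfold eL
        exact mul_le_mul_of_nonneg_left hb hqK.le
      have heq : q*K * (s / c₂) ^ (q*K - 1) * (1/c₂) = q*K/c₂ * (s/c₂) ^ (q*K - 1) := by ring
      linarith [heq ▸ this]
  intro s hs
  have h0 : φ c₂ = 0 := by
    simp [hφ, div_self hc.ne']
  have := hmono (left_mem_Icc.2 (le_trans hs.1 hs.2)) hs hs.1
  rw [h0] at this
  simp only [hφ] at this
  linarith

lemma inner_ub (hc : 0 < c₂) (hq1 : 1 < q) (hK0 : 0 < K) {x : ℝ} (hx : c₂ ≤ x) :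
    ∀ s ∈ Icc c₂ x, (s/c₂) ^ (q*K) - 1 ≤ LL c₂ q K x * (s - c₂) := by
  set L := LL c₂ q K x with hLdef
  set φ := fun s : ℝ => L * (s - c₂) - ((s/c₂) ^ (q*K) - 1) with hφ
  have hde : ∀ s : ℝ, 0 < s → HasDerivAt φ (L - q*K * (s / c₂) ^ (q*K - 1) * (1/c₂)) s := by
    intro s hs
    exact ((((hasDerivAt_id s).sub_const c₂).const_mul L).congr_deriv (by ring)).sub
      (inner_hasDeriv hc hs)
  have hmono : MonotoneOn φ (Icc c₂ x) := by
    refine monotoneOn_of_deriv_nonneg (convex_Icc _ _) ?_ ?_ ?_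
    · exact ((continuous_const.mul (continuous_id.sub continuous_const)).sub (inner_cont hq1 hK0)).continuousOn
    · intro s hs
      rw [interior_Icc] at hs
      exact ((hde s (lt_trans hc hs.1)).differentiableAt).differentiableWithinAt
    · intro s hs
      rw [interior_Icc] at hs
      rw [(hde s (lt_trans hc hs.1)).deriv]
      have hb := (base_pow_bounds (q := q) (K := K) hc (le_of_lt hs.1) (le_of_lt hs.2)).2
      have hqK : 0 < q*K/c₂ := by have := qpos hq1; positivity
      have : q*K/c₂ * (s/c₂) ^ (q*K - 1) ≤ L := by
        rw [hLdef]
        unfold LL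
        exact mul_le_mul_of_nonneg_left hb hqK.le
      have heq : q*K * (s / c₂) ^ (q*K - 1) * (1/c₂) = q*K/c₂ * (s/c₂) ^ (q*K - 1) := by ring
      linarith [heq ▸ this]
  intro s hs
  have h0 : φ c₂ = 0 := by
    simp [hφ, div_self hc.ne']
  have := hmono (left_mem_Icc.2 (le_trans hs.1 hs.2)) hs hs.1
  rw [h0] at this
  simp only [hφ] at this
  linarith

lemma G_lb (hc : 0 < c₂) (hq1 : 1 < q) (hK0 : 0 < K) {x : ℝ} (hx : c₂ ≤ x)
    {s : ℝ} (hs : s ∈ Icc c₂ x) :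
    (eL c₂ q K x * (s - c₂)) ^ (1/q) ≤ Gf c₂ q K s := by
  have h1 := inner_lb hc hq1 hK0 hx s hs
  have h2 : 0 ≤ eL c₂ q K x * (s - c₂) :=
    mul_nonneg (eL_pos hc hq1 hK0 hx).le (by linarith [hs.1])
  exact Real.rpow_le_rpow h2 h1 (by positivity)

lemma G_ub (hc : 0 < c₂) (hq1 : 1 < q) (hK0 : 0 < K) {x : ℝ} (hx : c₂ ≤ x)
    {s : ℝ} (hs : s ∈ Icc c₂ x) :
    Gf c₂ q K s ≤ (LL c₂ q K x * (s - c₂)) ^ (1/q) := by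
  have h1 := inner_ub hc hq1 hK0 hx s hs
  exact Real.rpow_le_rpow (inner_nonneg hc hq1 hK0 hs.1) h1 (by positivity)

-- integrability of 1/G on [c₂, x]
lemma G_inv_intInt (hc : 0 < c₂) (hq1 : 1 < q) (hK0 : 0 < K) {x : ℝ} (hx : c₂ ≤ x) :
    IntervalIntegrable (fun s => (Gf c₂ q K s)⁻¹) volume c₂ x := by
  set e := eL c₂ q K x with hedef
  have he : 0 < e := eL_pos hc hq1 hK0 hx
  have hq0 : (0:ℝ) < 1/q := by have := qpos hq1; positivity
  have hbint : IntervalIntegrable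
      (fun s : ℝ => e ^ (-(1/q)) * (s - c₂) ^ (-(1/q))) volume c₂ x := by
    have h1 : IntervalIntegrable (fun t : ℝ => t ^ (-(1/q))) volume 0 (x - c₂) :=
      intervalIntegrable_rpow' (by rw [neg_lt_neg_iff, div_lt_one (qpos hq1)]; exact hq1)
    have h2 := h1.comp_sub_right c₂
    simp only [zero_add, sub_add_cancel] at h2
    exact h2.const_mul _
  refine hbint.mono_fun ?_ ?_
  · exact ((G_cont hq1 hK0).measurable.inv).aestronglyMeasurable.restrict
  · rw [uIoc_of_le hx]
    refine (MeasureTheory.ae_restrict_iff' measurableSet_Ioc).2 (ae_of_all _ fun s hs => ?_)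
    have hs1 : c₂ < s := hs.1
    have hs2 : s ≤ x := hs.2
    have hGpos : 0 < Gf c₂ q K s := G_pos hc hq1 hK0 hs1
    have hlb : (e * (s - c₂)) ^ (1/q) ≤ Gf c₂ q K s :=
      G_lb hc hq1 hK0 hx ⟨hs1.le, hs2⟩
    have hlb0 : 0 < (e * (s - c₂)) ^ (1/q) :=
      Real.rpow_pos_of_pos (by nlinarith) _
    have hinv : (Gf c₂ q K s)⁻¹ ≤ ((e * (s - c₂)) ^ (1/q))⁻¹ :=
      inv_anti₀ hlb0 hlb
    have hrw : ((e * (s - c₂)) ^ (1/q))⁻¹ = e ^ (-(1/q)) * (s - c₂) ^ (-(1/q)) := by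
      rw [← Real.rpow_neg (by nlinarith), Real.mul_rpow he.le (by linarith)]
    show ‖(Gf c₂ q K s)⁻¹‖ ≤ ‖e ^ (-(1/q)) * (s - c₂) ^ (-(1/q))‖
    rw [Real.norm_eq_abs, Real.norm_eq_abs, abs_of_nonneg (inv_nonneg.2 hGpos.le),
      abs_of_nonneg]
    · rw [← hrw]; exact hinv
    · rw [← hrw]; positivity


noncomputable def Uf (c₂ q K : ℝ) (x : ℝ) : ℝ := ∫ s in c₂..x, (Gf c₂ q K s)⁻¹
noncomputable def Af (c₂ q K : ℝ) (t : ℝ) : ℝ := Function.invFunOn (Uf c₂ q K) (Ici c₂) t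

lemma U_left : Uf c₂ q K c₂ = 0 := intervalIntegral.integral_same

lemma G_inv_intInt' (hc : 0 < c₂) (hq1 : 1 < q) (hK0 : 0 < K) {x y : ℝ} (hx : c₂ ≤ x)
    (hxy : x ≤ y) : IntervalIntegrable (fun s => (Gf c₂ q K s)⁻¹) volume x y := by
  refine (G_inv_intInt hc hq1 hK0 (le_trans hx hxy)).mono_set ?_
  rw [uIcc_of_le hxy, uIcc_of_le (le_trans hx hxy)]
  exact Icc_subset_Icc_left hx

lemma U_contOn (hc : 0 < c₂) (hq1 : 1 < q) (hK0 : 0 < K) {B : ℝ} (hB : c₂ ≤ B) :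
    ContinuousOn (Uf c₂ q K) (Icc c₂ B) := by
  have h := intervalIntegral.continuousOn_primitive_interval'
    (G_inv_intInt hc hq1 hK0 hB) (left_mem_uIcc (a := c₂) (b := B))
  rwa [uIcc_of_le hB] at h

lemma U_hasDeriv (hc : 0 < c₂) (hq1 : 1 < q) (hK0 : 0 < K) {x : ℝ} (hx : c₂ < x) :
    HasDerivAt (Uf c₂ q K) ((Gf c₂ q K x)⁻¹) x := by
  refine intervalIntegral.integral_hasDerivAt_right (G_inv_intInt hc hq1 hK0 hx.le) ?_ ?_
  · have hco : ContinuousOn (fun s => (Gf c₂ q K s)⁻¹) (Ioi c₂) :=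
      (G_cont hq1 hK0).continuousOn.inv₀ fun s hs => (G_pos hc hq1 hK0 hs).ne'
    exact hco.stronglyMeasurableAtFilter isOpen_Ioi x hx
  · exact ((G_cont hq1 hK0).continuousAt).inv₀ (G_pos hc hq1 hK0 hx).ne'

lemma U_add (hc : 0 < c₂) (hq1 : 1 < q) (hK0 : 0 < K) {x y : ℝ} (hx : c₂ ≤ x) (hxy : x ≤ y) :
    Uf c₂ q K y = Uf c₂ q K x + ∫ s in x..y, (Gf c₂ q K s)⁻¹ :=
  (intervalIntegral.integral_add_adjacent_intervals (G_inv_intInt hc hq1 hK0 hx)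
    (G_inv_intInt' hc hq1 hK0 hx hxy)).symm

lemma U_strictMonoOn (hc : 0 < c₂) (hq1 : 1 < q) (hK0 : 0 < K) :
    StrictMonoOn (Uf c₂ q K) (Ici c₂) := by
  intro x hx y hy hxy
  have hpos : 0 < ∫ s in x..y, (Gf c₂ q K s)⁻¹ := by
    refine intervalIntegral.intervalIntegral_pos_of_pos_on
      (G_inv_intInt' hc hq1 hK0 hx hxy.le) (fun s hs => ?_) hxy
    exact inv_pos.2 (G_pos hc hq1 hK0 (lt_of_le_of_lt hx hs.1))
  have := U_add hc hq1 hK0 hx hxy.le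
  linarith

lemma U_nonneg (hc : 0 < c₂) (hq1 : 1 < q) (hK0 : 0 < K) {x : ℝ} (hx : c₂ ≤ x) :
    0 ≤ Uf c₂ q K x := by
  refine intervalIntegral.integral_nonneg hx fun s hs => ?_
  exact inv_nonneg.2 (G_nonneg hc hq1 hK0 hs.1)

lemma U_tendsto (hc : 0 < c₂) (hq1 : 1 < q) (hK0 : 0 < K) (hK1 : K ≤ 1) :
    Tendsto (Uf c₂ q K) atTop atTop := by
  have hle : ∀ x, c₂ ≤ x → c₂ * Real.log (x/c₂) ≤ Uf c₂ q K x := by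
    intro x hx
    have hint1 : IntervalIntegrable (fun s : ℝ => c₂ * (1/s)) volume c₂ x := by
      refine ContinuousOn.intervalIntegrable ?_
      rw [uIcc_of_le hx]
      exact continuousOn_const.mul (continuousOn_const.div continuousOn_id
        fun s hs => ne_of_gt (lt_of_lt_of_le hc hs.1))
    have h0 : ∀ᵐ s : ℝ, s ≠ c₂ := by
      have hz : (volume : Measure ℝ) {c₂} = 0 := measure_singleton c₂
      rw [MeasureTheory.ae_iff]
      simpa [not_not] using hz
    have hmono : (∫ s in c₂..x, c₂ * (1/s)) ≤ Uf c₂ q K x := by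
      refine intervalIntegral.integral_mono_ae_restrict hx hint1
        (G_inv_intInt hc hq1 hK0 hx) ?_
      filter_upwards [ae_restrict_mem measurableSet_Icc, ae_restrict_of_ae h0] with s hs hne
      have hs1 : c₂ < s := lt_of_le_of_ne hs.1 (Ne.symm hne)
      have hG : 0 < Gf c₂ q K s := G_pos hc hq1 hK0 hs1
      have hle' : Gf c₂ q K s ≤ s / c₂ := G_le_linear hc hq1 hK0 hK1 hs1.le
      have := inv_anti₀ hG hle'
      calc c₂ * (1/s) = (s / c₂)⁻¹ := by
            field_simp
        _ ≤ (Gf c₂ q K s)⁻¹ := this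
    have heq : (∫ s in c₂..x, c₂ * (1/s)) = c₂ * Real.log (x/c₂) := by
      rw [intervalIntegral.integral_const_mul, integral_one_div]
      rw [uIcc_of_le hx]
      intro h0'
      exact absurd h0'.1 (by linarith)
    linarith [heq ▸ hmono]
  have htend : Tendsto (fun x : ℝ => c₂ * Real.log (x/c₂)) atTop atTop :=
    (Real.tendsto_log_atTop.comp (tendsto_id.atTop_div_const hc)).const_mul_atTop hc
  exact tendsto_atTop_mono' atTop (eventually_atTop.2 ⟨c₂, hle⟩) htend

lemma exists_U (hc : 0 < c₂) (hq1 : 1 < q) (hK0 : 0 < K) (hK1 : K ≤ 1) {t : ℝ} (ht : 0 ≤ t) :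
    ∃ x ∈ Ici c₂, Uf c₂ q K x = t := by
  obtain ⟨B, hB1, hB2⟩ := ((eventually_ge_atTop c₂).and
    ((U_tendsto hc hq1 hK0 hK1).eventually_ge_atTop t)).exists
  have hsub := intermediate_value_Icc hB1 (U_contOn hc hq1 hK0 hB1)
  have htmem : t ∈ Icc (Uf c₂ q K c₂) (Uf c₂ q K B) := by
    rw [U_left]; exact ⟨ht, hB2⟩
  obtain ⟨x, hx, hUx⟩ := hsub htmem
  exact ⟨x, hx.1, hUx⟩

lemma A_mem (hc : 0 < c₂) (hq1 : 1 < q) (hK0 : 0 < K) (hK1 : K ≤ 1) {t : ℝ} (ht : 0 ≤ t) :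
    c₂ ≤ Af c₂ q K t :=
  Function.invFunOn_mem (exists_U hc hq1 hK0 hK1 ht)

lemma A_spec (hc : 0 < c₂) (hq1 : 1 < q) (hK0 : 0 < K) (hK1 : K ≤ 1) {t : ℝ} (ht : 0 ≤ t) :
    Uf c₂ q K (Af c₂ q K t) = t :=
  Function.invFunOn_eq (exists_U hc hq1 hK0 hK1 ht)

lemma A_zero (hc : 0 < c₂) (hq1 : 1 < q) (hK0 : 0 < K) (hK1 : K ≤ 1) :
    Af c₂ q K 0 = c₂ := by
  refine (U_strictMonoOn hc hq1 hK0).injOn (A_mem hc hq1 hK0 hK1 le_rfl) self_mem_Ici ?_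
  rw [A_spec hc hq1 hK0 hK1 le_rfl, U_left]

lemma A_gt (hc : 0 < c₂) (hq1 : 1 < q) (hK0 : 0 < K) (hK1 : K ≤ 1) {t : ℝ} (ht : 0 < t) :
    c₂ < Af c₂ q K t := by
  rcases eq_or_lt_of_le (A_mem hc hq1 hK0 hK1 ht.le) with h | h
  · exfalso
    have := A_spec hc hq1 hK0 hK1 ht.le
    rw [← h, U_left] at this
    linarith
  · exact h

lemma A_lt_A (hc : 0 < c₂) (hq1 : 1 < q) (hK0 : 0 < K) (hK1 : K ≤ 1) {s t : ℝ}
    (hs : 0 ≤ s) (hst : s < t) : Af c₂ q K s < Af c₂ q K t := by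
  by_contra h
  push_neg at h
  have hmem_s := A_mem hc hq1 hK0 hK1 hs
  have hmem_t := A_mem hc hq1 hK0 hK1 (le_trans hs hst.le)
  have : Uf c₂ q K (Af c₂ q K t) ≤ Uf c₂ q K (Af c₂ q K s) := by
    rcases eq_or_lt_of_le h with h' | h'
    · rw [h']
    · exact (U_strictMonoOn hc hq1 hK0 hmem_t hmem_s h').le
  rw [A_spec hc hq1 hK0 hK1 hs, A_spec hc hq1 hK0 hK1 (le_trans hs hst.le)] at this
  linarith

lemma A_le_A (hc : 0 < c₂) (hq1 : 1 < q) (hK0 : 0 < K) (hK1 : K ≤ 1) {s t : ℝ}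
    (hs : 0 ≤ s) (hst : s ≤ t) : Af c₂ q K s ≤ Af c₂ q K t := by
  rcases eq_or_lt_of_le hst with h | h
  · rw [h]
  · exact (A_lt_A hc hq1 hK0 hK1 hs h).le

lemma A_continuousAt (hc : 0 < c₂) (hq1 : 1 < q) (hK0 : 0 < K) (hK1 : K ≤ 1) {t : ℝ}
    (ht : 0 < t) : ContinuousAt (Af c₂ q K) t := by
  rw [Metric.continuousAt_iff]
  intro ε hε
  set x₀ := Af c₂ q K t with hx₀def
  have hx₀ : c₂ < x₀ := A_gt hc hq1 hK0 hK1 ht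
  set ε' := min (ε/2) ((x₀ - c₂)/2) with hε'def
  have hε'pos : 0 < ε' := lt_min (by linarith) (by linarith)
  have h1 : c₂ ≤ x₀ - ε' := by
    have : ε' ≤ (x₀ - c₂)/2 := min_le_right _ _
    linarith
  have hUt : Uf c₂ q K x₀ = t := A_spec hc hq1 hK0 hK1 ht.le
  have h2 : Uf c₂ q K (x₀ - ε') < t := by
    rw [← hUt]
    exact U_strictMonoOn hc hq1 hK0 h1 (le_trans h1 (by linarith)) (by linarith)
  have h3 : t < Uf c₂ q K (x₀ + ε') := by
    rw [← hUt]
    exact U_strictMonoOn hc hq1 hK0 (show c₂ ≤ x₀ by linarith) (show c₂ ≤ x₀ + ε' by linarith) (by linarith)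
  have hU0 : 0 ≤ Uf c₂ q K (x₀ - ε') := U_nonneg hc hq1 hK0 h1
  refine ⟨min (t - Uf c₂ q K (x₀ - ε')) (Uf c₂ q K (x₀ + ε') - t), lt_min (by linarith) (by linarith),
    fun {y} hy => ?_⟩
  rw [Real.dist_eq] at hy
  have hy1 : Uf c₂ q K (x₀ - ε') < y := by
    have := abs_lt.1 hy
    have h4 := min_le_left (t - Uf c₂ q K (x₀ - ε')) (Uf c₂ q K (x₀ + ε') - t)
    linarith [this.1]
  have hy2 : y < Uf c₂ q K (x₀ + ε') := by
    have := abs_lt.1 hy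
    have h4 := min_le_right (t - Uf c₂ q K (x₀ - ε')) (Uf c₂ q K (x₀ + ε') - t)
    linarith [this.2]
  have hy0 : 0 ≤ y := le_trans hU0 hy1.le
  have hA1 : x₀ - ε' < Af c₂ q K y := by
    by_contra h
    push_neg at h
    have : Uf c₂ q K (Af c₂ q K y) ≤ Uf c₂ q K (x₀ - ε') := by
      rcases eq_or_lt_of_le h with h' | h'
      · rw [h']
      · exact (U_strictMonoOn hc hq1 hK0 (A_mem hc hq1 hK0 hK1 hy0) h1 h').le
    rw [A_spec hc hq1 hK0 hK1 hy0] at this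
    linarith
  have hA2 : Af c₂ q K y < x₀ + ε' := by
    by_contra h
    push_neg at h
    have : Uf c₂ q K (x₀ + ε') ≤ Uf c₂ q K (Af c₂ q K y) := by
      rcases eq_or_lt_of_le h with h' | h'
      · rw [h']
      · exact (U_strictMonoOn hc hq1 hK0 (show c₂ ≤ x₀ + ε' by linarith)
          (A_mem hc hq1 hK0 hK1 hy0) h').le
    rw [A_spec hc hq1 hK0 hK1 hy0] at this
    linarith
  rw [Real.dist_eq, abs_lt]
  have : ε' ≤ ε/2 := min_le_left _ _
  constructor <;> [skip; skip] <;> simp only [hx₀def] at * <;> linarith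

lemma A_tendsto (hc : 0 < c₂) (hq1 : 1 < q) (hK0 : 0 < K) (hK1 : K ≤ 1) :
    Tendsto (Af c₂ q K) atTop atTop := by
  rw [tendsto_atTop]
  intro b
  set B := max b c₂ with hBdef
  have hB : c₂ ≤ B := le_max_right _ _
  have hUB : 0 ≤ Uf c₂ q K B := U_nonneg hc hq1 hK0 hB
  have hAUB : Af c₂ q K (Uf c₂ q K B) = B := by
    refine (U_strictMonoOn hc hq1 hK0).injOn (A_mem hc hq1 hK0 hK1 hUB) hB ?_
    exact A_spec hc hq1 hK0 hK1 hUB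
  refine eventually_atTop.2 ⟨Uf c₂ q K B, fun t ht => ?_⟩
  calc b ≤ B := le_max_left _ _
    _ = Af c₂ q K (Uf c₂ q K B) := hAUB.symm
    _ ≤ Af c₂ q K t := A_le_A hc hq1 hK0 hK1 hUB ht

lemma A_hasDeriv (hc : 0 < c₂) (hq1 : 1 < q) (hK0 : 0 < K) (hK1 : K ≤ 1) {t : ℝ}
    (ht : 0 < t) : HasDerivAt (Af c₂ q K) (Gf c₂ q K (Af c₂ q K t)) t := by
  have hG : 0 < Gf c₂ q K (Af c₂ q K t) := G_pos hc hq1 hK0 (A_gt hc hq1 hK0 hK1 ht)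
  have h := HasDerivAt.of_local_left_inverse (A_continuousAt hc hq1 hK0 hK1 ht)
    (U_hasDeriv hc hq1 hK0 (A_gt hc hq1 hK0 hK1 ht)) (inv_ne_zero hG.ne')
    (by
      filter_upwards [eventually_gt_nhds ht] with y hy
      exact A_spec hc hq1 hK0 hK1 hy.le)
  rwa [inv_inv] at h

lemma A_sub_le (hc : 0 < c₂) (hq1 : 1 < q) (hK0 : 0 < K) (hK1 : K ≤ 1) {t : ℝ}
    (ht : 0 < t) : Af c₂ q K t - c₂ ≤ t * Gf c₂ q K (Af c₂ q K t) := by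
  set x := Af c₂ q K t with hxdef
  have hx : c₂ < x := A_gt hc hq1 hK0 hK1 ht
  have hG : 0 < Gf c₂ q K x := G_pos hc hq1 hK0 hx
  have h0 : ∀ᵐ s : ℝ, s ≠ c₂ := by
    have hz : (volume : Measure ℝ) {c₂} = 0 := measure_singleton c₂
    rw [MeasureTheory.ae_iff]
    simpa [not_not] using hz
  have key : (x - c₂) * (Gf c₂ q K x)⁻¹ ≤ t := by
    have hmono : (∫ s in c₂..x, (Gf c₂ q K x)⁻¹) ≤ Uf c₂ q K x := by
      refine intervalIntegral.integral_mono_ae_restrict hx.le intervalIntegrable_const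
        (G_inv_intInt hc hq1 hK0 hx.le) ?_
      filter_upwards [ae_restrict_mem measurableSet_Icc, ae_restrict_of_ae h0] with s hs hne
      have hs1 : c₂ < s := lt_of_le_of_ne hs.1 (Ne.symm hne)
      exact inv_anti₀ (G_pos hc hq1 hK0 hs1) (G_mono hc hq1 hK0 hs1.le hs.2)
    rw [intervalIntegral.integral_const, smul_eq_mul] at hmono
    rw [A_spec hc hq1 hK0 hK1 ht.le] at hmono
    exact hmono
  rw [← div_le_iff₀ hG] at *
  rw [div_eq_mul_inv]
  exact key

lemma G_A_le (hc : 0 < c₂) (hq1 : 1 < q) (hq2 : q < 2) (hK0 : 0 < K) (hK1 : K ≤ 1) {t : ℝ}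
    (ht0 : 0 < t) (ht1 : t ≤ 1) :
    Gf c₂ q K (Af c₂ q K t) ≤ (LL c₂ q K (Af c₂ q K 1) * t) ^ (1/(q-1)) := by
  set x := Af c₂ q K t with hxdef
  set X := Af c₂ q K 1 with hXdef
  set L := LL c₂ q K X with hLdef
  set g := Gf c₂ q K x with hgdef
  have hx : c₂ < x := A_gt hc hq1 hK0 hK1 ht0
  have hXc : c₂ < X := A_gt hc hq1 hK0 hK1 one_pos
  have hxX : x ≤ X := A_le_A hc hq1 hK0 hK1 ht0.le ht1
  have hg : 0 < g := G_pos hc hq1 hK0 hx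
  have hL : 0 < L := LL_pos hc hq1 hK0 hXc.le
  -- g^q = inner(x) ≤ L (x - c₂) ≤ L t g
  have h1 : g ^ q ≤ L * (x - c₂) := by
    rw [hgdef, G_rpow_q hc hq1 hK0 hx.le]
    exact inner_ub hc hq1 hK0 hXc.le x ⟨hx.le, hxX⟩
  have h2 : L * (x - c₂) ≤ L * (t * g) :=
    mul_le_mul_of_nonneg_left (A_sub_le hc hq1 hK0 hK1 ht0) hL.le
  have h3 : g ^ (q - 1) ≤ L * t := by
    have hq' : g ^ (q-1) = g ^ q / g := by
      rw [Real.rpow_sub hg, Real.rpow_one]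
    rw [hq', div_le_iff₀ hg]
    calc g ^ q ≤ L * (t * g) := le_trans h1 h2
      _ = L * t * g := by ring
  calc g = (g ^ (q-1)) ^ (1/(q-1)) := by
        rw [← Real.rpow_mul hg.le]
        rw [mul_one_div, div_self (by linarith : q - 1 ≠ 0), Real.rpow_one]
    _ ≤ (L * t) ^ (1/(q-1)) := by
        exact Real.rpow_le_rpow (Real.rpow_nonneg hg.le _) h3 (div_nonneg one_pos.le (by linarith))


/-- The key construction: existence of the profile curve. -/
lemma profile (hc : 0 < c₂) (hq1 : 1 < q) (hq2 : q < 2) (hK0 : 0 < K) (hK1 : K ≤ 1)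
    (c₃ : ℝ) :
    ∃ αh : ℝ → ℝ,
      ContDiff ℝ 2 αh ∧ (∀ u, c₂ ≤ αh u) ∧ αh c₃ = c₂ ∧ deriv αh c₃ = 0 ∧
      (∀ u, c₃ < u → 0 < deriv αh u) ∧ (∀ u, u < c₃ → deriv αh u < 0) ∧
      Tendsto αh atTop atTop ∧ Tendsto αh atBot atTop ∧
      (∀ u, αh u * deriv (deriv αh) u = K * ((deriv αh u)^2 + |deriv αh u| ^ (2 - q))) := by
  classical
  set αh : ℝ → ℝ := fun u => Af c₂ q K |u - c₃| with hαh
  set W : ℝ → ℝ := fun u => if c₃ ≤ u then Gf c₂ q K (Af c₂ q K (u - c₃))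
    else -Gf c₂ q K (Af c₂ q K (c₃ - u)) with hWdef
  set E : ℝ → ℝ := fun u => K * ((W u)^2 + |W u| ^ (2 - q)) / αh u with hEdef
  set L : ℝ := LL c₂ q K (Af c₂ q K 1) with hLdef
  have hL : 0 < L := LL_pos hc hq1 hK0 (A_mem hc hq1 hK0 hK1 zero_le_one)
  have he1 : 0 < 1/(q-1) := by
    have : 0 < q - 1 := by linarith
    positivity
  have he2 : 1 < 1/(q-1) := by
    rw [lt_div_iff₀ (by linarith : (0:ℝ) < q - 1)]
    linarith
  have hα_ge : ∀ u, c₂ ≤ αh u := fun u => A_mem hc hq1 hK0 hK1 (abs_nonneg _)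
  have hα_pos : ∀ u, 0 < αh u := fun u => lt_of_lt_of_le hc (hα_ge u)
  have hα_c₃ : αh c₃ = c₂ := by
    simp only [hαh, sub_self, abs_zero]
    exact A_zero hc hq1 hK0 hK1
  have hW_c₃ : W c₃ = 0 := by
    simp only [hWdef, le_refl, if_true, sub_self]
    rw [A_zero hc hq1 hK0 hK1, G_left hc hq1]
  have habsW : ∀ y, |W y| = Gf c₂ q K (Af c₂ q K |y - c₃|) := by
    intro y
    by_cases hy : c₃ ≤ y
    · simp only [hWdef, if_pos hy]
      rw [abs_of_nonneg (sub_nonneg.2 hy),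
        abs_of_nonneg (G_nonneg hc hq1 hK0 (A_mem hc hq1 hK0 hK1 (sub_nonneg.2 hy)))]
    · push_neg at hy
      simp only [hWdef, if_neg (not_le.2 hy), abs_neg]
      rw [abs_of_neg (by linarith : y - c₃ < 0), neg_sub,
        abs_of_nonneg (G_nonneg hc hq1 hK0 (A_mem hc hq1 hK0 hK1 (by linarith)))]
  -- slope bound
  have hslope : ∀ y : ℝ, y ≠ c₃ → |y - c₃| ≤ 1 →
      Gf c₂ q K (Af c₂ q K |y - c₃|) ≤ (L * |y - c₃|) ^ (1/(q-1)) := by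
    intro y hy h1
    have ht0 : 0 < |y - c₃| := abs_pos.2 (sub_ne_zero.2 hy)
    exact G_A_le hc hq1 hq2 hK0 hK1 ht0 h1
  have habs_small : ∀ᶠ y in 𝓝[≠] c₃, |y - c₃| ≤ 1 := by
    have h := Metric.closedBall_mem_nhds c₃ one_pos
    refine Eventually.filter_mono nhdsWithin_le_nhds ?_
    filter_upwards [h] with y hy
    rwa [Metric.mem_closedBall, Real.dist_eq] at hy
  have hne : ∀ᶠ y in 𝓝[≠] c₃, y ≠ c₃ := eventually_mem_nhdsWithin.mono (fun y hy => hy)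
  -- tendsto of the two bounds
  have habs0 : Tendsto (fun y : ℝ => |y - c₃|) (𝓝[≠] c₃) (𝓝 0) := by
    have hcont : Continuous fun y : ℝ => |y - c₃| :=
      (continuous_id.sub continuous_const).abs
    have := hcont.tendsto c₃
    simp only [sub_self, abs_zero] at this
    exact this.mono_left nhdsWithin_le_nhds
  have hbnd1 : Tendsto (fun y : ℝ => (L * |y - c₃|) ^ (1/(q-1))) (𝓝[≠] c₃) (𝓝 0) := by
    have h1 : Tendsto (fun y : ℝ => L * |y - c₃|) (𝓝[≠] c₃) (𝓝 0) := by
      have := habs0.const_mul L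
      simpa using this
    have h2 : ContinuousAt (fun x : ℝ => x ^ (1/(q-1))) 0 :=
      Real.continuousAt_rpow_const 0 _ (Or.inr he1.le)
    have h3 := h2.tendsto.comp h1
    rwa [Real.zero_rpow he1.ne'] at h3
  have hbnd2 : Tendsto (fun y : ℝ => L ^ (1/(q-1)) * |y - c₃| ^ (1/(q-1) - 1))
      (𝓝[≠] c₃) (𝓝 0) := by
    have h2 : ContinuousAt (fun x : ℝ => x ^ (1/(q-1) - 1)) 0 :=
      Real.continuousAt_rpow_const 0 _ (Or.inr (by linarith))
    have h3 := h2.tendsto.comp habs0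
    rw [Real.zero_rpow (by linarith : 1/(q-1) - 1 ≠ 0)] at h3
    have := h3.const_mul (L ^ (1/(q-1)))
    simpa using this
  -- first derivative
  have hW : ∀ u, HasDerivAt αh (W u) u := by
    intro u
    rcases lt_trichotomy u c₃ with hu | hu | hu
    · -- u < c₃
      have hpos : 0 < c₃ - u := by linarith
      have h1 : HasDerivAt (fun y : ℝ => c₃ - y) (-1) u := by
        simpa using (hasDerivAt_id u).const_sub c₃
      have h2 : HasDerivAt (fun y : ℝ => Af c₂ q K (c₃ - y))
          (Gf c₂ q K (Af c₂ q K (c₃ - u)) * (-1)) u :=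
        (A_hasDeriv hc hq1 hK0 hK1 hpos).comp u h1
      have h3 : αh =ᶠ[𝓝 u] fun y : ℝ => Af c₂ q K (c₃ - y) := by
        filter_upwards [eventually_lt_nhds hu] with y hy
        simp only [hαh]
        rw [abs_of_neg (by linarith : y - c₃ < 0), neg_sub]
      have h4 := h2.congr_of_eventuallyEq h3
      have h5 : W u = Gf c₂ q K (Af c₂ q K (c₃ - u)) * (-1) := by
        simp only [hWdef, if_neg (not_le.2 hu)]
        ring
      rwa [h5]
    · -- u = c₃
      subst hu
      rw [show W u = 0 from hW_c₃, hasDerivAt_iff_tendsto_slope]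
      refine squeeze_zero_norm' (a := fun y => (L * |y - u|) ^ (1/(q-1))) ?_ hbnd1
      filter_upwards [hne, habs_small] with y hy h1
      have ht0 : 0 < |y - u| := abs_pos.2 (sub_ne_zero.2 hy)
      have hkey := A_sub_le hc hq1 hK0 hK1 (t := |y - u|) ht0
      have h5 : ‖slope αh u y‖ ≤ Gf c₂ q K (Af c₂ q K |y - u|) := by
        rw [slope_def_field, hα_c₃, Real.norm_eq_abs, abs_div]
        have h6 : |αh y - c₂| = αh y - c₂ := abs_of_nonneg (by linarith [hα_ge y])
        rw [h6, div_le_iff₀ ht0]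
        calc αh y - c₂ = Af c₂ q K |y - u| - c₂ := rfl
          _ ≤ |y - u| * Gf c₂ q K (Af c₂ q K |y - u|) := hkey
          _ = Gf c₂ q K (Af c₂ q K |y - u|) * |y - u| := mul_comm _ _
      exact le_trans h5 (hslope y hy h1)
    · -- c₃ < u
      have hpos : 0 < u - c₃ := by linarith
      have h1 : HasDerivAt (fun y : ℝ => y - c₃) 1 u := by
        simpa using (hasDerivAt_id u).sub_const c₃
      have h2 : HasDerivAt (fun y : ℝ => Af c₂ q K (y - c₃))
          (Gf c₂ q K (Af c₂ q K (u - c₃)) * 1) u :=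
        (A_hasDeriv hc hq1 hK0 hK1 hpos).comp u h1
      have h3 : αh =ᶠ[𝓝 u] fun y : ℝ => Af c₂ q K (y - c₃) := by
        filter_upwards [eventually_gt_nhds hu] with y hy
        simp only [hαh]
        rw [abs_of_pos (by linarith : 0 < y - c₃)]
      have h4 := h2.congr_of_eventuallyEq h3
      have h5 : W u = Gf c₂ q K (Af c₂ q K (u - c₃)) * 1 := by
        simp only [hWdef, if_pos hu.le]
        ring
      rwa [h5]
  have hderiv : deriv αh = W := funext fun u => (hW u).deriv
  -- second derivative
  have hW2 : ∀ u, HasDerivAt W (E u) u := by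
    intro u
    rcases lt_trichotomy u c₃ with hu | hu | hu
    · -- u < c₃
      have hpos : 0 < c₃ - u := by linarith
      have hac : c₂ < Af c₂ q K (c₃ - u) := A_gt hc hq1 hK0 hK1 hpos
      have ha0 : 0 < Af c₂ q K (c₃ - u) := lt_trans hc hac
      have hg : 0 < Gf c₂ q K (Af c₂ q K (c₃ - u)) := G_pos hc hq1 hK0 hac
      have h1 : HasDerivAt (fun y : ℝ => c₃ - y) (-1) u := by
        simpa using (hasDerivAt_id u).const_sub c₃
      have h2 : HasDerivAt (fun y : ℝ => Af c₂ q K (c₃ - y))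
          (Gf c₂ q K (Af c₂ q K (c₃ - u)) * (-1)) u :=
        (A_hasDeriv hc hq1 hK0 hK1 hpos).comp u h1
      have h3 : HasDerivAt (fun y : ℝ => -Gf c₂ q K (Af c₂ q K (c₃ - y)))
          (-(K * (Gf c₂ q K (Af c₂ q K (c₃ - u)) ^ 2 +
              Gf c₂ q K (Af c₂ q K (c₃ - u)) ^ (2 - q)) /
            (Af c₂ q K (c₃ - u) * Gf c₂ q K (Af c₂ q K (c₃ - u))) *
            (Gf c₂ q K (Af c₂ q K (c₃ - u)) * (-1)))) u :=
        by have hG := G_hasDeriv hc hq1 hK0 hac; exact (hG.comp u h2).neg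
      have h4 : W =ᶠ[𝓝 u] fun y : ℝ => -Gf c₂ q K (Af c₂ q K (c₃ - y)) := by
        filter_upwards [eventually_lt_nhds hu] with y hy
        simp only [hWdef, if_neg (not_le.2 hy)]
      have h5 := h3.congr_of_eventuallyEq h4
      refine h5.congr_deriv ?_
      simp only [hEdef]
      have e1 : W u = -Gf c₂ q K (Af c₂ q K (c₃ - u)) := by
        simp only [hWdef, if_neg (not_le.2 hu)]
      have e2 : αh u = Af c₂ q K (c₃ - u) := by
        simp only [hαh]
        rw [abs_of_neg (by linarith : u - c₃ < 0), neg_sub]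
      rw [e1, e2, abs_neg, abs_of_nonneg hg.le, neg_sq]
      field_simp
    · -- u = c₃
      subst hu
      have hE0 : E u = 0 := by
        simp only [hEdef]
        rw [hW_c₃]
        rw [abs_zero, Real.zero_rpow (by linarith : 2 - q ≠ 0)]
        norm_num
      rw [hE0, hasDerivAt_iff_tendsto_slope]
      refine squeeze_zero_norm'
        (a := fun y => L ^ (1/(q-1)) * |y - u| ^ (1/(q-1) - 1)) ?_ hbnd2
      filter_upwards [hne, habs_small] with y hy h1
      have ht0 : 0 < |y - u| := abs_pos.2 (sub_ne_zero.2 hy)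
      have h5 : ‖slope W u y‖ = Gf c₂ q K (Af c₂ q K |y - u|) / |y - u| := by
        rw [slope_def_field, hW_c₃, sub_zero, Real.norm_eq_abs, abs_div, habsW y]
      rw [h5, div_le_iff₀ ht0]
      calc Gf c₂ q K (Af c₂ q K |y - u|) ≤ (L * |y - u|) ^ (1/(q-1)) := hslope y hy h1
        _ = L ^ (1/(q-1)) * |y - u| ^ (1/(q-1)) := Real.mul_rpow hL.le (abs_nonneg _)
        _ = L ^ (1/(q-1)) * (|y - u| ^ (1/(q-1) - 1) * |y - u|) := by
            rw [show (1/(q-1)) = (1/(q-1) - 1) + 1 by ring, Real.rpow_add_one ht0.ne']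
            ring_nf
        _ = L ^ (1/(q-1)) * |y - u| ^ (1/(q-1) - 1) * |y - u| := by ring
    · -- c₃ < u
      have hpos : 0 < u - c₃ := by linarith
      have hac : c₂ < Af c₂ q K (u - c₃) := A_gt hc hq1 hK0 hK1 hpos
      have ha0 : 0 < Af c₂ q K (u - c₃) := lt_trans hc hac
      have hg : 0 < Gf c₂ q K (Af c₂ q K (u - c₃)) := G_pos hc hq1 hK0 hac
      have h1 : HasDerivAt (fun y : ℝ => y - c₃) 1 u := by
        simpa using (hasDerivAt_id u).sub_const c₃
      have h2 : HasDerivAt (fun y : ℝ => Af c₂ q K (y - c₃))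
          (Gf c₂ q K (Af c₂ q K (u - c₃)) * 1) u :=
        (A_hasDeriv hc hq1 hK0 hK1 hpos).comp u h1
      have h3 : HasDerivAt (fun y : ℝ => Gf c₂ q K (Af c₂ q K (y - c₃)))
          (K * (Gf c₂ q K (Af c₂ q K (u - c₃)) ^ 2 +
              Gf c₂ q K (Af c₂ q K (u - c₃)) ^ (2 - q)) /
            (Af c₂ q K (u - c₃) * Gf c₂ q K (Af c₂ q K (u - c₃))) *
            (Gf c₂ q K (Af c₂ q K (u - c₃)) * 1)) u :=
        by have hG := G_hasDeriv hc hq1 hK0 hac; exact hG.comp u h2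
      have h4 : W =ᶠ[𝓝 u] fun y : ℝ => Gf c₂ q K (Af c₂ q K (y - c₃)) := by
        filter_upwards [eventually_gt_nhds hu] with y hy
        simp only [hWdef, if_pos hy.le]
      have h5 := h3.congr_of_eventuallyEq h4
      refine h5.congr_deriv ?_
      simp only [hEdef]
      have e1 : W u = Gf c₂ q K (Af c₂ q K (u - c₃)) := by
        simp only [hWdef, if_pos hu.le]
      have e2 : αh u = Af c₂ q K (u - c₃) := by
        simp only [hαh]
        rw [abs_of_pos (by linarith : 0 < u - c₃)]
      rw [e1, e2, abs_of_nonneg hg.le]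
      field_simp
  have hderiv2 : deriv W = E := funext fun u => (hW2 u).deriv
  -- continuity of E
  have hWcont : Continuous W := by
    refine Differentiable.continuous (fun u => (hW2 u).differentiableAt)
  have hαcont : Continuous αh :=
    Differentiable.continuous (fun u => (hW u).differentiableAt)
  have hEcont : Continuous E := by
    simp only [hEdef]
    refine Continuous.div ?_ hαcont fun u => (hα_pos u).ne'
    refine continuous_const.mul (Continuous.add ?_ ?_)
    · exact hWcont.pow 2
    · exact Continuous.rpow_const hWcont.abs fun u => Or.inr (by linarith)
  -- C² regularity
  have hCD : ContDiff ℝ 2 αh := by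
    rw [show (2 : WithTop ℕ∞) = 1 + 1 by norm_num, contDiff_succ_iff_deriv]
    refine ⟨fun u => (hW u).differentiableAt, by simp, ?_⟩
    rw [hderiv]
    rw [show (1 : WithTop ℕ∞) = 0 + 1 by norm_num, contDiff_succ_iff_deriv]
    refine ⟨fun u => (hW2 u).differentiableAt, by simp, ?_⟩
    rw [hderiv2]
    exact contDiff_zero.2 hEcont
  refine ⟨αh, hCD, hα_ge, hα_c₃, ?_, ?_, ?_, ?_, ?_, ?_⟩
  · rw [hderiv, hW_c₃]
  · intro u hu
    rw [hderiv]
    simp only [hWdef, if_pos hu.le]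
    exact G_pos hc hq1 hK0 (A_gt hc hq1 hK0 hK1 (by linarith))
  · intro u hu
    rw [hderiv]
    simp only [hWdef, if_neg (not_le.2 hu)]
    rw [neg_lt, neg_zero]
    exact G_pos hc hq1 hK0 (A_gt hc hq1 hK0 hK1 (by linarith))
  · -- atTop
    refine (A_tendsto hc hq1 hK0 hK1).comp ?_
    exact tendsto_abs_atTop_atTop.comp (tendsto_atTop_add_const_right atTop (-c₃) tendsto_id)
  · refine (A_tendsto hc hq1 hK0 hK1).comp ?_
    exact tendsto_abs_atBot_atTop.comp (tendsto_atBot_add_const_right atBot (-c₃) tendsto_id)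
  · intro u
    rw [hderiv, hderiv2]
    simp only [hEdef]
    rw [mul_comm (αh u), div_mul_cancel₀ _ (hα_pos u).ne']


lemma final_alg {M μ lam a w D : ℝ} (hM : 0 < M) (hμ : μ = M + 1) (ha : 0 < a) (hw : w ≠ 0)
    (hode : a * D = M * lam * (w^2 + |w| ^ ((μ-2)/M))) :
    (1/M) * (|w| ^ (μ/M) + 1) ^ (-(μ+1)/μ) * |w| ^ (-(μ-2)/M) * D
      + lam * (-(1/a) * (|w| ^ (μ/M) + 1) ^ (-(1:ℝ)/μ)) = 0 := by
  have hμ0 : 0 < μ := by rw [hμ]; linarith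
  have hab : 0 < |w| := abs_pos.2 hw
  have hB : 0 < |w| ^ (μ/M) + 1 :=
    add_pos_of_nonneg_of_pos (Real.rpow_nonneg (abs_nonneg w) _) one_pos
  have hX : w^2 + |w| ^ ((μ-2)/M) = |w| ^ ((μ-2)/M) * (|w| ^ (μ/M) + 1) := by
    have h2 : w^2 = |w| ^ ((μ-2)/M) * |w| ^ (μ/M) := by
      rw [← Real.rpow_add hab]
      rw [show (μ-2)/M + μ/M = 2 by rw [← add_div, hμ]; field_simp; ring]
      rw [show |w| ^ (2:ℝ) = w^2 from by
        rw [show (2:ℝ) = ((2:ℕ):ℝ) by norm_num, Real.rpow_natCast, sq_abs]]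
    rw [h2]
    ring
  have hD : D = M * lam * (|w| ^ ((μ-2)/M) * (|w| ^ (μ/M) + 1)) / a := by
    rw [eq_div_iff ha.ne', ← hX]
    linarith [hode]
  have hBe : (|w| ^ (μ/M) + 1) ^ (-(μ+1)/μ) * (|w| ^ (μ/M) + 1)
      = (|w| ^ (μ/M) + 1) ^ (-(1:ℝ)/μ) := by
    rw [← Real.rpow_add_one hB.ne']
    congr 1
    field_simp
    ring
  have hwe : |w| ^ (-(μ-2)/M) * |w| ^ ((μ-2)/M) = 1 := by
    rw [← Real.rpow_add hab, show -(μ-2)/M + (μ-2)/M = 0 by ring, Real.rpow_zero]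
  have key : (1/M) * (|w| ^ (μ/M) + 1) ^ (-(μ+1)/μ) * |w| ^ (-(μ-2)/M) *
      (M * lam * (|w| ^ ((μ-2)/M) * (|w| ^ (μ/M) + 1)) / a)
      = lam * (1/a) * (|w| ^ (μ/M) + 1) ^ (-(1:ℝ)/μ) := by
    calc (1/M) * (|w| ^ (μ/M) + 1) ^ (-(μ+1)/μ) * |w| ^ (-(μ-2)/M) *
        (M * lam * (|w| ^ ((μ-2)/M) * (|w| ^ (μ/M) + 1)) / a)
        = (M * (1/M)) * lam * (1/a) *
          (((|w| ^ (μ/M) + 1) ^ (-(μ+1)/μ) * (|w| ^ (μ/M) + 1)) *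
            (|w| ^ (-(μ-2)/M) * |w| ^ ((μ-2)/M))) := by ring
      _ = lam * (1/a) * (|w| ^ (μ/M) + 1) ^ (-(1:ℝ)/μ) := by
          rw [hBe, hwe, mul_one_div_cancel hM.ne']
          ring
  rw [hD, key]
  ring


end Thm53

open Real Set Filter

/-- (Theorem 5.3) For `0 < (2m−1)λ ≤ 1`, `c₂ > 0` and `c₃ ∈ ℝ`, there is a `C²`
function `α̂` on `ℝ` with minimum value `c₂` at `c₃`, tending to `∞` at `±∞`, solving
the ODE `α̂ α̂'' = (2m−1)λ (α̂'² + |α̂'|^{(2m−2)/(2m−1)})`; hence the rotational surface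
`(α̂(u) cos v, α̂(u) sin v, u)` satisfies `k₁ + λk₂ = 0` wherever `α̂' ≠ 0`. -/
theorem exists_profile_homogeneous_small_lambda (m : ℕ) (hm : 2 ≤ m) (lam c₂ c₃ : ℝ)
    (hlam₀ : 0 < (2 * (m : ℝ) - 1) * lam) (hlam₁ : (2 * (m : ℝ) - 1) * lam ≤ 1)
    (hc : 0 < c₂) :
    ∃ αh : ℝ → ℝ,
      ContDiff ℝ 2 αh ∧
      (∀ u : ℝ, c₂ ≤ αh u) ∧
      αh c₃ = c₂ ∧
      deriv αh c₃ = 0 ∧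
      (∀ u : ℝ, c₃ < u → 0 < deriv αh u) ∧
      (∀ u : ℝ, u < c₃ → deriv αh u < 0) ∧
      Filter.Tendsto αh Filter.atTop Filter.atTop ∧
      Filter.Tendsto αh Filter.atBot Filter.atTop ∧
      (∀ u : ℝ,
        αh u * deriv (deriv αh) u = (2 * (m : ℝ) - 1) * lam *
          ((deriv αh u) ^ 2 + |deriv αh u| ^ ((2 * (m : ℝ) - 2) / (2 * (m : ℝ) - 1)))) ∧
      (∀ u : ℝ, deriv αh u ≠ 0 →
        (1 / (2 * (m : ℝ) - 1)) *
            (|deriv αh u| ^ ((2 * (m : ℝ)) / (2 * (m : ℝ) - 1)) + 1)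
              ^ (-(2 * (m : ℝ) + 1) / (2 * (m : ℝ))) *
            |deriv αh u| ^ (-(2 * (m : ℝ) - 2) / (2 * (m : ℝ) - 1)) *
            deriv (deriv αh) u +
          lam * (-(1 / αh u) *
            (|deriv αh u| ^ ((2 * (m : ℝ)) / (2 * (m : ℝ) - 1)) + 1)
              ^ (-(1 : ℝ) / (2 * (m : ℝ)))) = 0) := by
  have hm2 : (2:ℝ) ≤ (m:ℝ) := by exact_mod_cast hm
  have hM : 0 < 2*(m:ℝ) - 1 := by linarith
  have hq1 : 1 < 2*(m:ℝ) / (2*(m:ℝ) - 1) := by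
    rw [lt_div_iff₀ hM]
    linarith
  have hq2 : 2*(m:ℝ) / (2*(m:ℝ) - 1) < 2 := by
    rw [div_lt_iff₀ hM]
    linarith
  obtain ⟨αh, hCD, hge, hc₃, hd0, hdpos, hdneg, htop, hbot, hode⟩ :=
    Thm53.profile (q := 2*(m:ℝ) / (2*(m:ℝ) - 1)) (K := (2*(m:ℝ) - 1) * lam)
      hc hq1 hq2 hlam₀ hlam₁ c₃
  have hpq : 2 - 2*(m:ℝ) / (2*(m:ℝ) - 1) = (2*(m:ℝ) - 2) / (2*(m:ℝ) - 1) := by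
    field_simp
    ring
  refine ⟨αh, hCD, hge, hc₃, hd0, hdpos, hdneg, htop, hbot, ?_, ?_⟩
  · intro u
    have h := hode u
    rwa [hpq] at h
  · intro u hw
    have h := hode u
    rw [hpq] at h
    have ha : 0 < αh u := lt_of_lt_of_le hc (hge u)
    have := Thm53.final_alg (M := 2*(m:ℝ) - 1) (μ := 2*(m:ℝ)) (lam := lam) (a := αh u)
      (w := deriv αh u) (D := deriv (deriv αh) u) hM (by ring) ha hw h
    convert this using 4 <;> ring
end

section
/- Let λ < 0 and c₂ > 0, and define G : (0, c₂) → ℝ by G(ρ) = ρ^{(2m−1)(−λ)} · (c₂^{2m(−λ)} − ρ^{2m(−λ)})^{−(2m−1)/(2m)}. Then G is differentiable on (0, c₂), and the limit lim_{α→0⁺} G'(α) exists in ℝ if and only if (2m−1)(−λ) ≥ 1. (Here G = u' for the profile u of the rotational surface solving k₁ + λk₂ = 0, so this is the criterion for the C²-extendability of the profile curve to the rotation axis.) -/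
open Real Set Filter

/-- For `λ < 0` and `c₂ > 0`, the function
`G(ρ) = ρ^{(2m−1)(−λ)} (c₂^{2m(−λ)} − ρ^{2m(−λ)})^{−(2m−1)/(2m)}` is differentiable on
`(0, c₂)`, and `G'(α)` has a finite limit as `α → 0⁺` if and only if
`(2m−1)(−λ) ≥ 1`. -/
theorem deriv_limit_at_axis_iff (m : ℕ) (hm : 2 ≤ m) (lam c₂ : ℝ)
    (hlam : lam < 0) (hc : 0 < c₂)
    (G : ℝ → ℝ)
    (hG : ∀ ρ, G ρ = ρ ^ ((2 * (m : ℝ) - 1) * (-lam)) *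
      (c₂ ^ (2 * (m : ℝ) * (-lam)) - ρ ^ (2 * (m : ℝ) * (-lam)))
        ^ (-(2 * (m : ℝ) - 1) / (2 * (m : ℝ)))) :
    (∀ ρ ∈ Set.Ioo (0 : ℝ) c₂, DifferentiableAt ℝ G ρ) ∧
    ((∃ L : ℝ, Filter.Tendsto (deriv G) (nhdsWithin 0 (Set.Ioi 0)) (nhds L)) ↔
      1 ≤ (2 * (m : ℝ) - 1) * (-lam)) := by
  have hm' : (2:ℝ) ≤ (m:ℝ) := by exact_mod_cast hm
  set a : ℝ := (2 * (m:ℝ) - 1) * (-lam) with ha_def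
  set b : ℝ := 2 * (m:ℝ) * (-lam) with hb_def
  set p : ℝ := -(2 * (m:ℝ) - 1) / (2 * (m:ℝ)) with hp_def
  have hlam' : (0:ℝ) < -lam := neg_pos.mpr hlam
  have ha0 : 0 < a := by
    have : (0:ℝ) < 2 * (m:ℝ) - 1 := by linarith
    exact mul_pos this hlam'
  have hb0 : 0 < b := by
    have : (0:ℝ) < 2 * (m:ℝ) := by linarith
    exact mul_pos this hlam'
  have hp0 : p < 0 := by
    have h1 : (0:ℝ) < 2 * (m:ℝ) - 1 := by linarith
    have h2 : (0:ℝ) < 2 * (m:ℝ) := by linarith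
    rw [hp_def]
    exact div_neg_of_neg_of_pos (by linarith) h2
  set C : ℝ := c₂ ^ b with hC_def
  have hC : 0 < C := Real.rpow_pos_of_pos hc b
  -- the derivative
  set D : ℝ → ℝ := fun ρ =>
    a * ρ ^ (a-1) * (C - ρ^b)^p + ρ^a * ((-(b * ρ^(b-1))) * p * (C - ρ^b)^(p-1)) with hD_def
  have hGeq : G = fun x => x ^ a * (C - x ^ b) ^ p := funext fun x => hG x
  have hderiv : ∀ ρ ∈ Set.Ioo (0:ℝ) c₂, HasDerivAt G (D ρ) ρ := by
    intro ρ hρ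
    have hρ0 : 0 < ρ := hρ.1
    have hsub : 0 < C - ρ^b := by
      have := Real.rpow_lt_rpow hρ0.le hρ.2 hb0
      linarith
    have h1 : HasDerivAt (fun x : ℝ => x ^ a) (a * ρ^(a-1)) ρ :=
      Real.hasDerivAt_rpow_const (Or.inl hρ0.ne')
    have h2 : HasDerivAt (fun x : ℝ => (C - x ^ b) ^ p)
        ((-(b * ρ^(b-1))) * p * (C - ρ^b)^(p-1)) ρ := by
      have hinner : HasDerivAt (fun x : ℝ => C - x ^ b) (-(b * ρ^(b-1))) ρ :=
        (Real.hasDerivAt_rpow_const (Or.inl hρ0.ne')).const_sub C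
      exact hinner.rpow_const (Or.inl hsub.ne')
    rw [hGeq]
    exact h1.mul h2
  have hIoo : Set.Ioo (0:ℝ) c₂ ∈ nhdsWithin (0:ℝ) (Set.Ioi 0) :=
    Ioo_mem_nhdsGT_of_mem (left_mem_Ico.mpr hc)
  have hDeq : deriv G =ᶠ[nhdsWithin (0:ℝ) (Set.Ioi 0)] D := by
    filter_upwards [hIoo] with ρ hρ
    exact (hderiv ρ hρ).deriv
  constructor
  · intro ρ hρ; exact (hderiv ρ hρ).differentiableAt
  constructor
  · -- if limit exists then 1 ≤ a
    rintro ⟨L, hL⟩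
    by_contra hlt
    push_neg at hlt
    -- D ρ = ρ^(a-1) * H ρ with H → a*C^p > 0 and ρ^(a-1) → atTop
    have hH_def : True := trivial
    let H : ℝ → ℝ := fun ρ => a * (C - ρ^b)^p + (-(b * ρ^b)) * p * (C - ρ^b)^(p-1)
    have hDH : ∀ ρ ∈ Set.Ioo (0:ℝ) c₂, D ρ = ρ ^ (a-1) * H ρ := by
      intro ρ hρ
      have hρ0 : 0 < ρ := hρ.1
      have h1 : ρ ^ a = ρ ^ (a-1) * ρ := by
        rw [← Real.rpow_add_one hρ0.ne' (a-1)]; norm_num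
      have h2 : ρ ^ b = ρ ^ (b-1) * ρ := by
        rw [← Real.rpow_add_one hρ0.ne' (b-1)]; norm_num
      rw [hD_def]
      show a * ρ ^ (a-1) * (C - ρ^b)^p + ρ^a * ((-(b * ρ^(b-1))) * p * (C - ρ^b)^(p-1))
        = ρ ^ (a-1) * (a * (C - ρ^b)^p + (-(b * ρ^b)) * p * (C - ρ^b)^(p-1))
      rw [h1, h2]
      ring
    have hHlim : Tendsto H (nhdsWithin (0:ℝ) (Set.Ioi 0)) (nhds (a * C^p)) := by
      have hρb : Tendsto (fun ρ : ℝ => ρ ^ b) (nhdsWithin (0:ℝ) (Set.Ioi 0)) (nhds 0) := by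
        have : Tendsto (fun ρ : ℝ => ρ) (nhdsWithin (0:ℝ) (Set.Ioi 0)) (nhds 0) :=
          tendsto_id.mono_left nhdsWithin_le_nhds
        have := this.rpow_const (Or.inr hb0.le)
        simpa [Real.zero_rpow hb0.ne'] using this
      have hsub : Tendsto (fun ρ : ℝ => C - ρ ^ b) (nhdsWithin (0:ℝ) (Set.Ioi 0)) (nhds C) := by
        simpa using tendsto_const_nhds.sub hρb
      have t1 : Tendsto (fun ρ : ℝ => a * (C - ρ^b)^p) (nhdsWithin (0:ℝ) (Set.Ioi 0))
          (nhds (a * C^p)) := tendsto_const_nhds.mul (hsub.rpow_const (Or.inl hC.ne'))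
      have hb2 : Tendsto (fun ρ : ℝ => (-(b * ρ^b)) * p)
          (nhdsWithin (0:ℝ) (Set.Ioi 0)) (nhds ((-(b * (0:ℝ))) * p)) :=
        ((tendsto_const_nhds.mul hρb).neg).mul tendsto_const_nhds
      have t2 : Tendsto (fun ρ : ℝ => (-(b * ρ^b)) * p * (C - ρ^b)^(p-1))
          (nhdsWithin (0:ℝ) (Set.Ioi 0)) (nhds 0) := by
        have h : Tendsto (fun ρ : ℝ => (-(b * ρ^b)) * p * (C - ρ^b)^(p-1))
            (nhdsWithin (0:ℝ) (Set.Ioi 0)) (nhds ((-(b * (0:ℝ))) * p * C^(p-1))) :=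
          hb2.mul (hsub.rpow_const (Or.inl hC.ne'))
        simpa using h
      show Tendsto (fun ρ : ℝ => a * (C - ρ^b)^p + (-(b * ρ^b)) * p * (C - ρ^b)^(p-1))
          (nhdsWithin (0:ℝ) (Set.Ioi 0)) (nhds (a * C^p))
      simpa using t1.add t2
    have hpow : Tendsto (fun ρ : ℝ => ρ ^ (a-1)) (nhdsWithin (0:ℝ) (Set.Ioi 0)) atTop := by
      have h1 : Tendsto (fun ρ : ℝ => (ρ⁻¹) ^ (1-a)) (nhdsWithin (0:ℝ) (Set.Ioi 0)) atTop :=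
        (tendsto_rpow_atTop (by linarith)).comp tendsto_inv_nhdsGT_zero
      refine h1.congr' ?_
      filter_upwards [self_mem_nhdsWithin] with ρ hρ
      rw [Real.inv_rpow (le_of_lt hρ), ← Real.rpow_neg (le_of_lt hρ)]
      ring_nf
    have hDat : Tendsto D (nhdsWithin (0:ℝ) (Set.Ioi 0)) atTop := by
      have haCp : 0 < a * C^p := mul_pos ha0 (Real.rpow_pos_of_pos hC p)
      have := Filter.Tendsto.atTop_mul_pos haCp hpow hHlim
      refine this.congr' ?_
      filter_upwards [hIoo] with ρ hρ
      exact (hDH ρ hρ).symm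
    have hDL : Tendsto D (nhdsWithin (0:ℝ) (Set.Ioi 0)) (nhds L) := hL.congr' hDeq
    exact not_tendsto_nhds_of_tendsto_atTop hDat L hDL
  · -- if 1 ≤ a then limit exists
    intro ha1
    have hid : Tendsto (fun ρ : ℝ => ρ) (nhdsWithin (0:ℝ) (Set.Ioi 0)) (nhds 0) :=
      tendsto_id.mono_left nhdsWithin_le_nhds
    have hρb : Tendsto (fun ρ : ℝ => ρ ^ b) (nhdsWithin (0:ℝ) (Set.Ioi 0)) (nhds 0) := by
      have := hid.rpow_const (Or.inr hb0.le)
      simpa [Real.zero_rpow hb0.ne'] using this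
    have hsub : Tendsto (fun ρ : ℝ => C - ρ ^ b) (nhdsWithin (0:ℝ) (Set.Ioi 0)) (nhds C) := by
      simpa using tendsto_const_nhds.sub hρb
    -- F ρ := a * ρ^(a-1) * (C-ρ^b)^p + (-(b*p)) * ρ^(a+b-1) * (C-ρ^b)^(p-1)
    refine ⟨a * (0:ℝ)^(a-1) * C^p + (-(b*p)) * (0:ℝ)^(a+b-1) * C^(p-1), ?_⟩
    have t1 : Tendsto (fun ρ : ℝ => a * ρ^(a-1) * (C - ρ^b)^p)
        (nhdsWithin (0:ℝ) (Set.Ioi 0)) (nhds (a * (0:ℝ)^(a-1) * C^p)) :=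
      (tendsto_const_nhds.mul (hid.rpow_const (Or.inr (by linarith)))).mul
        (hsub.rpow_const (Or.inl hC.ne'))
    have t2 : Tendsto (fun ρ : ℝ => (-(b*p)) * ρ^(a+b-1) * (C - ρ^b)^(p-1))
        (nhdsWithin (0:ℝ) (Set.Ioi 0)) (nhds ((-(b*p)) * (0:ℝ)^(a+b-1) * C^(p-1))) :=
      (tendsto_const_nhds.mul (hid.rpow_const (Or.inr (by linarith)))).mul
        (hsub.rpow_const (Or.inl hC.ne'))
    have hF : Tendsto (fun ρ : ℝ => a * ρ^(a-1) * (C - ρ^b)^p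
        + (-(b*p)) * ρ^(a+b-1) * (C - ρ^b)^(p-1))
        (nhdsWithin (0:ℝ) (Set.Ioi 0))
        (nhds (a * (0:ℝ)^(a-1) * C^p + (-(b*p)) * (0:ℝ)^(a+b-1) * C^(p-1))) := t1.add t2
    have hFD : (fun ρ : ℝ => a * ρ^(a-1) * (C - ρ^b)^p
        + (-(b*p)) * ρ^(a+b-1) * (C - ρ^b)^(p-1)) =ᶠ[nhdsWithin (0:ℝ) (Set.Ioi 0)] D := by
      filter_upwards [hIoo] with ρ hρ
      have hρ0 : 0 < ρ := hρ.1
      have h1 : ρ ^ (a+b-1) = ρ ^ a * ρ ^ (b-1) := by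
        rw [show a+b-1 = a + (b-1) by ring, Real.rpow_add hρ0]
      rw [hD_def]
      simp only
      rw [h1]
      ring
    exact Tendsto.congr' (hFD.trans hDeq.symm) hF
end

section
/- Let λ < 0 and c₂ > 0, let u : (0, c₂) → ℝ be a C² function with u'(α) = α^{(2m−1)(−λ)} · (c₂^{2m(−λ)} − α^{2m(−λ)})^{−(2m−1)/(2m)} for all α ∈ (0, c₂), and let k₂(α) = −(1/α)(1 + u'(α)^{2m/(2m−1)})^{−1/(2m)} u'(α)^{1/(2m−1)}. Then the limit lim_{α→0⁺} k₂(α) exists in ℝ if and only if −λ ≥ 1; when −λ > 1 the limit is 0, and when −λ = 1 the limit is −1/c₂. -/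
open Real Set Filter

lemma calc_k2 (p n α c : ℝ) (hp : 1 < p) (hn : 0 < n) (hα : 0 < α) (hαc : α < c) :
    -(1/α) * (1 + (α ^ ((p-1)*n) * (c ^ (p*n) - α ^ (p*n)) ^ (-(p-1)/p)) ^ (p/(p-1)))
        ^ (-(1:ℝ)/p) *
      (α ^ ((p-1)*n) * (c ^ (p*n) - α ^ (p*n)) ^ (-(p-1)/p)) ^ ((1:ℝ)/(p-1))
      = -(c ^ (-n) * α ^ (n-1)) := by
  have hc : 0 < c := hα.trans hαc
  have hp0 : 0 < p := by linarith
  have hp1 : 0 < p - 1 := by linarith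
  have hB : 0 < c ^ (p*n) - α ^ (p*n) := by
    have := Real.rpow_lt_rpow hα.le hαc (by positivity : (0:ℝ) < p*n)
    linarith
  set B := c ^ (p*n) - α ^ (p*n) with hBdef
  have h1 : (α ^ ((p-1)*n) * B ^ (-(p-1)/p)) ^ (p/(p-1))
      = α ^ (p*n) * B⁻¹ := by
    rw [Real.mul_rpow (by positivity) (by positivity),
        ← Real.rpow_mul hα.le, ← Real.rpow_mul hB.le]
    have e1 : (p-1)*n*(p/(p-1)) = p*n := by field_simp
    have e2 : -(p-1)/p*(p/(p-1)) = -1 := by field_simp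
    rw [e1, e2, Real.rpow_neg_one]
  have h2 : 1 + α ^ (p*n) * B⁻¹ = c ^ (p*n) / B := by
    rw [eq_div_iff hB.ne', add_mul, inv_mul_cancel_right₀ hB.ne', hBdef]; ring
  have h3 : (c ^ (p*n) / B) ^ (-(1:ℝ)/p) = c ^ (-n) * B ^ ((1:ℝ)/p) := by
    rw [Real.div_rpow (by positivity) hB.le, ← Real.rpow_mul hc.le]
    rw [show p*n*(-(1:ℝ)/p) = -n by field_simp]
    rw [show (-(1:ℝ)/p) = -(1/p) by ring, Real.rpow_neg hB.le]
    field_simp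
  have h4 : (α ^ ((p-1)*n) * B ^ (-(p-1)/p)) ^ ((1:ℝ)/(p-1))
      = α ^ n * B ^ (-(1:ℝ)/p) := by
    rw [Real.mul_rpow (by positivity) (by positivity),
        ← Real.rpow_mul hα.le, ← Real.rpow_mul hB.le]
    rw [show (p-1)*n*((1:ℝ)/(p-1)) = n by field_simp, 
        show -(p-1)/p*((1:ℝ)/(p-1)) = -(1:ℝ)/p by field_simp]
  rw [h1, h2, h3, h4]
  have hB1 : B ^ ((1:ℝ)/p) * B ^ (-(1:ℝ)/p) = 1 := by
    rw [← Real.rpow_add hB, show (1:ℝ)/p + -1/p = 0 by ring, Real.rpow_zero]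
  have hα1 : α ^ (n-1) = α ^ n / α := by
    rw [Real.rpow_sub hα, Real.rpow_one]
  rw [hα1, show -(1/α) * (c^(-n) * B^((1:ℝ)/p)) * (α^n * B^(-(1:ℝ)/p)) 
      = -(c^(-n) * (α^n/α)) * (B^((1:ℝ)/p) * B^(-(1:ℝ)/p)) by ring, hB1, mul_one]

/-- For the profile `u` of the rotational surface solving `k₁ + λk₂ = 0` with `λ < 0`,
the principal curvature `k₂` extends continuously to the rotation axis `α = 0` if and
only if `−λ ≥ 1`; the limit is `0` when `−λ > 1` and `−1/c₂` when `−λ = 1`. -/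
theorem k2_limit_at_axis (m : ℕ) (hm : 2 ≤ m) (lam c₂ : ℝ)
    (hlam : lam < 0) (hc : 0 < c₂)
    (u : ℝ → ℝ) (hu : ContDiffOn ℝ 2 u (Set.Ioo 0 c₂))
    (hu' : ∀ α ∈ Set.Ioo (0 : ℝ) c₂, deriv u α =
      α ^ ((2 * (m : ℝ) - 1) * (-lam)) *
        (c₂ ^ (2 * (m : ℝ) * (-lam)) - α ^ (2 * (m : ℝ) * (-lam)))
          ^ (-(2 * (m : ℝ) - 1) / (2 * (m : ℝ))))
    (k₂ : ℝ → ℝ)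
    (hk₂ : ∀ α, k₂ α =
      -(1 / α) * (1 + deriv u α ^ ((2 * (m : ℝ)) / (2 * (m : ℝ) - 1)))
          ^ (-(1 : ℝ) / (2 * (m : ℝ))) *
        deriv u α ^ ((1 : ℝ) / (2 * (m : ℝ) - 1))) :
    ((∃ L : ℝ, Filter.Tendsto k₂ (nhdsWithin 0 (Set.Ioi 0)) (nhds L)) ↔ 1 ≤ -lam) ∧
    (1 < -lam → Filter.Tendsto k₂ (nhdsWithin 0 (Set.Ioi 0)) (nhds 0)) ∧
    (-lam = 1 → Filter.Tendsto k₂ (nhdsWithin 0 (Set.Ioi 0)) (nhds (-1 / c₂))) := by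
  have hm2 : (2:ℝ) ≤ (m:ℝ) := by exact_mod_cast hm
  have hp : 1 < 2*(m:ℝ) := by linarith
  have hn : 0 < -lam := by linarith
  set f : ℝ → ℝ := fun α => -(c₂ ^ (-(-lam)) * α ^ (-lam - 1)) with hf
  have key : ∀ α ∈ Set.Ioo (0:ℝ) c₂, k₂ α = f α := by
    intro α hα
    rw [hk₂ α, hu' α hα, hf]
    exact calc_k2 (2*(m:ℝ)) (-lam) α c₂ hp hn hα.1 hα.2
  have hmem : Set.Ioo (0:ℝ) c₂ ∈ nhdsWithin (0:ℝ) (Set.Ioi 0) := by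
    rw [← Set.Ioi_inter_Iio]
    exact Filter.inter_mem self_mem_nhdsWithin
      (mem_nhdsWithin_of_mem_nhds (Iio_mem_nhds hc))
  have heq : k₂ =ᶠ[nhdsWithin (0:ℝ) (Set.Ioi 0)] f :=
    Filter.eventuallyEq_of_mem hmem key
  have hC : 0 < c₂ ^ (-(-lam)) := Real.rpow_pos_of_pos hc _
  have tendA : 1 < -lam → Filter.Tendsto k₂ (nhdsWithin 0 (Set.Ioi 0)) (nhds 0) := by
    intro h1
    have hq : 0 < -lam - 1 := by linarith
    have h2 : Filter.Tendsto (fun α:ℝ => α ^ (-lam-1)) (nhdsWithin 0 (Set.Ioi 0))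
        (nhds 0) := by
      have := (Real.continuousAt_rpow_const 0 (-lam-1) (Or.inr hq.le)).tendsto
      rw [Real.zero_rpow hq.ne'] at this
      exact this.mono_left nhdsWithin_le_nhds
    have h3 := ((h2.const_mul (c₂ ^ (-(-lam)))).neg)
    rw [mul_zero, neg_zero] at h3
    exact Filter.Tendsto.congr' heq.symm h3
  have tendB : -lam = 1 → Filter.Tendsto k₂ (nhdsWithin 0 (Set.Ioi 0))
      (nhds (-1 / c₂)) := by
    intro h1
    have hf1 : ∀ α : ℝ, f α = -1 / c₂ := by
      intro α
      rw [hf]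
      simp only [h1]
      rw [show (1:ℝ) - 1 = 0 by ring, Real.rpow_zero, mul_one,
        show -(1:ℝ) = -1 by ring, Real.rpow_neg_one]
      ring
    have : Filter.Tendsto f (nhdsWithin 0 (Set.Ioi 0)) (nhds (-1/c₂)) := by
      rw [show f = fun _ => -1/c₂ from funext hf1]
      exact tendsto_const_nhds
    exact Filter.Tendsto.congr' heq.symm this
  have tendC : -lam < 1 → Filter.Tendsto k₂ (nhdsWithin 0 (Set.Ioi 0)) atBot := by
    intro h1
    have hq : 0 < -(-lam - 1) := by linarith
    have h2 : Filter.Tendsto (fun x:ℝ => (x⁻¹) ^ (-(-lam-1)))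
        (nhdsWithin 0 (Set.Ioi 0)) atTop :=
      (tendsto_rpow_atTop hq).comp tendsto_inv_nhdsGT_zero
    have h3 : Filter.Tendsto (fun α:ℝ => α ^ (-lam-1)) (nhdsWithin 0 (Set.Ioi 0))
        atTop := by
      refine h2.congr' ?_
      filter_upwards [self_mem_nhdsWithin] with x hx
      rw [Real.inv_rpow (le_of_lt hx), Real.rpow_neg (le_of_lt hx), inv_inv]
    have h4 : Filter.Tendsto f (nhdsWithin 0 (Set.Ioi 0)) atBot := by
      have h5 := h3.const_mul_atTop hC
      exact tendsto_neg_atTop_atBot.comp h5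
    exact Filter.Tendsto.congr' heq.symm h4
  refine ⟨⟨?_, ?_⟩, tendA, tendB⟩
  · rintro ⟨L, hL⟩
    by_contra hcon
    push_neg at hcon
    exact not_tendsto_nhds_of_tendsto_atBot (tendC hcon) L hL
  · intro h1
    rcases h1.lt_or_eq with h | h
    · exact ⟨0, tendA h⟩
    · exact ⟨-1/c₂, tendB h.symm⟩
end

section
/- (Theorem 6.1) Let μ ≠ 0. The rotational surface with profile u satisfies k₁(α) − k₂(α) = μ for all α ∈ I if and only if there exists a constant c₁ ∈ ℝ such that for all α ∈ I one has c₁ − μ·log α > 0, α·(c₁ − μ·log α) < 1, and u'(α) = α^{2m−1} (c₁ − μ·log α)^{2m−1} · (1 − α^{2m}(c₁ − μ·log α)^{2m})^{−(2m−1)/(2m)}. -/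
open Real Set

noncomputable def phiF (m : ℕ) (q : ℝ) : ℝ :=
  q ^ ((1:ℝ)/(2*(m:ℝ)-1)) * (1 + q ^ (2*(m:ℝ)/(2*(m:ℝ)-1))) ^ (-(1:ℝ)/(2*(m:ℝ)))

lemma A_pos (m : ℕ) (hm : 1 ≤ m) : (0:ℝ) < 2*(m:ℝ)-1 := by
  have : (1:ℝ) ≤ (m:ℝ) := by exact_mod_cast hm
  linarith

lemma M_pos (m : ℕ) (hm : 1 ≤ m) : (0:ℝ) < 2*(m:ℝ) := by
  have : (1:ℝ) ≤ (m:ℝ) := by exact_mod_cast hm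
  linarith

lemma castA (m : ℕ) (hm : 1 ≤ m) : ((2*m-1 : ℕ):ℝ) = 2*(m:ℝ)-1 := by
  have h : 1 ≤ 2*m := by omega
  rw [Nat.cast_sub h]; push_cast; ring

lemma phi_pos (m : ℕ) (p : ℝ) (hp : 0 < p) : 0 < phiF m p := by
  unfold phiF
  have h1 : (0:ℝ) < 1 + p ^ (2*(m:ℝ)/(2*(m:ℝ)-1)) := by positivity
  exact mul_pos (rpow_pos_of_pos hp _) (rpow_pos_of_pos h1 _)

lemma phi_lt_one (m : ℕ) (hm : 1 ≤ m) (p : ℝ) (hp : 0 < p) : phiF m p < 1 := by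
  have hA := A_pos m hm
  have hM := M_pos m hm
  set s : ℝ := p ^ (2*(m:ℝ)/(2*(m:ℝ)-1)) with hs
  have hs0 : 0 < s := rpow_pos_of_pos hp _
  have h1s : (0:ℝ) < 1 + s := by linarith
  have key : p ^ ((1:ℝ)/(2*(m:ℝ)-1)) = s ^ ((1:ℝ)/(2*(m:ℝ))) := by
    rw [hs, ← Real.rpow_mul hp.le]
    congr 1
    field_simp
  unfold phiF
  rw [← hs, key]
  have hlt : s ^ ((1:ℝ)/(2*(m:ℝ))) < (1+s) ^ ((1:ℝ)/(2*(m:ℝ))) := by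
    apply Real.rpow_lt_rpow hs0.le (by linarith) (by positivity)
  calc s ^ ((1:ℝ)/(2*(m:ℝ))) * (1+s) ^ (-(1:ℝ)/(2*(m:ℝ)))
      < (1+s) ^ ((1:ℝ)/(2*(m:ℝ))) * (1+s) ^ (-(1:ℝ)/(2*(m:ℝ))) := by
        exact mul_lt_mul_of_pos_right hlt (rpow_pos_of_pos h1s _)
    _ = 1 := by
        rw [← Real.rpow_add h1s]
        have : (1:ℝ)/(2*(m:ℝ)) + -(1:ℝ)/(2*(m:ℝ)) = 0 := by ring
        rw [this, Real.rpow_zero]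

lemma identity1 (m : ℕ) (hm : 1 ≤ m) (p : ℝ) (hp : 0 < p) :
    (phiF m p) ^ (2*m-1) * (1 - (phiF m p) ^ (2*m)) ^ (-(2*(m:ℝ)-1)/(2*(m:ℝ))) = p := by
  have hA := A_pos m hm
  have hM := M_pos m hm
  set s : ℝ := p ^ (2*(m:ℝ)/(2*(m:ℝ)-1)) with hs
  have hs0 : 0 < s := rpow_pos_of_pos hp _
  have h1s : (0:ℝ) < 1 + s := by linarith
  have hφ : phiF m p = p ^ ((1:ℝ)/(2*(m:ℝ)-1)) * (1+s) ^ (-(1:ℝ)/(2*(m:ℝ))) := rfl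
  have hφ0 : 0 < phiF m p := phi_pos m p hp
  have e1 : (phiF m p) ^ (2*(m:ℝ)-1) = p * (1+s) ^ (-(2*(m:ℝ)-1)/(2*(m:ℝ))) := by
    rw [hφ, Real.mul_rpow (rpow_pos_of_pos hp _).le (rpow_pos_of_pos h1s _).le,
      ← Real.rpow_mul hp.le, ← Real.rpow_mul h1s.le]
    have c1 : (1:ℝ)/(2*(m:ℝ)-1) * (2*(m:ℝ)-1) = 1 := by field_simp
    have c2 : -(1:ℝ)/(2*(m:ℝ)) * (2*(m:ℝ)-1) = -(2*(m:ℝ)-1)/(2*(m:ℝ)) := by ring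
    rw [c1, c2, Real.rpow_one]
  have e2 : (phiF m p) ^ (2*(m:ℝ)) = s * (1+s)⁻¹ := by
    rw [hφ, Real.mul_rpow (rpow_pos_of_pos hp _).le (rpow_pos_of_pos h1s _).le,
      ← Real.rpow_mul hp.le, ← Real.rpow_mul h1s.le]
    have c1 : (1:ℝ)/(2*(m:ℝ)-1) * (2*(m:ℝ)) = 2*(m:ℝ)/(2*(m:ℝ)-1) := by ring
    have c2 : -(1:ℝ)/(2*(m:ℝ)) * (2*(m:ℝ)) = -1 := by field_simp
    rw [c1, c2, Real.rpow_neg_one, hs]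
  have e3 : 1 - (phiF m p) ^ (2*(m:ℝ)) = (1+s)⁻¹ := by
    rw [e2]; field_simp; ring
  have e4 : ((1+s)⁻¹ : ℝ) ^ (-(2*(m:ℝ)-1)/(2*(m:ℝ))) = (1+s) ^ ((2*(m:ℝ)-1)/(2*(m:ℝ))) := by
    rw [← Real.rpow_neg_one (1+s), ← Real.rpow_mul h1s.le]
    congr 1; ring
  have n1 : (phiF m p) ^ (2*m-1) = (phiF m p) ^ (2*(m:ℝ)-1) := by
    rw [← Real.rpow_natCast (phiF m p) (2*m-1), castA m hm]
  have n2 : (phiF m p) ^ (2*m) = (phiF m p) ^ (2*(m:ℝ)) := by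
    rw [← Real.rpow_natCast (phiF m p) (2*m)]; norm_num
  rw [n1, n2, e1, e3, e4, mul_assoc, ← Real.rpow_add h1s]
  have : -(2*(m:ℝ)-1)/(2*(m:ℝ)) + (2*(m:ℝ)-1)/(2*(m:ℝ)) = 0 := by ring
  rw [this, Real.rpow_zero, mul_one]

lemma identity2 (m : ℕ) (hm : 1 ≤ m) (t : ℝ) (ht0 : 0 < t) (ht1 : t < 1) :
    phiF m (t ^ (2*m-1) * (1 - t ^ (2*m)) ^ (-(2*(m:ℝ)-1)/(2*(m:ℝ)))) = t := by
  have hA := A_pos m hm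
  have hM := M_pos m hm
  set r : ℝ := 1 - t ^ (2*m) with hr
  have htm : t ^ (2*m) < 1 := pow_lt_one₀ ht0.le ht1 (by omega)
  have hr0 : 0 < r := by simp [hr]; linarith
  set p : ℝ := t ^ (2*m-1) * r ^ (-(2*(m:ℝ)-1)/(2*(m:ℝ))) with hp
  have hp0 : 0 < p := mul_pos (pow_pos ht0 _) (rpow_pos_of_pos hr0 _)
  have hpr : p = t ^ (2*(m:ℝ)-1) * r ^ (-(2*(m:ℝ)-1)/(2*(m:ℝ))) := by
    rw [hp, ← Real.rpow_natCast t (2*m-1), castA m hm]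
  have e1 : p ^ ((1:ℝ)/(2*(m:ℝ)-1)) = t * r ^ (-(1:ℝ)/(2*(m:ℝ))) := by
    rw [hpr, Real.mul_rpow (rpow_pos_of_pos ht0 _).le (rpow_pos_of_pos hr0 _).le,
      ← Real.rpow_mul ht0.le, ← Real.rpow_mul hr0.le]
    have c1 : (2*(m:ℝ)-1) * ((1:ℝ)/(2*(m:ℝ)-1)) = 1 := by field_simp
    have c2 : -(2*(m:ℝ)-1)/(2*(m:ℝ)) * ((1:ℝ)/(2*(m:ℝ)-1)) = -(1:ℝ)/(2*(m:ℝ)) := by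
      field_simp
    rw [c1, c2, Real.rpow_one]
  have e2 : p ^ (2*(m:ℝ)/(2*(m:ℝ)-1)) = t ^ (2*m) * r⁻¹ := by
    rw [hpr, Real.mul_rpow (rpow_pos_of_pos ht0 _).le (rpow_pos_of_pos hr0 _).le,
      ← Real.rpow_mul ht0.le, ← Real.rpow_mul hr0.le]
    have c1 : (2*(m:ℝ)-1) * (2*(m:ℝ)/(2*(m:ℝ)-1)) = 2*(m:ℝ) := by field_simp
    have c2 : -(2*(m:ℝ)-1)/(2*(m:ℝ)) * (2*(m:ℝ)/(2*(m:ℝ)-1)) = -1 := by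
      field_simp
    rw [c1, c2, Real.rpow_neg_one, ← Real.rpow_natCast t (2*m)]
    norm_num
  have e3 : 1 + p ^ (2*(m:ℝ)/(2*(m:ℝ)-1)) = r⁻¹ := by
    rw [e2]
    have : t ^ (2*m) = 1 - r := by rw [hr]; ring
    rw [this]
    field_simp
    ring
  have e4 : (r⁻¹ : ℝ) ^ (-(1:ℝ)/(2*(m:ℝ))) = r ^ ((1:ℝ)/(2*(m:ℝ))) := by
    rw [← Real.rpow_neg_one r, ← Real.rpow_mul hr0.le]
    congr 1; ring
  show p ^ ((1:ℝ)/(2*(m:ℝ)-1)) * (1 + p ^ (2*(m:ℝ)/(2*(m:ℝ)-1))) ^ (-(1:ℝ)/(2*(m:ℝ))) = t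
  rw [e1, e3, e4, mul_assoc, ← Real.rpow_add hr0]
  have : -(1:ℝ)/(2*(m:ℝ)) + (1:ℝ)/(2*(m:ℝ)) = 0 := by ring
  rw [this, Real.rpow_zero, mul_one]

lemma phi_hasDerivAt (m : ℕ) (hm : 1 ≤ m) (p : ℝ) (hp : 0 < p) :
    HasDerivAt (phiF m)
      ((1/(2*(m:ℝ)-1)) * (1 + p ^ (2*(m:ℝ)/(2*(m:ℝ)-1))) ^ (-(2*(m:ℝ)+1)/(2*(m:ℝ))) *
        p ^ (-(2*(m:ℝ)-2)/(2*(m:ℝ)-1))) p := by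
  have hA := A_pos m hm
  have hM := M_pos m hm
  set a : ℝ := (1:ℝ)/(2*(m:ℝ)-1) with ha
  set bb : ℝ := 2*(m:ℝ)/(2*(m:ℝ)-1) with hbb
  set c : ℝ := -(1:ℝ)/(2*(m:ℝ)) with hc
  have hs0 : 0 < p ^ bb := rpow_pos_of_pos hp _
  have h1s : (0:ℝ) < 1 + p ^ bb := by linarith
  have h1 : HasDerivAt (fun q : ℝ => q ^ a) (a * p ^ (a-1)) p :=
    Real.hasDerivAt_rpow_const (Or.inl hp.ne')
  have h2 : HasDerivAt (fun q : ℝ => 1 + q ^ bb) (bb * p ^ (bb-1)) p :=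
    (Real.hasDerivAt_rpow_const (Or.inl hp.ne')).const_add 1
  have h3 : HasDerivAt (fun q : ℝ => (1 + q ^ bb) ^ c)
      (bb * p ^ (bb-1) * c * (1 + p ^ bb) ^ (c-1)) p :=
    h2.rpow_const (Or.inl h1s.ne')
  have h4 := h1.mul h3
  have hval : a * p ^ (a-1) * (1 + p ^ bb) ^ c +
      p ^ a * (bb * p ^ (bb-1) * c * (1 + p ^ bb) ^ (c-1))
      = (1/(2*(m:ℝ)-1)) * (1 + p ^ bb) ^ (-(2*(m:ℝ)+1)/(2*(m:ℝ)))
        * p ^ (-(2*(m:ℝ)-2)/(2*(m:ℝ)-1)) := by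
    have ec : c - 1 = -(2*(m:ℝ)+1)/(2*(m:ℝ)) := by rw [hc]; field_simp; ring
    have ea : a - 1 = -(2*(m:ℝ)-2)/(2*(m:ℝ)-1) := by rw [ha]; field_simp; ring
    have ecb : c * bb = -a := by rw [hc, hbb, ha]; field_simp
    have e5 : (1 + p ^ bb) ^ c = (1 + p ^ bb) ^ (c-1) * (1 + p ^ bb) := by
      nth_rewrite 1 [show c = (c-1) + 1 by ring]
      rw [Real.rpow_add h1s, Real.rpow_one]
    have e6 : p ^ a * p ^ (bb - 1) = p ^ (a-1) * p ^ bb := by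
      rw [← Real.rpow_add hp, ← Real.rpow_add hp]; ring_nf
    rw [e5, ← ec, ← ea]
    calc a * p ^ (a-1) * ((1 + p ^ bb) ^ (c-1) * (1 + p ^ bb)) +
        p ^ a * (bb * p ^ (bb-1) * c * (1 + p ^ bb) ^ (c-1))
        = a * p ^ (a-1) * (1 + p ^ bb) ^ (c-1) * (1 + p ^ bb) +
          (c * bb) * (p ^ a * p ^ (bb-1)) * (1 + p ^ bb) ^ (c-1) := by ring
      _ = a * p ^ (a-1) * (1 + p ^ bb) ^ (c-1) * (1 + p ^ bb) +
          (-a) * (p ^ (a-1) * p ^ bb) * (1 + p ^ bb) ^ (c-1) := by rw [ecb, e6]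
      _ = (1/(2*(m:ℝ)-1)) * (1 + p ^ bb) ^ (c-1) * p ^ (a-1) := by rw [ha]; ring
  rw [← hval]
  exact h4


/-- (Theorem 6.1) The rotational surface `X(α,v) = (α cos v, α sin v, u(α))` satisfies
`k₁ − k₂ = μ` for a nonzero constant `μ` if and only if there is a constant `c₁` with
`c₁ − μ log α > 0`, `α(c₁ − μ log α) < 1` and
`u'(α) = α^{2m−1}(c₁ − μ log α)^{2m−1} (1 − α^{2m}(c₁ − μ log α)^{2m})^{−(2m−1)/(2m)}`. -/
theorem inhomogeneous_linear_Weingarten_lambda_neg_one_iff (m : ℕ) (hm : 2 ≤ m)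
    (a b : ℝ) (hI : Set.Ioo a b ⊆ Set.Ioi (0 : ℝ)) (u : ℝ → ℝ)
    (hu : ContDiffOn ℝ 2 u (Set.Ioo a b))
    (hu' : ∀ x ∈ Set.Ioo a b, 0 < deriv u x)
    (μ : ℝ) (hμ : μ ≠ 0)
    (k₁ k₂ : ℝ → ℝ)
    (hk₁ : ∀ x, k₁ x =
      -(1 / (2 * (m : ℝ) - 1)) *
        (1 + deriv u x ^ ((2 * (m : ℝ)) / (2 * (m : ℝ) - 1)))
          ^ (-(2 * (m : ℝ) + 1) / (2 * (m : ℝ))) *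
        deriv u x ^ (-(2 * (m : ℝ) - 2) / (2 * (m : ℝ) - 1)) *
        deriv (deriv u) x)
    (hk₂ : ∀ x, k₂ x =
      -(1 / x) * (1 + deriv u x ^ ((2 * (m : ℝ)) / (2 * (m : ℝ) - 1)))
          ^ (-(1 : ℝ) / (2 * (m : ℝ))) *
        deriv u x ^ ((1 : ℝ) / (2 * (m : ℝ) - 1))) :
    (∀ x ∈ Set.Ioo a b, k₁ x - k₂ x = μ) ↔
    ∃ c₁ : ℝ, ∀ x ∈ Set.Ioo a b,
      0 < c₁ - μ * Real.log x ∧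
      x * (c₁ - μ * Real.log x) < 1 ∧
      deriv u x = x ^ (2 * m - 1) * (c₁ - μ * Real.log x) ^ (2 * m - 1) *
        (1 - x ^ (2 * m) * (c₁ - μ * Real.log x) ^ (2 * m))
          ^ (-(2 * (m : ℝ) - 1) / (2 * (m : ℝ))) := by
  have hm1 : 1 ≤ m := by omega
  -- derivative of deriv u
  have hder : ∀ x ∈ Set.Ioo a b, HasDerivAt (deriv u) (deriv (deriv u) x) x := by
    intro x hx
    have h1 : ContDiffOn ℝ 1 (deriv u) (Set.Ioo a b) :=
      hu.deriv_of_isOpen isOpen_Ioo (by norm_num)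
    exact ((h1.differentiableOn one_ne_zero).differentiableAt
      (isOpen_Ioo.mem_nhds hx)).hasDerivAt
  -- key: derivative of φ ∘ u'
  have hkey : ∀ x ∈ Set.Ioo a b,
      HasDerivAt (fun y => phiF m (deriv u y)) (-(k₁ x)) x := by
    intro x hx
    have hp := hu' x hx
    have h := (phi_hasDerivAt m hm1 (deriv u x) hp).comp x (hder x hx)
    have hval : (1/(2*(m:ℝ)-1)) *
        (1 + deriv u x ^ (2*(m:ℝ)/(2*(m:ℝ)-1))) ^ (-(2*(m:ℝ)+1)/(2*(m:ℝ))) *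
        deriv u x ^ (-(2*(m:ℝ)-2)/(2*(m:ℝ)-1)) * deriv (deriv u) x = -(k₁ x) := by
      rw [hk₁ x]; ring
    rw [hval] at h
    exact h
  have hk2' : ∀ x, x ≠ 0 → k₂ x = -(phiF m (deriv u x)) / x := by
    intro x hx
    rw [hk₂ x]; unfold phiF; ring
  constructor
  · -- forward
    intro h
    rcases (Set.Ioo a b).eq_empty_or_nonempty with he | ⟨x₀, hx₀⟩
    · exact ⟨0, by simp [he]⟩
    set ψ : ℝ → ℝ := fun y => phiF m (deriv u y) / y + μ * Real.log y with hψdef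
    have hψ : ∀ x ∈ Set.Ioo a b, HasDerivAt ψ 0 x := by
      intro x hx
      have hx0 : (0:ℝ) < x := hI hx
      have h1 := (hkey x hx).div (hasDerivAt_id x) hx0.ne'
      have h2 := (Real.hasDerivAt_log hx0.ne').const_mul μ
      have h3 := h1.add h2
      refine (h3.congr_deriv ?_ : HasDerivAt ψ 0 x)
      have hk2x : k₂ x = -(phiF m (deriv u x)) / x := hk2' x hx0.ne'
      have hk1x : k₁ x = μ + k₂ x := by have := h x hx; linarith
      rw [hk1x, hk2x]
      simp only [id]
      field_simp
      ring
    refine ⟨ψ x₀, ?_⟩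
    intro x hx
    have hx0 : (0:ℝ) < x := hI hx
    have hp := hu' x hx
    have hconst : ψ x = ψ x₀ := by
      apply (convex_Ioo a b).is_const_of_fderivWithin_eq_zero (𝕜 := ℝ)
        (fun y hy => ((hψ y hy).differentiableAt).differentiableWithinAt) ?_ hx hx₀
      intro y hy
      have hz : ContinuousLinearMap.smulRight (1 : ℝ →L[ℝ] ℝ) (0:ℝ) = 0 := by
        ext; simp
      have h0 : HasFDerivAt ψ (0 : ℝ →L[ℝ] ℝ) y := hz ▸ (hψ y hy).hasFDerivAt
      rw [fderivWithin_of_isOpen isOpen_Ioo hy, h0.fderiv]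
    have hxt : phiF m (deriv u x) = x * (ψ x₀ - μ * Real.log x) := by
      have h' : phiF m (deriv u x) / x = ψ x₀ - μ * Real.log x := by
        have := hconst
        rw [hψdef] at this
        simp only at this
        linarith
      rw [div_eq_iff hx0.ne'] at h'
      linarith [h']
    have ht0 : 0 < x * (ψ x₀ - μ * Real.log x) := hxt ▸ phi_pos m _ hp
    have ht1 : x * (ψ x₀ - μ * Real.log x) < 1 := hxt ▸ phi_lt_one m hm1 _ hp
    refine ⟨?_, ht1, ?_⟩
    · rcases mul_pos_iff.mp ht0 with ⟨_, hpos⟩ | ⟨hneg, _⟩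
      · exact hpos
      · linarith
    · rw [← mul_pow, ← mul_pow, ← hxt]
      exact (identity1 m hm1 _ hp).symm
  · -- backward
    rintro ⟨c₁, hc⟩ x hx
    have hx0 : (0:ℝ) < x := hI hx
    have hp := hu' x hx
    have hφeq : ∀ y ∈ Set.Ioo a b, phiF m (deriv u y) = y * (c₁ - μ * Real.log y) := by
      intro y hy
      obtain ⟨h1, h2, h3⟩ := hc y hy
      have hy0 : (0:ℝ) < y := hI hy
      have ht0 : 0 < y * (c₁ - μ * Real.log y) := mul_pos hy0 h1
      rw [h3, ← mul_pow, ← mul_pow]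
      exact identity2 m hm1 _ ht0 h2
    have hline : HasDerivAt (fun y => y * (c₁ - μ * Real.log y))
        (1 * (c₁ - μ * Real.log x) + x * (-(μ * x⁻¹))) x := by
      exact (hasDerivAt_id x).mul (((Real.hasDerivAt_log hx0.ne').const_mul μ).const_sub c₁)
    have hkx' : HasDerivAt (fun y => y * (c₁ - μ * Real.log y)) (-(k₁ x)) x := by
      apply (hkey x hx).congr_of_eventuallyEq
      filter_upwards [isOpen_Ioo.mem_nhds hx] with y hy
      exact (hφeq y hy).symm
    have huniq : -(k₁ x) = 1 * (c₁ - μ * Real.log x) + x * (-(μ * x⁻¹)) :=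
      hkx'.unique hline
    have hk2x : k₂ x = -(x * (c₁ - μ * Real.log x)) / x := by
      rw [hk2' x hx0.ne', hφeq x hx]
    have hk1x : k₁ x = μ - (c₁ - μ * Real.log x) := by
      have e1 : x * (μ * x⁻¹) = μ := by field_simp
      have : -(k₁ x) = (c₁ - μ * Real.log x) - μ := by
        rw [huniq]; rw [mul_neg, e1]; ring
      linarith
    rw [hk1x, hk2x]
    field_simp
    ring
end

section
/- Let λ < −1, set ω = −(λ+1) > 0, let c₁ > 0, and let h(t) = c₁·ω·t^{ω+1} + t for t > 0. Then there is a unique α₁₇ > 0 with h(α₁₇) = ω. Let u : (0, α₁₇) → ℝ be a C² function with u'(α) = h(α)^{2m−1} · (ω^{2m} − h(α)^{2m})^{−(2m−1)/(2m)} for all α ∈ (0, α₁₇). Then: lim_{α→0⁺} u'(α) = 0, the limit lim_{α→0⁺} u''(α) exists in ℝ, and the principal curvatures satisfy lim_{α→0⁺} k₁(α) = lim_{α→0⁺} k₂(α) = −1/ω = 1/(λ+1); in particular k₁ and k₂ extend continuously to the rotation axis α = 0. Moreover k₁(α) + λ·k₂(α) = 1 holds on (0, α₁₇). -/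
open Real Set Filter

private lemma alg_hD (j : ℕ) (H A ω e : ℝ) (hA : 0 < A)
    (hsum : A + H ^ (j+2) = ω ^ (j+2)) :
    ↑(j+1) * H ^ j * e * A ^ (-((j:ℝ)+1)/((j:ℝ)+2)) +
      H ^ (j+1) * (-(↑(j+2) * H ^ (j+1) * e) * (-((j:ℝ)+1)/((j:ℝ)+2)) *
        A ^ (-((j:ℝ)+1)/((j:ℝ)+2) - 1)) =
    e * ((j:ℝ)+1) * (H ^ j * (A ^ (-((j:ℝ)+1)/((j:ℝ)+2) - 1) * ω ^ (j+2))) := by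
  have hA1 : A ^ (-((j:ℝ)+1)/((j:ℝ)+2) - 1) = A ^ (-((j:ℝ)+1)/((j:ℝ)+2)) / A := by
    rw [Real.rpow_sub hA, Real.rpow_one]
  rw [hA1, ← hsum]
  have hA' : A ≠ 0 := hA.ne'
  have hj2 : ((j:ℝ)+2) ≠ 0 := by positivity
  push_cast
  field_simp
  ring

private lemma alg_k1 (m : ℕ) (hm : 2 ≤ m) (ω H A e : ℝ) (hω : 0 < ω) (hH : 0 < H)
    (hA : 0 < A) (hsum : A + H ^ (2*m) = ω ^ (2*m)) :
    -(1 / (2*(m:ℝ) - 1)) *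
        (1 + (H ^ (2*m-1) * A ^ (-(2*(m:ℝ) - 1) / (2*(m:ℝ)))) ^ ((2*(m:ℝ)) / (2*(m:ℝ) - 1)))
          ^ (-(2*(m:ℝ) + 1) / (2*(m:ℝ))) *
        (H ^ (2*m-1) * A ^ (-(2*(m:ℝ) - 1) / (2*(m:ℝ)))) ^ (-(2*(m:ℝ) - 2) / (2*(m:ℝ) - 1)) *
        (↑(2*m-1) * H ^ (2*m-1-1) * e * A ^ (-(2*(m:ℝ) - 1) / (2*(m:ℝ))) +
          H ^ (2*m-1) * (-(↑(2*m) * H ^ (2*m-1) * e) * (-(2*(m:ℝ) - 1) / (2*(m:ℝ))) *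
            A ^ (-(2*(m:ℝ) - 1) / (2*(m:ℝ)) - 1))) = -e / ω := by
  obtain ⟨j, hj⟩ : ∃ j : ℕ, 2*m = j+2 := ⟨2*m-2, by omega⟩
  have hjr : 2*(m:ℝ) = (j:ℝ)+2 := by
    have h0 : ((2*m:ℕ):ℝ) = (((j+2):ℕ):ℝ) := by rw [hj]
    push_cast at h0; linarith
  rw [hj] at hsum
  rw [show 2*m-1-1 = j from by omega, show 2*m-1 = j+1 from by omega, hj, hjr,
    show ((j:ℝ)+2-1) = (j:ℝ)+1 from by ring, show ((j:ℝ)+2+1) = (j:ℝ)+3 from by ring,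
    show ((j:ℝ)+2-2) = (j:ℝ) from by ring]
  have d1 : ((j:ℝ)+1) ≠ 0 := by positivity
  have d2 : ((j:ℝ)+2) ≠ 0 := by positivity
  have hg1 : (H ^ (j+1) * A ^ (-((j:ℝ)+1)/((j:ℝ)+2))) ^ (((j:ℝ)+2)/((j:ℝ)+1))
      = H ^ (j+2) * A⁻¹ := by
    rw [Real.mul_rpow (by positivity) (by positivity), ← Real.rpow_natCast H (j+1),
      ← Real.rpow_mul hH.le, ← Real.rpow_mul hA.le,
      show ((j+1:ℕ):ℝ) * (((j:ℝ)+2)/((j:ℝ)+1)) = ((j+2:ℕ):ℝ) from by push_cast; field_simp,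
      show (-((j:ℝ)+1)/((j:ℝ)+2)) * (((j:ℝ)+2)/((j:ℝ)+1)) = -1 from by field_simp,
      Real.rpow_natCast, Real.rpow_neg_one]
  have hg2 : (ω ^ (j+2) * A⁻¹) ^ (-((j:ℝ)+3)/((j:ℝ)+2))
      = ω ^ (-((j:ℝ)+3)) * A ^ (((j:ℝ)+3)/((j:ℝ)+2)) := by
    rw [Real.mul_rpow (by positivity) (by positivity), ← Real.rpow_natCast ω (j+2),
      ← Real.rpow_mul hω.le, Real.inv_rpow hA.le, ← Real.rpow_neg hA.le,
      show ((j+2:ℕ):ℝ) * (-((j:ℝ)+3)/((j:ℝ)+2)) = -((j:ℝ)+3) from by push_cast; field_simp,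
      show -(-((j:ℝ)+3)/((j:ℝ)+2)) = ((j:ℝ)+3)/((j:ℝ)+2) from by ring]
  have hg3 : (H ^ (j+1) * A ^ (-((j:ℝ)+1)/((j:ℝ)+2))) ^ (-(j:ℝ)/((j:ℝ)+1))
      = H ^ (-(j:ℝ)) * A ^ ((j:ℝ)/((j:ℝ)+2)) := by
    rw [Real.mul_rpow (by positivity) (by positivity), ← Real.rpow_natCast H (j+1),
      ← Real.rpow_mul hH.le, ← Real.rpow_mul hA.le,
      show ((j+1:ℕ):ℝ) * (-(j:ℝ)/((j:ℝ)+1)) = -(j:ℝ) from by push_cast; field_simp,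
      show (-((j:ℝ)+1)/((j:ℝ)+2)) * (-(j:ℝ)/((j:ℝ)+1)) = (j:ℝ)/((j:ℝ)+2) from by
        field_simp]
  rw [alg_hD j H A ω e hA hsum, hg1,
    show (1:ℝ) + H ^ (j+2) * A⁻¹ = ω ^ (j+2) * A⁻¹ from by field_simp; linarith [hsum],
    hg2, hg3]
  have fA : A ^ (((j:ℝ)+3)/((j:ℝ)+2)) * A ^ ((j:ℝ)/((j:ℝ)+2)) * A ^ (-((j:ℝ)+1)/((j:ℝ)+2) - 1)
      = 1 := by
    rw [← Real.rpow_add hA, ← Real.rpow_add hA,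
      show ((j:ℝ)+3)/((j:ℝ)+2) + (j:ℝ)/((j:ℝ)+2) + (-((j:ℝ)+1)/((j:ℝ)+2) - 1) = 0 from by
        field_simp; ring,
      Real.rpow_zero]
  have fH : H ^ (-(j:ℝ)) * H ^ j = 1 := by
    rw [← Real.rpow_natCast H j, ← Real.rpow_add hH]; simp
  have fω : ω ^ (-((j:ℝ)+3)) * ω ^ (j+2) = ω⁻¹ := by
    rw [← Real.rpow_natCast ω (j+2), ← Real.rpow_add hω]
    push_cast
    rw [show -((j:ℝ)+3) + ((j:ℝ)+2) = -1 from by ring, Real.rpow_neg_one]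
  have fall : ω ^ (-((j:ℝ)+3)) * A ^ (((j:ℝ)+3)/((j:ℝ)+2)) *
      (H ^ (-(j:ℝ)) * A ^ ((j:ℝ)/((j:ℝ)+2)))
      * (H ^ j * (A ^ (-((j:ℝ)+1)/((j:ℝ)+2) - 1) * ω ^ (j+2))) = ω⁻¹ := by
    calc ω ^ (-((j:ℝ)+3)) * A ^ (((j:ℝ)+3)/((j:ℝ)+2)) *
        (H ^ (-(j:ℝ)) * A ^ ((j:ℝ)/((j:ℝ)+2)))
        * (H ^ j * (A ^ (-((j:ℝ)+1)/((j:ℝ)+2) - 1) * ω ^ (j+2)))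
        = (A ^ (((j:ℝ)+3)/((j:ℝ)+2)) * A ^ ((j:ℝ)/((j:ℝ)+2)) *
            A ^ (-((j:ℝ)+1)/((j:ℝ)+2) - 1))
          * (H ^ (-(j:ℝ)) * H ^ j) * (ω ^ (-((j:ℝ)+3)) * ω ^ (j+2)) := by ring
      _ = ω⁻¹ := by rw [fA, fH, fω]; ring
  have hcancel : -(1/((j:ℝ)+1)) * ((j:ℝ)+1) = -1 := by field_simp
  linear_combination (-(1/((j:ℝ)+1)) * ((j:ℝ)+1) * e) * fall + (e * ω⁻¹) * hcancel

private lemma alg_k2 (m : ℕ) (hm : 2 ≤ m) (ω H A : ℝ) (hω : 0 < ω) (hH : 0 < H)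
    (hA : 0 < A) (hsum : A + H ^ (2*m) = ω ^ (2*m)) :
    (1 + (H ^ (2*m-1) * A ^ (-(2*(m:ℝ) - 1) / (2*(m:ℝ)))) ^ ((2*(m:ℝ)) / (2*(m:ℝ) - 1)))
        ^ (-(1:ℝ) / (2*(m:ℝ))) *
      (H ^ (2*m-1) * A ^ (-(2*(m:ℝ) - 1) / (2*(m:ℝ)))) ^ ((1:ℝ) / (2*(m:ℝ) - 1)) = H / ω := by
  obtain ⟨j, hj⟩ : ∃ j : ℕ, 2*m = j+2 := ⟨2*m-2, by omega⟩
  have hjr : 2*(m:ℝ) = (j:ℝ)+2 := by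
    have h0 : ((2*m:ℕ):ℝ) = (((j+2):ℕ):ℝ) := by rw [hj]
    push_cast at h0; linarith
  rw [hj] at hsum
  rw [show 2*m-1 = j+1 from by omega, hjr, show ((j:ℝ)+2-1) = (j:ℝ)+1 from by ring]
  have d1 : ((j:ℝ)+1) ≠ 0 := by positivity
  have d2 : ((j:ℝ)+2) ≠ 0 := by positivity
  have hg1 : (H ^ (j+1) * A ^ (-((j:ℝ)+1)/((j:ℝ)+2))) ^ (((j:ℝ)+2)/((j:ℝ)+1))
      = H ^ (j+2) * A⁻¹ := by
    rw [Real.mul_rpow (by positivity) (by positivity), ← Real.rpow_natCast H (j+1),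
      ← Real.rpow_mul hH.le, ← Real.rpow_mul hA.le,
      show ((j+1:ℕ):ℝ) * (((j:ℝ)+2)/((j:ℝ)+1)) = ((j+2:ℕ):ℝ) from by push_cast; field_simp,
      show (-((j:ℝ)+1)/((j:ℝ)+2)) * (((j:ℝ)+2)/((j:ℝ)+1)) = -1 from by field_simp,
      Real.rpow_natCast, Real.rpow_neg_one]
  have hg2 : (ω ^ (j+2) * A⁻¹) ^ (-(1:ℝ)/((j:ℝ)+2))
      = ω ^ (-(1:ℝ)) * A ^ ((1:ℝ)/((j:ℝ)+2)) := by
    rw [Real.mul_rpow (by positivity) (by positivity), ← Real.rpow_natCast ω (j+2),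
      ← Real.rpow_mul hω.le, Real.inv_rpow hA.le, ← Real.rpow_neg hA.le,
      show ((j+2:ℕ):ℝ) * (-(1:ℝ)/((j:ℝ)+2)) = -(1:ℝ) from by push_cast; field_simp,
      show -(-(1:ℝ)/((j:ℝ)+2)) = (1:ℝ)/((j:ℝ)+2) from by ring]
  have hg3 : (H ^ (j+1) * A ^ (-((j:ℝ)+1)/((j:ℝ)+2))) ^ ((1:ℝ)/((j:ℝ)+1))
      = H ^ (1:ℝ) * A ^ (-(1:ℝ)/((j:ℝ)+2)) := by
    rw [Real.mul_rpow (by positivity) (by positivity), ← Real.rpow_natCast H (j+1),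
      ← Real.rpow_mul hH.le, ← Real.rpow_mul hA.le,
      show ((j+1:ℕ):ℝ) * ((1:ℝ)/((j:ℝ)+1)) = (1:ℝ) from by push_cast; field_simp,
      show (-((j:ℝ)+1)/((j:ℝ)+2)) * ((1:ℝ)/((j:ℝ)+1)) = -(1:ℝ)/((j:ℝ)+2) from by
        field_simp]
  rw [hg1, show (1:ℝ) + H ^ (j+2) * A⁻¹ = ω ^ (j+2) * A⁻¹ from by field_simp; linarith [hsum],
    hg2, hg3, Real.rpow_one]
  have fA2 : A ^ ((1:ℝ)/((j:ℝ)+2)) * A ^ (-(1:ℝ)/((j:ℝ)+2)) = 1 := by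
    rw [← Real.rpow_add hA, show (1:ℝ)/((j:ℝ)+2) + -(1:ℝ)/((j:ℝ)+2) = 0 from by ring,
      Real.rpow_zero]
  rw [Real.rpow_neg_one]
  linear_combination (H * ω⁻¹) * fA2

/-- Case `λ < −1`, `μ = 1`, `c₁ > 0` of the inhomogeneous linear Weingarten equation:
with `ω = −(λ+1) > 0` and `h(t) = c₁ ω t^{ω+1} + t`, there is a unique `α₁₇ > 0` with
`h(α₁₇) = ω`; for the corresponding profile `u` on `(0, α₁₇)` one has `u'(α) → 0` as
`α → 0⁺`, `u''` has a finite limit at `0⁺`, the principal curvatures `k₁` and `k₂`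
extend continuously to the rotation axis with common limit `−1/ω = 1/(λ+1)`, and
`k₁ + λk₂ = 1` holds on `(0, α₁₇)`. -/
theorem axis_smoothness_lambda_lt_neg_one (m : ℕ) (hm : 2 ≤ m) (lam : ℝ)
    (hlam : lam < -1) (ω : ℝ) (hω : ω = -(lam + 1)) (c₁ : ℝ) (hc₁ : 0 < c₁)
    (h : ℝ → ℝ) (hh : ∀ t, h t = c₁ * ω * t ^ (ω + 1) + t) :
    (∃! t : ℝ, 0 < t ∧ h t = ω) ∧
    (∀ α₁₇ : ℝ, 0 < α₁₇ → h α₁₇ = ω →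
      ∀ u : ℝ → ℝ, ContDiffOn ℝ 2 u (Set.Ioo 0 α₁₇) →
      (∀ α ∈ Set.Ioo (0 : ℝ) α₁₇, deriv u α =
        h α ^ (2 * m - 1) * (ω ^ (2 * m) - h α ^ (2 * m))
          ^ (-(2 * (m : ℝ) - 1) / (2 * (m : ℝ)))) →
      Filter.Tendsto (deriv u) (nhdsWithin 0 (Set.Ioi 0)) (nhds 0) ∧
      (∃ L : ℝ, Filter.Tendsto (deriv (deriv u)) (nhdsWithin 0 (Set.Ioi 0)) (nhds L)) ∧
      Filter.Tendsto (fun α =>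
          -(1 / (2 * (m : ℝ) - 1)) *
            (1 + deriv u α ^ ((2 * (m : ℝ)) / (2 * (m : ℝ) - 1)))
              ^ (-(2 * (m : ℝ) + 1) / (2 * (m : ℝ))) *
            deriv u α ^ (-(2 * (m : ℝ) - 2) / (2 * (m : ℝ) - 1)) *
            deriv (deriv u) α)
        (nhdsWithin 0 (Set.Ioi 0)) (nhds (1 / (lam + 1))) ∧
      Filter.Tendsto (fun α =>
          -(1 / α) * (1 + deriv u α ^ ((2 * (m : ℝ)) / (2 * (m : ℝ) - 1)))
              ^ (-(1 : ℝ) / (2 * (m : ℝ))) *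
            deriv u α ^ ((1 : ℝ) / (2 * (m : ℝ) - 1)))
        (nhdsWithin 0 (Set.Ioi 0)) (nhds (1 / (lam + 1))) ∧
      (∀ α ∈ Set.Ioo (0 : ℝ) α₁₇,
        (-(1 / (2 * (m : ℝ) - 1)) *
            (1 + deriv u α ^ ((2 * (m : ℝ)) / (2 * (m : ℝ) - 1)))
              ^ (-(2 * (m : ℝ) + 1) / (2 * (m : ℝ))) *
            deriv u α ^ (-(2 * (m : ℝ) - 2) / (2 * (m : ℝ) - 1)) *
            deriv (deriv u) α) +
          lam * (-(1 / α) * (1 + deriv u α ^ ((2 * (m : ℝ)) / (2 * (m : ℝ) - 1)))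
              ^ (-(1 : ℝ) / (2 * (m : ℝ))) *
            deriv u α ^ ((1 : ℝ) / (2 * (m : ℝ) - 1))) = 1)) := by
  have hω0 : 0 < ω := by rw [hω]; linarith
  have hω1 : (0:ℝ) < ω + 1 := by linarith
  have hlam1 : lam + 1 ≠ 0 := by intro hc; rw [hc] at hω; simp at hω; linarith [hω0, hω]
  have hcont : Continuous h := by
    have hc : Continuous fun t : ℝ => c₁ * ω * t ^ (ω+1) + t :=
      (continuous_const.mul (continuous_id.rpow_const fun x => Or.inr hω1.le)).add continuous_id
    exact hc.congr fun t => (hh t).symm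
  have h0 : h 0 = 0 := by rw [hh, Real.zero_rpow hω1.ne']; ring
  have hmono : ∀ x y : ℝ, 0 ≤ x → x < y → h x < h y := by
    intro x y hx hxy
    rw [hh, hh]
    have h1 : x ^ (ω+1) ≤ y ^ (ω+1) := Real.rpow_le_rpow hx hxy.le hω1.le
    have h2 : 0 < c₁ * ω := by positivity
    nlinarith
  constructor
  · -- existence and uniqueness
    have hmem : ω ∈ Icc (h 0) (h ω) := by
      constructor
      · rw [h0]; exact hω0.le
      · rw [hh]
        nlinarith [mul_nonneg (mul_pos hc₁ hω0).le (Real.rpow_nonneg hω0.le (ω+1))]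
    obtain ⟨t₀, ht₀mem, ht₀⟩ := intermediate_value_Icc hω0.le hcont.continuousOn hmem
    have ht₀pos : 0 < t₀ := by
      rcases eq_or_lt_of_le ht₀mem.1 with hc | hc
      · exfalso; rw [← hc, h0] at ht₀; exact hω0.ne ht₀
      · exact hc
    refine ⟨t₀, ⟨ht₀pos, ht₀⟩, ?_⟩
    rintro s ⟨hs0, hseq⟩
    by_contra hne
    rcases lt_or_gt_of_ne hne with hlt | hgt
    · have := hmono s t₀ hs0.le hlt; rw [hseq, ht₀] at this; exact lt_irrefl _ this
    · have := hmono t₀ s ht₀pos.le hgt; rw [hseq, ht₀] at this; exact lt_irrefl _ this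
  · intro α₁₇ hα₁₇ hαval u hu hu'
    have hIoo : Ioo (0:ℝ) α₁₇ ∈ nhdsWithin (0:ℝ) (Ioi 0) := Ioo_mem_nhdsGT hα₁₇
    have hHpos : ∀ α ∈ Ioo (0:ℝ) α₁₇, 0 < h α := by
      intro α hα
      have := hmono 0 α le_rfl hα.1; rwa [h0] at this
    have hHlt : ∀ α ∈ Ioo (0:ℝ) α₁₇, h α < ω := by
      intro α hα
      have := hmono α α₁₇ hα.1.le hα.2; rwa [hαval] at this
    have hApos : ∀ α ∈ Ioo (0:ℝ) α₁₇, 0 < ω ^ (2*m) - h α ^ (2*m) := by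
      intro α hα
      have := pow_lt_pow_left₀ (hHlt α hα) (hHpos α hα).le (by omega : 2*m ≠ 0)
      linarith
    have hder : ∀ α ∈ Ioo (0:ℝ) α₁₇, HasDerivAt h (c₁*ω*((ω+1)*α^ω)+1) α := by
      intro α hα
      have hb : HasDerivAt (fun t : ℝ => t ^ (ω+1)) ((ω+1) * α ^ (ω+1-1)) α :=
        Real.hasDerivAt_rpow_const (Or.inl hα.1.ne')
      rw [show ω + 1 - 1 = ω from by ring] at hb
      have hc : HasDerivAt (fun t : ℝ => c₁*ω*t^(ω+1) + t) (c₁*ω*((ω+1)*α^ω)+1) α :=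
        (hb.const_mul (c₁*ω)).add (hasDerivAt_id α)
      exact hc.congr_of_eventuallyEq (Filter.Eventually.of_forall hh)
    have hDD : ∀ α ∈ Ioo (0:ℝ) α₁₇, deriv (deriv u) α =
        ↑(2*m-1) * h α ^ (2*m-1-1) * (c₁*ω*((ω+1)*α^ω)+1) *
          (ω^(2*m) - h α^(2*m)) ^ (-(2*(m:ℝ) - 1) / (2*(m:ℝ))) +
        h α ^ (2*m-1) * (-(↑(2*m) * h α ^ (2*m-1) * (c₁*ω*((ω+1)*α^ω)+1)) *
          (-(2*(m:ℝ) - 1) / (2*(m:ℝ))) *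
          (ω^(2*m) - h α^(2*m)) ^ (-(2*(m:ℝ) - 1) / (2*(m:ℝ)) - 1)) := by
      intro α hα
      have hev : deriv u =ᶠ[nhds α]
          (fun t => h t ^ (2*m-1) * (ω^(2*m) - h t^(2*m)) ^ (-(2*(m:ℝ) - 1) / (2*(m:ℝ)))) :=
        Filter.eventuallyEq_of_mem (isOpen_Ioo.mem_nhds hα) (fun x hx => hu' x hx)
      rw [hev.deriv_eq]
      have hd := hder α hα
      have h1 : HasDerivAt (fun t => h t ^ (2*m-1))
          (↑(2*m-1) * h α ^ (2*m-1-1) * (c₁*ω*((ω+1)*α^ω)+1)) α := hd.pow _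
      have h2 : HasDerivAt (fun t => ω^(2*m) - h t^(2*m))
          (-(↑(2*m) * h α ^ (2*m-1) * (c₁*ω*((ω+1)*α^ω)+1))) α := (hd.pow _).const_sub _
      have h3 := h2.rpow_const (p := -(2*(m:ℝ) - 1) / (2*(m:ℝ))) (Or.inl (hApos α hα).ne')
      exact (h1.mul h3).deriv
    have hk1 : ∀ α ∈ Ioo (0:ℝ) α₁₇,
        -(1 / (2 * (m : ℝ) - 1)) *
            (1 + deriv u α ^ ((2 * (m : ℝ)) / (2 * (m : ℝ) - 1)))
              ^ (-(2 * (m : ℝ) + 1) / (2 * (m : ℝ))) *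
            deriv u α ^ (-(2 * (m : ℝ) - 2) / (2 * (m : ℝ) - 1)) *
            deriv (deriv u) α = -(c₁*ω*((ω+1)*α^ω)+1) / ω := by
      intro α hα
      rw [hu' α hα, hDD α hα]
      exact alg_k1 m hm ω (h α) (ω^(2*m) - h α^(2*m)) (c₁*ω*((ω+1)*α^ω)+1) hω0
        (hHpos α hα) (hApos α hα) (by ring)
    have hk2 : ∀ α ∈ Ioo (0:ℝ) α₁₇,
        -(1 / α) * (1 + deriv u α ^ ((2 * (m : ℝ)) / (2 * (m : ℝ) - 1)))
              ^ (-(1 : ℝ) / (2 * (m : ℝ))) *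
            deriv u α ^ ((1 : ℝ) / (2 * (m : ℝ) - 1)) = -((c₁*ω*α^ω+1) / ω) := by
      intro α hα
      rw [hu' α hα, mul_assoc,
        alg_k2 m hm ω (h α) (ω^(2*m) - h α^(2*m)) hω0 (hHpos α hα) (hApos α hα) (by ring)]
      have hsplit : h α = α * (c₁*ω*α^ω+1) := by
        rw [hh, Real.rpow_add hα.1, Real.rpow_one]; ring
      rw [hsplit]
      have hα0 : α ≠ 0 := hα.1.ne'
      field_simp
    -- limits
    have tω1 : Tendsto (fun α : ℝ => α ^ ω) (nhdsWithin 0 (Ioi 0)) (nhds 0) := by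
      have hc : Tendsto (fun x : ℝ => x ^ ω) (nhdsWithin 0 (Ioi 0)) (nhds ((0:ℝ) ^ ω)) :=
        ((Real.continuousAt_rpow_const 0 ω (Or.inr hω0.le)).continuousWithinAt :)
      rwa [Real.zero_rpow hω0.ne'] at hc
    have tω2 : Tendsto (fun α : ℝ => α ^ (ω+1)) (nhdsWithin 0 (Ioi 0)) (nhds 0) := by
      have hc : Tendsto (fun x : ℝ => x ^ (ω+1)) (nhdsWithin 0 (Ioi 0)) (nhds ((0:ℝ) ^ (ω+1))) :=
        ((Real.continuousAt_rpow_const 0 (ω+1) (Or.inr hω1.le)).continuousWithinAt :)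
      rwa [Real.zero_rpow hω1.ne'] at hc
    have tid : Tendsto (fun α : ℝ => α) (nhdsWithin 0 (Ioi 0)) (nhds 0) :=
      tendsto_id.mono_left nhdsWithin_le_nhds
    have tH : Tendsto h (nhdsWithin 0 (Ioi 0)) (nhds 0) := by
      have hc : Tendsto (fun α : ℝ => c₁*ω*α^(ω+1) + α) (nhdsWithin 0 (Ioi 0))
          (nhds (c₁*ω*0 + 0)) := (tω2.const_mul (c₁*ω)).add tid
      have := hc.congr fun t => (hh t).symm
      simpa using this
    have tA : Tendsto (fun α => ω^(2*m) - h α^(2*m)) (nhdsWithin 0 (Ioi 0))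
        (nhds (ω^(2*m))) := by
      have hc : Tendsto (fun α : ℝ => ω^(2*m) - h α^(2*m)) (nhdsWithin 0 (Ioi 0))
          (nhds (ω^(2*m) - 0^(2*m))) := Tendsto.sub tendsto_const_nhds (tH.pow (2*m))
      simpa [zero_pow (by omega : 2*m ≠ 0)] using hc
    have hW : (0:ℝ) < ω ^ (2*m) := pow_pos hω0 _
    have tAp := tA.rpow_const (p := -(2*(m:ℝ) - 1) / (2*(m:ℝ))) (Or.inl hW.ne')
    have tAp' := tA.rpow_const (p := -(2*(m:ℝ) - 1) / (2*(m:ℝ)) - 1) (Or.inl hW.ne')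
    have te : Tendsto (fun α : ℝ => c₁*ω*((ω+1)*α^ω)+1) (nhdsWithin 0 (Ioi 0)) (nhds 1) := by
      have := ((tω1.const_mul (ω+1)).const_mul (c₁*ω)).add_const 1
      simpa using this
    refine ⟨?_, ⟨0, ?_⟩, ?_, ?_, ?_⟩
    · -- deriv u → 0
      have tg : Tendsto (fun α => h α ^ (2*m-1) *
          (ω^(2*m) - h α^(2*m)) ^ (-(2*(m:ℝ) - 1) / (2*(m:ℝ)))) (nhdsWithin 0 (Ioi 0))
          (nhds 0) := by
        have := (tH.pow (2*m-1)).mul tAp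
        simpa [zero_pow (by omega : 2*m-1 ≠ 0)] using this
      exact Filter.Tendsto.congr'
        (by filter_upwards [hIoo] with α hα; exact (hu' α hα).symm) tg
    · -- second derivative limit
      have t1 := (((tH.pow (2*m-1-1)).const_mul (((2*m-1:ℕ)):ℝ)).mul te).mul tAp
      have t2 := (tH.pow (2*m-1)).mul
        (((((tH.pow (2*m-1)).const_mul (((2*m:ℕ)):ℝ)).mul te).neg.mul_const
          (-(2*(m:ℝ) - 1) / (2*(m:ℝ)))).mul tAp')
      have tsum := t1.add t2
      refine Filter.Tendsto.congr'
        (by filter_upwards [hIoo] with α hα; exact (hDD α hα).symm) ?_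
      simpa [zero_pow (by omega : 2*m-1-1 ≠ 0), zero_pow (by omega : 2*m-1 ≠ 0)] using tsum
    · -- k₁ limit
      have tmodel : Tendsto (fun α : ℝ => -(c₁*ω*((ω+1)*α^ω)+1) / ω) (nhdsWithin 0 (Ioi 0))
          (nhds (-(1:ℝ)/ω)) := by
        have := te.neg.div_const ω
        simpa using this
      have hval : (1:ℝ)/(lam+1) = -(1:ℝ)/ω := by
        rw [hω, neg_div_neg_eq]
      rw [hval]
      exact Filter.Tendsto.congr'
        (by filter_upwards [hIoo] with α hα; exact (hk1 α hα).symm) tmodel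
    · -- k₂ limit
      have tmodel : Tendsto (fun α : ℝ => -((c₁*ω*α^ω+1) / ω)) (nhdsWithin 0 (Ioi 0))
          (nhds (-(1:ℝ)/ω)) := by
        rw [show -(1:ℝ)/ω = -((c₁*ω*(0:ℝ)+1)/ω) from by ring]
        exact (((tω1.const_mul (c₁*ω)).add_const 1).div_const ω).neg
      have hval : (1:ℝ)/(lam+1) = -(1:ℝ)/ω := by
        rw [hω, neg_div_neg_eq]
      rw [hval]
      exact Filter.Tendsto.congr'
        (by filter_upwards [hIoo] with α hα; exact (hk2 α hα).symm) tmodel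
    · -- Weingarten identity
      intro α hα
      rw [hk1 α hα, hk2 α hα]
      have hlam2 : lam = -ω - 1 := by rw [hω]; ring
      rw [hlam2]
      field_simp
      ring
end
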